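/- arXiv:2510.00801 — 11 statements merged into one kernel-verified Lean document; each statement's English description precedes it below -/
import Mathlib

section
/- Let A ∈ ℝ^{n×n} with symmetric part A_sym := (A+Aᵀ)/2 positive definite, let ε > 0, and let U : ℝ → ℝ^{n×r} (1 ≤ r ≤ n) be differentiable on [0,∞) and satisfy the Oja flow ε·(d/dt)U(t) = (I_n − U(t)U(t)ᵀ)·A·U(t) for all t ≥ 0. If U(0) has full column rank r, then U(t) has full column rank r for every t ≥ 0. -/
open Matrix Finset

section Aux

variable {r : ℕ}

lemma prod_updateRow_single (M : Matrix (Fin r) (Fin r) ℝ) (k i : Fin r) (σ : Equiv.Perm (Fin r)) :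
    (∏ l, (M.updateRow k (Pi.single i 1)) (σ l) l) =
      if σ i = k then ∏ l ∈ univ.erase i, M (σ l) l else 0 := by
  have hmem : (σ.symm k) ∈ (univ : Finset (Fin r)) := mem_univ _
  rw [← Finset.mul_prod_erase _ _ hmem]
  have h1 : (M.updateRow k (Pi.single i 1)) (σ (σ.symm k)) (σ.symm k)
      = if σ i = k then 1 else 0 := by
    rw [Equiv.apply_symm_apply, Matrix.updateRow_self]
    by_cases h : σ i = k
    · have hik : σ.symm k = i := by rw [← h, Equiv.symm_apply_apply]
      simp [hik, h, Pi.single_apply]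
    · have hik : σ.symm k ≠ i := fun hc => h (by rw [← hc, Equiv.apply_symm_apply])
      simp [Pi.single_apply, h, hik]
  rw [h1]
  by_cases h : σ i = k
  · have hik : σ.symm k = i := by rw [← h, Equiv.symm_apply_apply]
    simp only [if_pos h, one_mul, hik]
    refine Finset.prod_congr rfl fun l hl => ?_
    have hlk : σ l ≠ k := by
      intro hc
      exact (Finset.mem_erase.mp hl).1 (by rw [← hik, ← hc, Equiv.symm_apply_apply])
    rw [Matrix.updateRow_ne hlk]
  · simp only [if_neg h, zero_mul]

lemma trace_adjugate_mul_eq (M M' : Matrix (Fin r) (Fin r) ℝ) :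
    (M.adjugate * M').trace =
      ∑ σ : Equiv.Perm (Fin r), ((Equiv.Perm.sign σ : ℤ) : ℝ) *
        ∑ i, (∏ j ∈ univ.erase i, M (σ j) j) * M' (σ i) i := by
  have hadj : ∀ i k, M.adjugate i k = ∑ σ : Equiv.Perm (Fin r),
      ((Equiv.Perm.sign σ : ℤ) : ℝ) *
        if σ i = k then ∏ l ∈ univ.erase i, M (σ l) l else 0 := by
    intro i k
    rw [Matrix.adjugate_apply, Matrix.det_apply']
    exact Finset.sum_congr rfl fun σ _ => by rw [prod_updateRow_single]
  simp only [Matrix.trace, Matrix.diag_apply, Matrix.mul_apply, hadj, Finset.sum_mul]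
  have hswap : ∀ x : Fin r, ∑ x_1 : Fin r, ∑ σ : Equiv.Perm (Fin r),
      (((Equiv.Perm.sign σ : ℤ) : ℝ) * if σ x = x_1 then ∏ l ∈ univ.erase x, M (σ l) l else 0) * M' x_1 x
      = ∑ σ : Equiv.Perm (Fin r), ∑ x_1 : Fin r,
      (((Equiv.Perm.sign σ : ℤ) : ℝ) * if σ x = x_1 then ∏ l ∈ univ.erase x, M (σ l) l else 0) * M' x_1 x :=
    fun x => Finset.sum_comm
  simp only [hswap]
  rw [Finset.sum_comm]
  refine Finset.sum_congr rfl fun σ _ => ?_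
  rw [Finset.mul_sum]
  refine Finset.sum_congr rfl fun i _ => ?_
  simp [mul_ite, ite_mul, Finset.sum_ite_eq, mul_assoc]

lemma hasDerivWithinAt_det {F : ℝ → Matrix (Fin r) (Fin r) ℝ} {F' : Matrix (Fin r) (Fin r) ℝ}
    {s : Set ℝ} {x : ℝ}
    (h : ∀ i j, HasDerivWithinAt (fun t => F t i j) (F' i j) s x) :
    HasDerivWithinAt (fun t => (F t).det) (((F x).adjugate * F').trace) s x := by
  have hrw : (fun t => (F t).det) = fun t => ∑ σ : Equiv.Perm (Fin r),
      ((Equiv.Perm.sign σ : ℤ) : ℝ) * ∏ i, F t (σ i) i := by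
    funext t; rw [Matrix.det_apply']
  rw [hrw, trace_adjugate_mul_eq]
  refine HasDerivWithinAt.fun_sum fun σ _ => ?_
  have hp : HasDerivWithinAt (fun t => ∏ i, F t (σ i) i)
      (∑ i, (∏ j ∈ univ.erase i, F x (σ j) j) • F' (σ i) i) s x :=
    HasDerivWithinAt.fun_finsetProd fun i _ => h (σ i) i
  simpa [smul_eq_mul] using hp.const_mul (((Equiv.Perm.sign σ : ℤ) : ℝ))

end Aux

section Psd

variable {m : Type*} [Fintype m] [DecidableEq m]

lemma posSemidef_diag_nonneg {M : Matrix m m ℝ} (h : M.PosSemidef) (i : m) :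
    0 ≤ M i i := by
  have := h.dotProduct_mulVec_nonneg (Pi.single i 1)
  simpa [dotProduct, Matrix.mulVec, Pi.single_apply, Finset.sum_ite_eq] using this

lemma posSemidef_trace_nonneg {M : Matrix m m ℝ} (h : M.PosSemidef) :
    0 ≤ M.trace :=
  Finset.sum_nonneg fun i _ => posSemidef_diag_nonneg h i

lemma trace_mul_psd_nonneg {P Q : Matrix m m ℝ} (hP : P.PosSemidef)
    (hQ : Q.PosSemidef) : 0 ≤ (P * Q).trace := by
  obtain ⟨B, rfl⟩ : ∃ B : Matrix m m ℝ, P = Bᴴ * B := by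
    open scoped MatrixOrder in exact CStarAlgebra.nonneg_iff_eq_star_mul_self.mp hP.nonneg
  have h1 : (Bᴴ * B * Q).trace = (B * Q * Bᴴ).trace := by
    rw [Matrix.trace_mul_comm, ← Matrix.mul_assoc, Matrix.trace_mul_comm, ← Matrix.mul_assoc]
  rw [h1]
  exact posSemidef_trace_nonneg (by simpa using hQ.mul_mul_conjTranspose_same B)

lemma posDef_smul {M : Matrix m m ℝ} (h : M.PosDef) {c : ℝ} (hc : 0 < c) :
    (c • M).PosDef := by
  refine Matrix.PosDef.of_dotProduct_mulVec_pos ?_ fun x hx => ?_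
  · unfold Matrix.IsHermitian
    rw [Matrix.conjTranspose_smul, h.isHermitian]
    norm_num
  · rw [Matrix.smul_mulVec, dotProduct_smul, smul_eq_mul]
    exact mul_pos hc (h.dotProduct_mulVec_pos hx)

lemma posDef_adjugate {M : Matrix m m ℝ} (h : M.PosDef) : M.adjugate.PosDef := by
  have hdet : 0 < M.det := h.det_pos
  have hadj : M.adjugate = M.det • M⁻¹ := by
    rw [Matrix.inv_def, smul_smul, Ring.inverse_eq_inv', mul_inv_cancel₀ hdet.ne', one_smul]
  rw [hadj]
  exact posDef_smul h.inv hdet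

lemma posSemidef_adjugate {M : Matrix m m ℝ} (h : M.PosSemidef) :
    M.adjugate.PosSemidef := by
  refine Matrix.PosSemidef.of_dotProduct_mulVec_nonneg ?_ fun x => ?_
  · unfold Matrix.IsHermitian
    rw [Matrix.adjugate_conjTranspose, h.isHermitian]
  · have hcont : Continuous (fun δ : ℝ => star x ⬝ᵥ ((M + δ • 1).adjugate *ᵥ x)) := by
      have h1 : Continuous (fun δ : ℝ => M + δ • (1 : Matrix m m ℝ)) :=
        continuous_const.add (continuous_id.smul continuous_const)
      exact (continuous_const.dotProduct (h1.matrix_adjugate.matrix_mulVec continuous_const))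
    have hpos : ∀ δ ∈ Set.Ioi (0:ℝ), 0 ≤ star x ⬝ᵥ ((M + δ • 1).adjugate *ᵥ x) := by
      intro δ hδ
      have hPD : (M + δ • 1).PosDef :=
        Matrix.PosDef.posSemidef_add h (posDef_smul Matrix.PosDef.one hδ)
      exact (posDef_adjugate hPD).posSemidef.dotProduct_mulVec_nonneg x
    have htend : Filter.Tendsto (fun δ : ℝ => star x ⬝ᵥ ((M + δ • 1).adjugate *ᵥ x))
        (nhdsWithin 0 (Set.Ioi 0)) (nhds (star x ⬝ᵥ (M.adjugate *ᵥ x))) := by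
      have := hcont.tendsto 0
      simpa using this.mono_left nhdsWithin_le_nhds
    exact ge_of_tendsto htend (Filter.eventually_of_mem self_mem_nhdsWithin hpos)

lemma posSemidef_det_nonneg {M : Matrix m m ℝ} (h : M.PosSemidef) : 0 ≤ M.det := by
  rw [h.isHermitian.det_eq_prod_eigenvalues]
  exact Finset.prod_nonneg fun i _ => h.eigenvalues_nonneg i

end Psd


set_option maxHeartbeats 1000000 in
/-- If the symmetric part of `A` is positive definite, `ε > 0`, and
`U : ℝ → ℝ^{n×r}` is differentiable on `[0,∞)` and satisfies the Oja flow
`ε·U'(t) = (Iₙ − U(t)U(t)ᵀ)·A·U(t)` there, then full column rank of `U(0)` is preserved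
for all `t ≥ 0`. -/
theorem oja_flow_rank_preserved
    (n r : ℕ) (hr : 1 ≤ r) (hrn : r ≤ n)
    (A : Matrix (Fin n) (Fin n) ℝ)
    (hA : (((2:ℝ)⁻¹) • (A + Aᵀ)).PosDef)
    (ε : ℝ) (hε : 0 < ε)
    (U U' : ℝ → Matrix (Fin n) (Fin r) ℝ)
    (hderiv : ∀ t ∈ Set.Ici (0:ℝ), ∀ i j,
      HasDerivWithinAt (fun s => U s i j) (U' t i j) (Set.Ici (0:ℝ)) t)
    (hode : ∀ t ∈ Set.Ici (0:ℝ),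
      ε • U' t = (1 - U t * (U t)ᵀ) * A * U t)
    (hrank0 : (U 0).rank = r) :
    ∀ t ∈ Set.Ici (0:ℝ), (U t).rank = r := by
  intro t₀ ht₀
  have ht₀' : (0:ℝ) ≤ t₀ := ht₀
  -- the symmetric part
  set S : Matrix (Fin n) (Fin n) ℝ := A + Aᵀ with hS
  have hSpsd : S.PosSemidef := by
    have h2 : S = (2:ℝ) • (((2:ℝ)⁻¹) • S) := by rw [smul_smul]; norm_num
    rw [h2]
    exact (posDef_smul hA (by norm_num)).posSemidef
  -- Gram matrix and its determinant
  set G : ℝ → Matrix (Fin r) (Fin r) ℝ := fun t => (U t)ᵀ * U t with hG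
  have hGpsd : ∀ t, (G t).PosSemidef := fun t => by
    simpa using Matrix.posSemidef_conjTranspose_mul_self (U t)
  set D : ℝ → Matrix (Fin r) (Fin r) ℝ := fun t => (U' t)ᵀ * U t + (U t)ᵀ * U' t with hD
  -- entrywise derivative of G
  have hGderiv : ∀ t ∈ Set.Ici (0:ℝ), ∀ i j,
      HasDerivWithinAt (fun s => G s i j) (D t i j) (Set.Ici (0:ℝ)) t := by
    intro t ht i j
    have hfun : (fun s => G s i j) = fun s => ∑ k, U s k i * U s k j := by
      funext s; simp [hG, Matrix.mul_apply, Matrix.transpose_apply]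
    have hval : D t i j = ∑ k, (U' t k i * U t k j + U t k i * U' t k j) := by
      simp [hD, Matrix.add_apply, Matrix.mul_apply, Matrix.transpose_apply,
        Finset.sum_add_distrib]
    rw [hfun, hval]
    exact HasDerivWithinAt.fun_sum fun k _ => (hderiv t ht k i).mul (hderiv t ht k j)
  -- derivative of det G
  have hfderiv : ∀ t ∈ Set.Ici (0:ℝ),
      HasDerivWithinAt (fun s => (G s).det) (((G t).adjugate * D t).trace)
        (Set.Ici (0:ℝ)) t :=
    fun t ht => hasDerivWithinAt_det (fun i j => hGderiv t ht i j)
  -- the scalar c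
  set c : ℝ → ℝ := fun t => ((U t)ᵀ * S * U t).trace with hc
  -- key identity
  have hkey : ∀ t ∈ Set.Ici (0:ℝ),
      ε * ((G t).adjugate * D t).trace =
        ((G t).adjugate * ((U t)ᵀ * S * U t)).trace - (G t).det * c t := by
    intro t ht
    have h1 : ε • U' t = (1 - U t * (U t)ᵀ) * A * U t := hode t ht
    have h1T : (ε • U' t)ᵀ = (U t)ᵀ * Aᵀ * (1 - U t * (U t)ᵀ) := by
      rw [h1]
      simp [Matrix.transpose_mul, Matrix.transpose_sub, Matrix.transpose_one,
        Matrix.transpose_transpose, Matrix.mul_assoc, Matrix.mul_sub, Matrix.sub_mul,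
        Matrix.mul_one, Matrix.one_mul]
    have hεD : ε • D t = (U t)ᵀ * S * U t
        - ((U t)ᵀ * Aᵀ * U t) * G t - G t * ((U t)ᵀ * A * U t) := by
      have h2 : ε • D t = (ε • U' t)ᵀ * U t + (U t)ᵀ * (ε • U' t) := by
        simp [hD, smul_add, Matrix.transpose_smul, Matrix.smul_mul, Matrix.mul_smul]
      rw [h2, h1T, h1, hS]
      simp only [hG, Matrix.sub_mul, Matrix.mul_sub, Matrix.add_mul, Matrix.mul_add,
        Matrix.one_mul, Matrix.mul_one, Matrix.mul_assoc]
      abel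
    have htr : ε * ((G t).adjugate * D t).trace = ((G t).adjugate * (ε • D t)).trace := by
      rw [Matrix.mul_smul, Matrix.trace_smul, smul_eq_mul]
    rw [htr, hεD]
    have e1 : (G t).adjugate * ((U t)ᵀ * S * U t
        - ((U t)ᵀ * Aᵀ * U t) * G t - G t * ((U t)ᵀ * A * U t))
        = (G t).adjugate * ((U t)ᵀ * S * U t)
          - (G t).adjugate * (((U t)ᵀ * Aᵀ * U t) * G t)
          - (G t).adjugate * (G t * ((U t)ᵀ * A * U t)) := by
      rw [Matrix.mul_sub, Matrix.mul_sub]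
    rw [e1, Matrix.trace_sub, Matrix.trace_sub]
    have e2 : ((G t).adjugate * (((U t)ᵀ * Aᵀ * U t) * G t)).trace
        = (G t).det * ((U t)ᵀ * Aᵀ * U t).trace := by
      rw [Matrix.trace_mul_comm, Matrix.mul_assoc, Matrix.mul_adjugate, Matrix.mul_smul,
        Matrix.mul_one, Matrix.trace_smul, smul_eq_mul]
    have e3 : ((G t).adjugate * (G t * ((U t)ᵀ * A * U t))).trace
        = (G t).det * ((U t)ᵀ * A * U t).trace := by
      rw [← Matrix.mul_assoc, Matrix.adjugate_mul, Matrix.smul_mul, Matrix.one_mul,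
        Matrix.trace_smul, smul_eq_mul]
    rw [e2, e3]
    have e4 : c t = ((U t)ᵀ * Aᵀ * U t).trace + ((U t)ᵀ * A * U t).trace := by
      simp only [hc, hS]
      have : (U t)ᵀ * (A + Aᵀ) * U t = (U t)ᵀ * Aᵀ * U t + (U t)ᵀ * A * U t := by
        rw [Matrix.mul_add, Matrix.add_mul, add_comm]
      rw [this, Matrix.trace_add]
    rw [e4]; ring
  -- nonnegativity of the "good" trace term
  have hT : ∀ t, 0 ≤ ((G t).adjugate * ((U t)ᵀ * S * U t)).trace := by
    intro t
    refine trace_mul_psd_nonneg (posSemidef_adjugate (hGpsd t)) ?_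
    simpa using hSpsd.conjTranspose_mul_mul_same (U t)
  have hfnonneg : ∀ t, 0 ≤ (G t).det := fun t => posSemidef_det_nonneg (hGpsd t)
  -- continuity of U entries, c, det G on [0, ∞)
  have hUcont : ∀ i j, ContinuousOn (fun t => U t i j) (Set.Ici 0) :=
    fun i j t ht => (hderiv t ht i j).continuousWithinAt
  have hccont : ContinuousOn c (Set.Ici 0) := by
    have hc_eq : c = fun t => ∑ i, ∑ l, (∑ k, U t k i * S k l) * U t l i := by
      funext t
      simp [hc, Matrix.trace, Matrix.diag_apply, Matrix.mul_apply]
    rw [hc_eq]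
    refine continuousOn_finset_sum _ fun i _ => ?_
    refine continuousOn_finset_sum _ fun l _ => ?_
    refine ContinuousOn.mul ?_ (hUcont l i)
    exact continuousOn_finset_sum _ fun k _ => (hUcont k i).mul continuousOn_const
  have hdetcont : ContinuousOn (fun t => (G t).det) (Set.Ici 0) :=
    fun t ht => (hfderiv t ht).continuousWithinAt
  -- bound on c over [0, t₀]
  have hIccsub : Set.Icc (0:ℝ) t₀ ⊆ Set.Ici 0 := fun x hx => hx.1
  obtain ⟨Mc, hMc⟩ : ∃ Mc, ∀ t ∈ Set.Icc (0:ℝ) t₀, c t ≤ Mc := by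
    obtain ⟨x, -, hx⟩ := isCompact_Icc.exists_isMaxOn ⟨0, Set.left_mem_Icc.mpr ht₀'⟩
      (hccont.mono hIccsub)
    exact ⟨c x, fun t htt => hx htt⟩
  -- the auxiliary monotone function
  set φ : ℝ → ℝ := fun t => (G t).det * Real.exp ((Mc / ε) * t) with hφ
  have hφmono : MonotoneOn φ (Set.Icc 0 t₀) := by
    have hint : interior (Set.Icc (0:ℝ) t₀) = Set.Ioo 0 t₀ := interior_Icc
    refine monotoneOn_of_hasDerivWithinAt_nonneg (convex_Icc 0 t₀)
      ((hdetcont.mono hIccsub).mul (Real.continuous_exp.comp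
        (continuous_const.mul continuous_id)).continuousOn)
      (f' := fun t => ((G t).adjugate * D t).trace * Real.exp ((Mc / ε) * t)
        + (G t).det * (Real.exp ((Mc / ε) * t) * (Mc / ε))) (fun t ht => ?_) (fun t ht => ?_)
    · rw [hint] at ht
      have htI : t ∈ Set.Ici (0:ℝ) := le_of_lt ht.1
      have hsub : interior (Set.Icc (0:ℝ) t₀) ⊆ Set.Ici 0 := by
        rw [hint]; exact fun x hx => le_of_lt hx.1
      have hexp : HasDerivWithinAt (fun s => Real.exp ((Mc / ε) * s))
          (Real.exp ((Mc / ε) * t) * (Mc / ε)) (interior (Set.Icc (0:ℝ) t₀)) t := by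
        have h2 : HasDerivAt (fun s : ℝ => Real.exp ((Mc / ε) * s))
            (Real.exp ((Mc / ε) * t) * (Mc / ε)) t := by
          simpa using ((hasDerivAt_id t).const_mul (Mc / ε)).exp
        exact h2.hasDerivWithinAt
      exact ((hfderiv t htI).mono hsub).mul hexp
    · rw [hint] at ht
      have htI : t ∈ Set.Ici (0:ℝ) := le_of_lt ht.1
      have hkey' := hkey t htI
      have hTt := hT t
      have hft := hfnonneg t
      have hct : c t ≤ Mc := hMc t ⟨le_of_lt ht.1, le_of_lt ht.2⟩
      have hE : 0 < Real.exp ((Mc / ε) * t) := Real.exp_pos _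
      have hmain : 0 ≤ ((G t).adjugate * D t).trace + (G t).det * (Mc / ε) := by
        have h5 : ((G t).adjugate * D t).trace =
            (((G t).adjugate * ((U t)ᵀ * S * U t)).trace - (G t).det * c t) / ε := by
          field_simp
          linarith [hkey']
        rw [h5]
        have h6 : (((G t).adjugate * ((U t)ᵀ * S * U t)).trace - (G t).det * c t) / ε
            + (G t).det * (Mc / ε)
            = (((G t).adjugate * ((U t)ᵀ * S * U t)).trace + (G t).det * (Mc - c t)) / ε := by
          field_simp; ring
        rw [h6]
        refine div_nonneg ?_ hε.le
        have : 0 ≤ (G t).det * (Mc - c t) := mul_nonneg hft (by linarith)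
        linarith
      nlinarith [mul_nonneg hmain hE.le]
  -- positivity at time 0
  have hPD0 : (G 0).PosDef := by
    refine Matrix.PosDef.of_dotProduct_mulVec_pos (hGpsd 0).isHermitian fun x hx => ?_
    have hker : U 0 *ᵥ x ≠ 0 := by
      intro hUx
      have hrankdef : (U 0).rank = Module.finrank ℝ (LinearMap.range (U 0).mulVecLin) := rfl
      have hrn' : Module.finrank ℝ (LinearMap.range (U 0).mulVecLin)
          + Module.finrank ℝ (LinearMap.ker (U 0).mulVecLin) = r := by
        simpa using LinearMap.finrank_range_add_finrank_ker (U 0).mulVecLin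
      have hrange : Module.finrank ℝ (LinearMap.range (U 0).mulVecLin) = r := by
        rw [← hrankdef]; exact hrank0
      have hker0 : Module.finrank ℝ (LinearMap.ker (U 0).mulVecLin) = 0 := by
        omega
      have : LinearMap.ker (U 0).mulVecLin = ⊥ := Submodule.finrank_eq_zero.mp hker0
      have hxker : x ∈ LinearMap.ker (U 0).mulVecLin := by
        simpa [Matrix.mulVecLin_apply] using hUx
      rw [this] at hxker
      exact hx (by simpa using hxker)
    have hgram : star x ⬝ᵥ (G 0 *ᵥ x) = (U 0 *ᵥ x) ⬝ᵥ (U 0 *ᵥ x) := by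
      simp only [hG]
      rw [← Matrix.mulVec_mulVec, Matrix.dotProduct_mulVec, Matrix.vecMul_transpose]
      simp
    rw [hgram]
    have := Matrix.dotProduct_self_star_pos_iff (v := U 0 *ᵥ x) |>.mpr hker
    simpa using this
  have hf0 : 0 < (G 0).det := hPD0.det_pos
  -- conclude
  have hmono := hφmono (Set.left_mem_Icc.mpr ht₀') (Set.right_mem_Icc.mpr ht₀') ht₀'
  have hφ0 : φ 0 = (G 0).det := by simp [hφ]
  have hft₀ : 0 < (G t₀).det := by
    by_contra hcon
    push_neg at hcon
    have : φ t₀ ≤ 0 := mul_nonpos_of_nonpos_of_nonneg hcon (Real.exp_pos _).le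
    rw [hφ0] at hmono
    linarith
  have hGrank : (G t₀).rank = r := by
    have hu : IsUnit (G t₀) := (Matrix.isUnit_iff_isUnit_det _).mpr
      (isUnit_iff_ne_zero.mpr hft₀.ne')
    simpa using Matrix.rank_of_isUnit _ hu
  rw [← Matrix.rank_transpose_mul_self (U t₀)]
  exact hGrank
end

section
/- Let A ∈ ℝ^{n×n} with A_sym := (A+Aᵀ)/2 positive definite, ε > 0, and let P₀ ∈ ℝ^{n×n} be symmetric positive semidefinite. Then: (i) for every t ≥ 0 the matrix I_n + (exp((t/ε)Aᵀ)·exp((t/ε)A) − I_n)·P₀ is invertible; and (ii) the function P(t) := exp((t/ε)A)·P₀·(I_n + (exp((t/ε)Aᵀ)·exp((t/ε)A) − I_n)·P₀)⁻¹·exp((t/ε)Aᵀ) satisfies P(0) = P₀ and the Riccati differential equation ε·(d/dt)P(t) = A·P(t) + P(t)·Aᵀ − P(t)·(A+Aᵀ)·P(t) for all t ≥ 0. -/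
open Matrix NormedSpace

namespace OjaRiccatiAux

section

variable {n : ℕ}

attribute [local instance] Matrix.linftyOpNormedAddCommGroup Matrix.linftyOpNormedRing
  Matrix.linftyOpNormedAlgebra

/-- The continuous linear map extracting the `(i,j)` entry of a matrix. -/
noncomputable def entryCLM (i j : Fin n) : Matrix (Fin n) (Fin n) ℝ →L[ℝ] ℝ :=
  LinearMap.mkContinuous
    { toFun := fun M => M i j
      map_add' := fun _ _ => rfl
      map_smul' := fun _ _ => rfl } 1
    (fun M => by
      rw [one_mul, ← coe_nnnorm, ← coe_nnnorm, NNReal.coe_le_coe]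
      calc ‖M i j‖₊ ≤ ∑ j', ‖M i j'‖₊ :=
            Finset.single_le_sum (f := fun j' => ‖M i j'‖₊) (fun _ _ => zero_le)
              (Finset.mem_univ j)
        _ ≤ ‖M‖₊ := by
            rw [Matrix.linfty_opNNNorm_def]
            exact Finset.le_sup (f := fun i => ∑ j', ‖M i j'‖₊) (Finset.mem_univ i))

theorem hasDerivAt_entry {f : ℝ → Matrix (Fin n) (Fin n) ℝ} {f' : Matrix (Fin n) (Fin n) ℝ}
    {t : ℝ} (hf : HasDerivAt f f' t) (i j : Fin n) :
    HasDerivAt (fun s => f s i j) (f' i j) t :=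
  (entryCLM i j).hasFDerivAt.comp_hasDerivAt t hf

/-- The continuous linear map `M ↦ y ⬝ᵥ M *ᵥ y`. -/
noncomputable def quadCLM (y : Fin n → ℝ) : Matrix (Fin n) (Fin n) ℝ →L[ℝ] ℝ :=
  ∑ i, ∑ j, (y i * y j) • entryCLM i j

theorem quadCLM_apply (y : Fin n → ℝ) (M : Matrix (Fin n) (Fin n) ℝ) :
    quadCLM y M = y ⬝ᵥ M *ᵥ y := by
  simp only [quadCLM, ContinuousLinearMap.coe_sum', Finset.sum_apply,
    ContinuousLinearMap.coe_smul', ContinuousLinearMap.smul_apply, Pi.smul_apply, entryCLM, LinearMap.mkContinuous_apply,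
    LinearMap.coe_mk, AddHom.coe_mk, smul_eq_mul, dotProduct, Matrix.mulVec, Finset.mul_sum]
  exact Finset.sum_congr rfl fun i _ => Finset.sum_congr rfl fun j _ => by
    show (y i * y j) * M i j = _; ring

/-- Positivity of the quadratic form of `exp((t/ε)Aᵀ)exp((t/ε)A) - 1` for `t ≥ 0`. -/
theorem psd_key (A : Matrix (Fin n) (Fin n) ℝ)
    (hA : (((2:ℝ)⁻¹) • (A + Aᵀ)).PosDef) (ε : ℝ) (hε : 0 < ε) {t : ℝ} (ht : 0 ≤ t)
    (y : Fin n → ℝ) :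
    0 ≤ y ⬝ᵥ (exp ((t / ε) • Aᵀ) * exp ((t / ε) • A) - 1) *ᵥ y := by
  have hsm : ∀ s : ℝ, (s / ε) • A = s • (ε⁻¹ • A) := fun s => by
    rw [div_eq_mul_inv, mul_smul]
  have hsmT : ∀ s : ℝ, (s / ε) • Aᵀ = s • (ε⁻¹ • Aᵀ) := fun s => by
    rw [div_eq_mul_inv, mul_smul]
  rw [hsm, hsmT]
  set A₁ := ε⁻¹ • A with hA₁
  set A₂ := ε⁻¹ • Aᵀ with hA₂
  set g : ℝ → ℝ := fun s => quadCLM y (exp (s • A₂) * exp (s • A₁)) with hg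
  have hB : ∀ s : ℝ, HasDerivAt (fun u : ℝ => exp (u • A₂) * exp (u • A₁))
      (exp (s • A₂) * A₂ * exp (s • A₁) + exp (s • A₂) * (A₁ * exp (s • A₁))) s :=
    fun s => (hasDerivAt_exp_smul_const A₂ s).mul (hasDerivAt_exp_smul_const' A₁ s)
  have hgd : ∀ s : ℝ, HasDerivAt g
      (quadCLM y (exp (s • A₂) * A₂ * exp (s • A₁) + exp (s • A₂) * (A₁ * exp (s • A₁)))) s :=
    fun s => (quadCLM y).hasFDerivAt.comp_hasDerivAt s (hB s)
  -- the derivative is nonnegative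
  have hnonneg : ∀ s : ℝ,
      0 ≤ quadCLM y (exp (s • A₂) * A₂ * exp (s • A₁) + exp (s • A₂) * (A₁ * exp (s • A₁))) := by
    intro s
    have hTF : exp (s • A₂) = (exp (s • A₁))ᵀ := by
      rw [show s • A₂ = (s • A₁)ᵀ by rw [hA₁, hA₂, transpose_smul, transpose_smul]]
      exact Matrix.exp_transpose _
    set F := exp (s • A₁) with hF
    have hcomm : A * F = F * A :=
      ((((Commute.refl A).smul_right ε⁻¹).smul_right s).exp_right).eq
    set w := F *ᵥ y with hw
    have hid : exp (s • A₂) * A₂ * exp (s • A₁) + exp (s • A₂) * (A₁ * exp (s • A₁))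
        = ε⁻¹ • (Fᵀ * (A + Aᵀ) * F) := by
      rw [hTF, hA₁, hA₂]
      have h1 : Fᵀ * (ε⁻¹ • Aᵀ) * F = ε⁻¹ • (Fᵀ * Aᵀ * F) := by
        rw [mul_smul_comm, smul_mul_assoc]
      have h2 : Fᵀ * (ε⁻¹ • A * F) = ε⁻¹ • (Fᵀ * (A * F)) := by
        rw [smul_mul_assoc, mul_smul_comm]
      rw [h1, h2, ← smul_add]
      congr 1
      noncomm_ring
    rw [hid, _root_.map_smul, quadCLM_apply, smul_eq_mul]
    apply mul_nonneg (by positivity)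
    have hq : y ⬝ᵥ (Fᵀ * (A + Aᵀ) * F) *ᵥ y = w ⬝ᵥ (A + Aᵀ) *ᵥ w := by
      rw [← Matrix.mulVec_mulVec, ← Matrix.mulVec_mulVec, Matrix.dotProduct_mulVec,
        Matrix.vecMul_transpose, hw]
    rw [hq]
    have := hA.posSemidef.dotProduct_mulVec_nonneg w
    simp only [star_trivial, Matrix.smul_mulVec, dotProduct_smul, smul_eq_mul] at this
    linarith
  have hmono : Monotone g :=
    monotone_of_deriv_nonneg (fun s => (hgd s).differentiableAt)
      (fun s => by rw [(hgd s).deriv]; exact hnonneg s)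
  have hg0 : g 0 = y ⬝ᵥ y := by
    rw [hg]
    simp only [zero_smul, exp_zero, one_mul, quadCLM_apply, Matrix.one_mulVec]
  have hle : y ⬝ᵥ y ≤ y ⬝ᵥ (exp (t • A₂) * exp (t • A₁)) *ᵥ y := by
    have := hmono ht
    rw [hg0] at this
    simpa only [hg, quadCLM_apply] using this
  rw [Matrix.sub_mulVec, dotProduct_sub, Matrix.one_mulVec]
  linarith

/-- If the quadratic form of `M` is nonnegative and `P₀` is PSD then `1 + M P₀` is invertible. -/
theorem isUnit_aux (M P₀ : Matrix (Fin n) (Fin n) ℝ)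
    (hM : ∀ y, 0 ≤ y ⬝ᵥ M *ᵥ y) (hP₀ : P₀.PosSemidef) :
    IsUnit (1 + M * P₀) := by
  rw [Matrix.isUnit_iff_isUnit_det, isUnit_iff_ne_zero]
  intro hdet
  obtain ⟨x, hx, hxv⟩ := Matrix.exists_mulVec_eq_zero_iff.mpr hdet
  rw [Matrix.add_mulVec, Matrix.one_mulVec, ← Matrix.mulVec_mulVec] at hxv
  have h1 : M *ᵥ (P₀ *ᵥ x) = -x := eq_neg_of_add_eq_zero_right hxv
  have h2 := hM (P₀ *ᵥ x)
  rw [h1, dotProduct_neg] at h2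
  have h3 : (P₀ *ᵥ x) ⬝ᵥ x = x ⬝ᵥ (P₀ *ᵥ x) := dotProduct_comm _ _
  have h4 : (0:ℝ) ≤ x ⬝ᵥ P₀ *ᵥ x := by simpa using hP₀.dotProduct_mulVec_nonneg x
  have h5 : x ⬝ᵥ P₀ *ᵥ x = 0 := by linarith
  have h6 : P₀ *ᵥ x = 0 := (hP₀.dotProduct_mulVec_zero_iff x).mp (by simpa using h5)
  rw [h6, Matrix.mulVec_zero] at h1
  exact hx (by simpa using h1.symm)

/-- Differentiability of the explicit solution, with the Riccati form of the derivative. -/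
theorem hasDerivAt_P (A : Matrix (Fin n) (Fin n) ℝ)
    (ε : ℝ) (hε : 0 < ε) (P₀ : Matrix (Fin n) (Fin n) ℝ) (t : ℝ)
    (hu : IsUnit ((1 : Matrix (Fin n) (Fin n) ℝ) +
        (exp ((t / ε) • Aᵀ) * exp ((t / ε) • A) - 1) * P₀)) (i j : Fin n) :
    HasDerivAt (fun s => (exp ((s / ε) • A) * P₀ *
        ((1 : Matrix (Fin n) (Fin n) ℝ) +
          (exp ((s / ε) • Aᵀ) * exp ((s / ε) • A) - 1) * P₀)⁻¹ *
        exp ((s / ε) • Aᵀ)) i j)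
      ((ε⁻¹ • (A * (exp ((t / ε) • A) * P₀ *
        ((1 : Matrix (Fin n) (Fin n) ℝ) +
          (exp ((t / ε) • Aᵀ) * exp ((t / ε) • A) - 1) * P₀)⁻¹ *
        exp ((t / ε) • Aᵀ)) +
        (exp ((t / ε) • A) * P₀ *
        ((1 : Matrix (Fin n) (Fin n) ℝ) +
          (exp ((t / ε) • Aᵀ) * exp ((t / ε) • A) - 1) * P₀)⁻¹ *
        exp ((t / ε) • Aᵀ)) * Aᵀ -
        (exp ((t / ε) • A) * P₀ *
        ((1 : Matrix (Fin n) (Fin n) ℝ) +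
          (exp ((t / ε) • Aᵀ) * exp ((t / ε) • A) - 1) * P₀)⁻¹ *
        exp ((t / ε) • Aᵀ)) * (A + Aᵀ) *
        (exp ((t / ε) • A) * P₀ *
        ((1 : Matrix (Fin n) (Fin n) ℝ) +
          (exp ((t / ε) • Aᵀ) * exp ((t / ε) • A) - 1) * P₀)⁻¹ *
        exp ((t / ε) • Aᵀ)))) i j) t := by
  have hsm : ∀ s : ℝ, (s / ε) • A = s • (ε⁻¹ • A) := fun s => by
    rw [div_eq_mul_inv, mul_smul]
  have hsmT : ∀ s : ℝ, (s / ε) • Aᵀ = s • (ε⁻¹ • Aᵀ) := fun s => by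
    rw [div_eq_mul_inv, mul_smul]
  simp only [hsm, hsmT, Matrix.nonsing_inv_eq_ringInverse] at hu ⊢
  set A₁ := ε⁻¹ • A with hA₁
  set A₂ := ε⁻¹ • Aᵀ with hA₂
  set G := Ring.inverse ((1 : Matrix (Fin n) (Fin n) ℝ) +
      (exp (t • A₂) * exp (t • A₁) - 1) * P₀) with hGdef
  -- derivative of Q
  have hQ : HasDerivAt (fun s => (1 : Matrix (Fin n) (Fin n) ℝ) +
      (exp (s • A₂) * exp (s • A₁) - 1) * P₀)
      ((exp (t • A₂) * A₂ * exp (t • A₁) + exp (t • A₂) * (A₁ * exp (t • A₁))) * P₀) t :=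
    ((((hasDerivAt_exp_smul_const A₂ t).mul (hasDerivAt_exp_smul_const' A₁ t)).sub_const
      1).mul_const P₀).const_add 1
  -- derivative of the inverse
  have hGinv : (↑hu.unit⁻¹ : Matrix (Fin n) (Fin n) ℝ) = G := by
    have h := Ring.inverse_unit hu.unit
    rw [hu.unit_spec] at h
    exact h.symm
  have hGd : HasDerivAt (fun s => Ring.inverse ((1 : Matrix (Fin n) (Fin n) ℝ) +
      (exp (s • A₂) * exp (s • A₁) - 1) * P₀))
      (-(G * ((exp (t • A₂) * A₂ * exp (t • A₁) + exp (t • A₂) * (A₁ * exp (t • A₁))) * P₀)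
        * G)) t := by
    have hFD := hasFDerivAt_ringInverse (𝕜 := ℝ) hu.unit
    rw [hu.unit_spec] at hFD
    have h := hFD.comp_hasDerivAt t hQ
    simp only [Function.comp_def, ContinuousLinearMap.neg_apply,
      ContinuousLinearMap.mulLeftRight_apply, hGinv] at h
    exact h
  -- derivative of the full product
  have hPd : HasDerivAt (fun s => exp (s • A₁) * P₀ *
      Ring.inverse ((1 : Matrix (Fin n) (Fin n) ℝ) +
        (exp (s • A₂) * exp (s • A₁) - 1) * P₀) * exp (s • A₂))
      ((A₁ * exp (t • A₁) * P₀ * G +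
        exp (t • A₁) * P₀ *
          (-(G * ((exp (t • A₂) * A₂ * exp (t • A₁) + exp (t • A₂) * (A₁ * exp (t • A₁)))
            * P₀) * G))) * exp (t • A₂) +
        exp (t • A₁) * P₀ * G * (exp (t • A₂) * A₂)) t :=
    (((hasDerivAt_exp_smul_const' A₁ t).mul_const P₀).mul hGd).mul
      (hasDerivAt_exp_smul_const A₂ t)
  have hkey : (A₁ * exp (t • A₁) * P₀ * G +
        exp (t • A₁) * P₀ *
          (-(G * ((exp (t • A₂) * A₂ * exp (t • A₁) + exp (t • A₂) * (A₁ * exp (t • A₁)))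
            * P₀) * G))) * exp (t • A₂) +
        exp (t • A₁) * P₀ * G * (exp (t • A₂) * A₂)
      = ε⁻¹ • (A * (exp (t • A₁) * P₀ * G * exp (t • A₂)) +
        (exp (t • A₁) * P₀ * G * exp (t • A₂)) * Aᵀ -
        (exp (t • A₁) * P₀ * G * exp (t • A₂)) * (A + Aᵀ) *
        (exp (t • A₁) * P₀ * G * exp (t • A₂))) := by
    set X := exp (t • A₁) * P₀ * G * exp (t • A₂) with hX
    have hmid : (A₁ * exp (t • A₁) * P₀ * G +
        exp (t • A₁) * P₀ *
          (-(G * ((exp (t • A₂) * A₂ * exp (t • A₁) + exp (t • A₂) * (A₁ * exp (t • A₁)))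
            * P₀) * G))) * exp (t • A₂) +
        exp (t • A₁) * P₀ * G * (exp (t • A₂) * A₂)
        = A₁ * X + X * A₂ - X * (A₁ + A₂) * X := by
      rw [hX]
      noncomm_ring
    rw [hmid, hX, hA₁, hA₂]
    simp only [smul_add, smul_sub, smul_mul_assoc, mul_smul_comm, mul_add, add_mul]
  rw [hkey] at hPd
  exact hasDerivAt_entry hPd i j

end

end OjaRiccatiAux

/-- For `A` with positive-definite symmetric part, `ε > 0`, and
`P₀ ⪰ 0`: (i) `Iₙ + (exp((t/ε)Aᵀ)·exp((t/ε)A) − Iₙ)·P₀` is invertible for all `t ≥ 0`;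
(ii) `P(t) := exp((t/ε)A)·P₀·(Iₙ + (exp((t/ε)Aᵀ)·exp((t/ε)A) − Iₙ)·P₀)⁻¹·exp((t/ε)Aᵀ)`
satisfies `P(0) = P₀` and the Riccati equation
`ε·P'(t) = A·P(t) + P(t)·Aᵀ − P(t)·(A+Aᵀ)·P(t)` on `[0,∞)`. -/
theorem explicit_solution_of_oja_riccati
    (n : ℕ) (A : Matrix (Fin n) (Fin n) ℝ)
    (hA : (((2:ℝ)⁻¹) • (A + Aᵀ)).PosDef)
    (ε : ℝ) (hε : 0 < ε)
    (P₀ : Matrix (Fin n) (Fin n) ℝ) (hP₀ : P₀.PosSemidef)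
    (P : ℝ → Matrix (Fin n) (Fin n) ℝ)
    (hP : ∀ t, P t = exp ((t / ε) • A) * P₀ *
      ((1 : Matrix (Fin n) (Fin n) ℝ) +
        (exp ((t / ε) • Aᵀ) * exp ((t / ε) • A) - 1) * P₀)⁻¹ *
      exp ((t / ε) • Aᵀ)) :
    (∀ t ∈ Set.Ici (0:ℝ),
      IsUnit ((1 : Matrix (Fin n) (Fin n) ℝ) +
        (exp ((t / ε) • Aᵀ) * exp ((t / ε) • A) - 1) * P₀)) ∧
    P 0 = P₀ ∧
    ∃ P' : ℝ → Matrix (Fin n) (Fin n) ℝ,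
      (∀ t ∈ Set.Ici (0:ℝ), ∀ i j,
        HasDerivWithinAt (fun s => P s i j) (P' t i j) (Set.Ici (0:ℝ)) t) ∧
      (∀ t ∈ Set.Ici (0:ℝ),
        ε • P' t = A * P t + P t * Aᵀ - P t * (A + Aᵀ) * P t) := by
  have hunit : ∀ t ∈ Set.Ici (0:ℝ),
      IsUnit ((1 : Matrix (Fin n) (Fin n) ℝ) +
        (exp ((t / ε) • Aᵀ) * exp ((t / ε) • A) - 1) * P₀) := fun t ht =>
    OjaRiccatiAux.isUnit_aux _ P₀ (fun y => OjaRiccatiAux.psd_key A hA ε hε ht y) hP₀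
  refine ⟨hunit, ?_, ?_⟩
  · rw [hP 0]
    simp [zero_div, zero_smul, exp_zero, inv_one]
  · refine ⟨fun t => ε⁻¹ • (A * P t + P t * Aᵀ - P t * (A + Aᵀ) * P t), ?_, ?_⟩
    · intro t ht i j
      have h := OjaRiccatiAux.hasDerivAt_P A ε hε P₀ t (hunit t ht) i j
      simp only [hP]
      exact h.hasDerivWithinAt
    · intro t ht
      rw [smul_smul, mul_inv_cancel₀ hε.ne', one_smul]
end

section
/- Let A ∈ ℝ^{n×n} with A_sym := (A+Aᵀ)/2 positive definite, let ε > 0, and let U : ℝ → ℝ^{n×r} be differentiable on [0,∞), satisfy the Oja flow ε·(d/dt)U(t) = (I_n − U(t)U(t)ᵀ)·A·U(t) for all t ≥ 0, and have U(0) of full column rank r. Then U(t)ᵀU(t) converges to the identity matrix I_r as t → ∞ (equivalently, every singular value of U(t) tends to 1). -/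
open Matrix Set Filter Topology

namespace OjaAux

variable {m N : ℕ}

lemma dot_self_nonneg (v : Fin m → ℝ) : 0 ≤ v ⬝ᵥ v :=
  Finset.sum_nonneg fun i _ => mul_self_nonneg _

lemma dot_self_pos {v : Fin m → ℝ} (hv : v ≠ 0) : 0 < v ⬝ᵥ v := by
  rcases lt_or_eq_of_le (dot_self_nonneg v) with h | h
  · exact h
  · exact absurd (dotProduct_self_eq_zero.mp h.symm) hv

lemma quad_conj (U : Matrix (Fin N) (Fin m) ℝ) (B : Matrix (Fin N) (Fin N) ℝ)
    (x : Fin m → ℝ) :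
    x ⬝ᵥ ((Uᵀ * B * U) *ᵥ x) = (U *ᵥ x) ⬝ᵥ (B *ᵥ (U *ᵥ x)) := by
  rw [← Matrix.mulVec_mulVec, ← Matrix.mulVec_mulVec, Matrix.dotProduct_mulVec,
    Matrix.vecMul_transpose]

lemma quad_transpose (Nn : Matrix (Fin m) (Fin m) ℝ) (x : Fin m → ℝ) :
    x ⬝ᵥ (Nnᵀ *ᵥ x) = x ⬝ᵥ (Nn *ᵥ x) := by
  rw [Matrix.mulVec_transpose, Matrix.dotProduct_mulVec, dotProduct_comm]

lemma isCompact_unit_sphere : IsCompact {x : Fin m → ℝ | x ⬝ᵥ x = 1} := by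
  have hdotc : Continuous fun x : Fin m → ℝ => x ⬝ᵥ x := by
    simp only [dotProduct]
    exact continuous_finset_sum _ fun i _ => (continuous_apply i).mul (continuous_apply i)
  have hclosed : IsClosed {x : Fin m → ℝ | x ⬝ᵥ x = 1} := isClosed_eq hdotc continuous_const
  have hsub : {x : Fin m → ℝ | x ⬝ᵥ x = 1} ⊆ Metric.closedBall 0 1 := by
    intro x hx
    rw [Metric.mem_closedBall, dist_zero_right]
    rw [pi_norm_le_iff_of_nonneg zero_le_one]
    intro i
    rw [Real.norm_eq_abs, abs_le_one_iff_mul_self_le_one]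
    calc x i * x i ≤ x ⬝ᵥ x :=
          Finset.single_le_sum (f := fun j => x j * x j)
            (fun j _ => mul_self_nonneg _) (Finset.mem_univ i)
      _ = 1 := hx
  exact (isCompact_closedBall (0 : Fin m → ℝ) 1).of_isClosed_subset hclosed hsub

/-- quadratic-form coercivity constant for a positive-definite form -/
lemma exists_coercive (hm : 1 ≤ m) (B : Matrix (Fin m) (Fin m) ℝ)
    (hB : ∀ x : Fin m → ℝ, x ≠ 0 → 0 < x ⬝ᵥ (B *ᵥ x)) :
    ∃ α : ℝ, 0 < α ∧ ∀ x : Fin m → ℝ, α * (x ⬝ᵥ x) ≤ x ⬝ᵥ (B *ᵥ x) := by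
  have hdotc : Continuous fun x : Fin m → ℝ => x ⬝ᵥ x := by
    simp only [dotProduct]
    exact continuous_finset_sum _ fun i _ => (continuous_apply i).mul (continuous_apply i)
  have hfc : Continuous fun x : Fin m → ℝ => x ⬝ᵥ (B *ᵥ x) := by
    simp only [dotProduct, Matrix.mulVec]
    exact continuous_finset_sum _ fun i _ => (continuous_apply i).mul
      (continuous_finset_sum _ fun j _ => continuous_const.mul (continuous_apply j))
  set S : Set (Fin m → ℝ) := {x | x ⬝ᵥ x = 1} with hS
  have hclosed : IsClosed S := isClosed_eq hdotc continuous_const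
  have hsub : S ⊆ Metric.closedBall 0 1 := by
    intro x hx
    rw [Metric.mem_closedBall, dist_zero_right]
    rw [pi_norm_le_iff_of_nonneg zero_le_one]
    intro i
    rw [Real.norm_eq_abs, abs_le_one_iff_mul_self_le_one]
    calc x i * x i ≤ x ⬝ᵥ x :=
          Finset.single_le_sum (f := fun j => x j * x j)
            (fun j _ => mul_self_nonneg _) (Finset.mem_univ i)
      _ = 1 := hx
  have hcpt : IsCompact S :=
    (isCompact_closedBall (0 : Fin m → ℝ) 1).of_isClosed_subset hclosed hsub
  have hne : S.Nonempty := by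
    refine ⟨Pi.single ⟨0, hm⟩ 1, ?_⟩
    simp [hS, dotProduct, Pi.single_apply]
  obtain ⟨x₀, hx₀S, hx₀min⟩ := hcpt.exists_isMinOn hne hfc.continuousOn
  have hx₀ne : x₀ ≠ 0 := by
    intro h
    rw [hS, mem_setOf_eq, h] at hx₀S
    simp at hx₀S
  refine ⟨x₀ ⬝ᵥ (B *ᵥ x₀), hB x₀ hx₀ne, fun x => ?_⟩
  rcases eq_or_ne x 0 with rfl | hx
  · simp
  · have hxx : 0 < x ⬝ᵥ x := dot_self_pos hx
    set c : ℝ := Real.sqrt (x ⬝ᵥ x) with hc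
    have hcpos : 0 < c := Real.sqrt_pos.mpr hxx
    have hc2 : c * c = x ⬝ᵥ x := Real.mul_self_sqrt hxx.le
    have hy : (c⁻¹ • x) ∈ S := by
      rw [hS, mem_setOf_eq, smul_dotProduct, dotProduct_smul, smul_eq_mul, smul_eq_mul,
        ← mul_assoc, ← mul_inv, hc2]
      field_simp
    have hyval : (c⁻¹ • x) ⬝ᵥ (B *ᵥ (c⁻¹ • x)) = c⁻¹ * c⁻¹ * (x ⬝ᵥ (B *ᵥ x)) := by
      rw [Matrix.mulVec_smul, smul_dotProduct, dotProduct_smul, smul_eq_mul, smul_eq_mul,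
        mul_assoc]
    have hineq : x₀ ⬝ᵥ (B *ᵥ x₀) ≤ c⁻¹ * c⁻¹ * (x ⬝ᵥ (B *ᵥ x)) := by
      have h2 := isMinOn_iff.mp hx₀min _ hy
      rwa [hyval] at h2
    have h3 := mul_le_mul_of_nonneg_right hineq (mul_self_nonneg c)
    have h4 : c⁻¹ * c⁻¹ * (x ⬝ᵥ (B *ᵥ x)) * (c * c) = x ⬝ᵥ (B *ᵥ x) := by
      field_simp
    rw [h4, hc2] at h3
    exact h3


/-- positive semidefinite symmetric matrix with zero quadratic form at v kills v -/
lemma psd_kernel {D : Matrix (Fin m) (Fin m) ℝ} (hsym : Dᵀ = D)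
    (hpsd : ∀ x : Fin m → ℝ, 0 ≤ x ⬝ᵥ (D *ᵥ x)) {v : Fin m → ℝ}
    (hv : v ⬝ᵥ (D *ᵥ v) = 0) : D *ᵥ v = 0 := by
  have key : ∀ w : Fin m → ℝ, w ⬝ᵥ (D *ᵥ v) = 0 := by
    intro w
    have hsymm : ∀ x y : Fin m → ℝ, x ⬝ᵥ (D *ᵥ y) = y ⬝ᵥ (D *ᵥ x) := by
      intro x y
      rw [Matrix.dotProduct_mulVec, ← Matrix.mulVec_transpose, hsym, dotProduct_comm]
    set a := w ⬝ᵥ (D *ᵥ v) with ha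
    set b := w ⬝ᵥ (D *ᵥ w) with hb
    have hbnn : 0 ≤ b := hpsd w
    have hq : ∀ t : ℝ, 0 ≤ 2 * t * a + t ^ 2 * b := by
      intro t
      have h0 := hpsd (v + t • w)
      have hexp : (v + t • w) ⬝ᵥ (D *ᵥ (v + t • w))
          = v ⬝ᵥ (D *ᵥ v) + 2 * t * a + t ^ 2 * b := by
        simp only [Matrix.mulVec_add, Matrix.mulVec_smul, add_dotProduct, dotProduct_add,
          smul_dotProduct, dotProduct_smul, smul_eq_mul]
        rw [hsymm v w, ← ha, ← hb]
        ring
      rw [hexp, hv, zero_add] at h0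
      exact h0
    by_contra hane
    have ht := hq (-a / (b + 1))
    have hb1 : 0 < b + 1 := by linarith
    have ha2 : 0 < a ^ 2 := by positivity
    rw [div_pow] at ht
    have : 2 * (-a / (b + 1)) * a + (-a) ^ 2 / (b + 1) ^ 2 * b
        = a ^ 2 / (b + 1) ^ 2 * (b - 2 * (b + 1)) := by
      field_simp
      ring
    rw [this] at ht
    nlinarith [div_pos ha2 (by positivity : (0:ℝ) < (b + 1) ^ 2)]
  have := key (D *ᵥ v)
  exact dotProduct_self_eq_zero.mp this

/-- at a right-endpoint minimum the one-sided derivative is nonpositive -/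
lemma slope_nonpos {g : ℝ → ℝ} {g' a b : ℝ} (hab : a < b)
    (hd : HasDerivWithinAt g g' (Set.Icc a b) b)
    (hmin : ∀ t ∈ Set.Icc a b, g b ≤ g t) : g' ≤ 0 := by
  rw [hasDerivWithinAt_iff_tendsto_slope] at hd
  have hne : (𝓝[Set.Icc a b \ {b}] b).NeBot := by
    have hsub : Set.Ico a b ⊆ Set.Icc a b \ {b} := by
      intro x hx
      exact ⟨⟨hx.1, hx.2.le⟩, fun h => absurd (h ▸ hx.2) (lt_irrefl _)⟩
    exact (right_nhdsWithin_Ico_neBot hab).mono (nhdsWithin_mono _ hsub)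
  refine le_of_tendsto hd ?_
  filter_upwards [self_mem_nhdsWithin] with t ht
  have htb : t < b := lt_of_le_of_ne ht.1.2 (fun h => ht.2 h)
  have hnum : 0 ≤ g t - g b := sub_nonneg.mpr (hmin t ht.1)
  have hden : t - b < 0 := sub_neg.mpr htb
  rw [slope_def_field]
  exact div_nonpos_of_nonneg_of_nonpos hnum hden.le

/-- the key algebraic identity for the Oja flow -/
lemma oja_identity (U : Matrix (Fin N) (Fin m) ℝ) (A : Matrix (Fin N) (Fin N) ℝ) :
    ((1 - U * Uᵀ) * A * U)ᵀ * U + Uᵀ * ((1 - U * Uᵀ) * A * U)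
      = (Uᵀ * A * U)ᵀ * (1 - Uᵀ * U) + (1 - Uᵀ * U) * (Uᵀ * A * U) := by
  simp only [Matrix.transpose_mul, Matrix.transpose_sub, Matrix.transpose_one,
    Matrix.transpose_transpose, Matrix.sub_mul, Matrix.mul_sub, Matrix.one_mul,
    Matrix.mul_one, Matrix.mul_assoc]


lemma entry_sum_trace (X Y : Matrix (Fin m) (Fin m) ℝ) :
    (∑ i, ∑ j, X i j * Y i j) = Matrix.trace (Xᵀ * Y) := by
  simp only [Matrix.trace, Matrix.diag, Matrix.mul_apply, Matrix.transpose_apply]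
  rw [Finset.sum_comm]

lemma row_quad_trace (M Y : Matrix (Fin m) (Fin m) ℝ) :
    (∑ i, (fun j => M i j) ⬝ᵥ (Y *ᵥ (fun j => M i j))) = Matrix.trace (M * Y * Mᵀ) := by
  simp only [Matrix.trace, Matrix.diag, Matrix.mul_apply, Matrix.transpose_apply,
    dotProduct, Matrix.mulVec]
  refine Finset.sum_congr rfl fun i _ => ?_
  simp only [Finset.mul_sum, Finset.sum_mul]
  rw [Finset.sum_comm]
  exact Finset.sum_congr rfl fun j _ => Finset.sum_congr rfl fun l _ => by ring

lemma sum_quad (M S : Matrix (Fin m) (Fin m) ℝ) (hM : Mᵀ = M) :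
    (∑ i, ∑ j, M i j * ((Sᵀ * M + M * S) i j))
      = ∑ i, (fun j => M i j) ⬝ᵥ ((S + Sᵀ) *ᵥ (fun j => M i j)) := by
  rw [entry_sum_trace, row_quad_trace, hM]
  rw [Matrix.mul_add M S Sᵀ, Matrix.add_mul, Matrix.trace_add, Matrix.mul_add, Matrix.trace_add]
  simp only [← Matrix.mul_assoc]
  rw [Matrix.trace_mul_cycle M S M]
  exact add_comm _ _

end OjaAux
open Matrix Set Filter Topology in
set_option maxHeartbeats 2000000 in
/-- Under the Oja flow with positive-definite symmetric part of `A`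
and full-column-rank initial value, `U(t)ᵀU(t)` converges to the identity as `t → ∞`
(equivalently, all singular values of `U(t)` tend to `1`). -/
theorem oja_flow_singular_values_tend_to_one
    (n r : ℕ) (hr : 1 ≤ r) (hrn : r ≤ n)
    (A : Matrix (Fin n) (Fin n) ℝ)
    (hA : (((2:ℝ)⁻¹) • (A + Aᵀ)).PosDef)
    (ε : ℝ) (hε : 0 < ε)
    (U U' : ℝ → Matrix (Fin n) (Fin r) ℝ)
    (hderiv : ∀ t ∈ Set.Ici (0:ℝ), ∀ i j,
      HasDerivWithinAt (fun s => U s i j) (U' t i j) (Set.Ici (0:ℝ)) t)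
    (hode : ∀ t ∈ Set.Ici (0:ℝ),
      ε • U' t = (1 - U t * (U t)ᵀ) * A * U t)
    (hrank0 : (U 0).rank = r) :
    Filter.Tendsto (fun t => (U t)ᵀ * U t) Filter.atTop
      (nhds (1 : Matrix (Fin r) (Fin r) ℝ)) := by
  classical
  set B : Matrix (Fin n) (Fin n) ℝ := ((2:ℝ)⁻¹) • (A + Aᵀ) with hBdef
  obtain ⟨α, hα, hαB⟩ := OjaAux.exists_coercive (le_trans hr hrn) B
    (fun x hx => by simpa using (Matrix.posDef_iff_dotProduct_mulVec.mp hA).2 hx)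
  set P : ℝ → Matrix (Fin r) (Fin r) ℝ := fun t => (U t)ᵀ * U t with hPdef
  set Sm : ℝ → Matrix (Fin r) (Fin r) ℝ := fun t => (U t)ᵀ * A * U t with hSmdef
  set Mm : ℝ → Matrix (Fin r) (Fin r) ℝ := fun t => 1 - P t with hMmdef
  set Q : ℝ → Matrix (Fin r) (Fin r) ℝ :=
    fun t => ε⁻¹ • ((Sm t)ᵀ * Mm t + Mm t * Sm t) with hQdef
  have hPsym : ∀ t, (P t)ᵀ = P t := fun t => by
    simp [hPdef, Matrix.transpose_mul]
  have hMsym : ∀ t, (Mm t)ᵀ = Mm t := fun t => by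
    simp [hMmdef, Matrix.transpose_sub, hPsym t]
  have hPquad : ∀ t (x : Fin r → ℝ), x ⬝ᵥ (P t *ᵥ x) = (U t *ᵥ x) ⬝ᵥ (U t *ᵥ x) := by
    intro t x
    have h := OjaAux.quad_conj (U t) 1 x
    simpa using h
  have hSquad1 : ∀ t (x : Fin r → ℝ),
      x ⬝ᵥ (Sm t *ᵥ x) = (U t *ᵥ x) ⬝ᵥ (B *ᵥ (U t *ᵥ x)) := by
    intro t x
    have h1 := OjaAux.quad_conj (U t) A x
    have h2 := OjaAux.quad_transpose A (U t *ᵥ x)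
    simp only [hSmdef, hBdef]
    rw [h1, Matrix.smul_mulVec, Matrix.add_mulVec, dotProduct_smul, dotProduct_add, h2,
      smul_eq_mul]
    ring
  have hSquad : ∀ t (x : Fin r → ℝ),
      x ⬝ᵥ ((Sm t + (Sm t)ᵀ) *ᵥ x) = 2 * ((U t *ᵥ x) ⬝ᵥ (B *ᵥ (U t *ᵥ x))) := by
    intro t x
    rw [Matrix.add_mulVec, dotProduct_add, OjaAux.quad_transpose (Sm t) x, hSquad1 t x]
    ring
  -- derivative of the Gram matrix entries
  have hPderiv : ∀ t ∈ Set.Ici (0:ℝ), ∀ i j,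
      HasDerivWithinAt (fun s => P s i j) (Q t i j) (Set.Ici (0:ℝ)) t := by
    intro t ht i j
    have key : (ε • U' t)ᵀ * U t + (U t)ᵀ * (ε • U' t) = (Sm t)ᵀ * Mm t + Mm t * Sm t := by
      rw [hode t ht]
      simp only [hSmdef, hMmdef, hPdef]
      exact OjaAux.oja_identity (U t) A
    have hPe : ∀ s, P s i j = ∑ x, U s x i * U s x j := fun s => by
      simp [hPdef, Matrix.mul_apply, Matrix.transpose_apply]
    have h2 : HasDerivWithinAt (fun s => ∑ x, U s x i * U s x j)
        (∑ x, (U' t x i * U t x j + U t x i * U' t x j)) (Set.Ici (0:ℝ)) t :=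
      HasDerivWithinAt.fun_sum fun x _ => (hderiv t ht x i).fun_mul (hderiv t ht x j)
    have h1 : HasDerivWithinAt (fun s => P s i j)
        (∑ x, (U' t x i * U t x j + U t x i * U' t x j)) (Set.Ici (0:ℝ)) t :=
      h2.congr (fun s _ => hPe s) (hPe t)
    have h3 : ε * (∑ x, (U' t x i * U t x j + U t x i * U' t x j))
        = ((Sm t)ᵀ * Mm t + Mm t * Sm t) i j := by
      rw [← key]
      simp only [Matrix.add_apply, Matrix.mul_apply, Matrix.transpose_apply,
        Matrix.smul_apply, smul_eq_mul, Finset.mul_sum, ← Finset.sum_add_distrib]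
      exact Finset.sum_congr rfl fun x _ => by ring
    have h4 : Q t i j = ∑ x, (U' t x i * U t x j + U t x i * U' t x j) := by
      have : Q t i j = ε⁻¹ * (((Sm t)ᵀ * Mm t + Mm t * Sm t) i j) := by
        simp [hQdef, Matrix.smul_apply, mul_add]
      rw [this, ← h3, ← mul_assoc, inv_mul_cancel₀ (ne_of_gt hε), one_mul]
    rw [h4]
    exact h1
  have hPcont : ∀ i j, ContinuousOn (fun s => P s i j) (Set.Ici (0:ℝ)) :=
    fun i j t ht => (hPderiv t ht i j).continuousWithinAt
  have hQuadCont : ∀ v : Fin r → ℝ,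
      ContinuousOn (fun s => v ⬝ᵥ (P s *ᵥ v)) (Set.Ici (0:ℝ)) := by
    intro v
    simp only [dotProduct, Matrix.mulVec]
    exact continuousOn_finset_sum _ fun i _ => continuousOn_const.mul
      (continuousOn_finset_sum _ fun j _ => (hPcont i j).mul continuousOn_const)
  -- coercivity at time 0 (full column rank)
  have hP0pos : ∀ x : Fin r → ℝ, x ≠ 0 → 0 < x ⬝ᵥ (P 0 *ᵥ x) := by
    have hinj : ∀ y : Fin r → ℝ, U 0 *ᵥ y = 0 → y = 0 := by
      intro y hy
      have h1 := LinearMap.finrank_range_add_finrank_ker ((U 0).mulVecLin)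
      have h2 : Module.finrank ℝ (LinearMap.range (U 0).mulVecLin) = r := hrank0
      have hfr : Module.finrank ℝ (Fin r → ℝ) = r := by
        simp [Module.finrank_pi]
      rw [h2, hfr] at h1
      have h3 : Module.finrank ℝ (LinearMap.ker (U 0).mulVecLin) = 0 := by omega
      have h4 : LinearMap.ker (U 0).mulVecLin = ⊥ := Submodule.finrank_eq_zero.mp h3
      have h5 : y ∈ LinearMap.ker (U 0).mulVecLin := by
        simpa [Matrix.mulVecLin_apply] using hy
      rw [h4] at h5
      simpa using h5
    intro x hx
    rw [hPquad 0 x]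
    exact OjaAux.dot_self_pos (fun h => hx (hinj x h))
  obtain ⟨m₀, hm₀, hm₀P⟩ := OjaAux.exists_coercive hr (P 0) hP0pos
  set μ : ℝ := min m₀ 2⁻¹ with hμdef
  have hμpos : 0 < μ := lt_min hm₀ (by norm_num)
  have hμhalf : μ ≤ 2⁻¹ := min_le_right _ _
  have hμP0 : ∀ x : Fin r → ℝ, μ * (x ⬝ᵥ x) ≤ x ⬝ᵥ (P 0 *ᵥ x) := by
    intro x
    exact le_trans (mul_le_mul_of_nonneg_right (min_le_left _ _)
      (OjaAux.dot_self_nonneg x)) (hm₀P x)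
  -- the δ-perturbed invariance
  have hdelta : ∀ δ : ℝ, 0 < δ → ∀ t ∈ Set.Ici (0:ℝ), ∀ v : Fin r → ℝ, v ⬝ᵥ v = 1 →
      0 < v ⬝ᵥ (P t *ᵥ v) - μ + δ * Real.exp t := by
    intro δ hδ
    by_contra hcon
    push_neg at hcon
    set F : ℝ → (Fin r → ℝ) → ℝ :=
      fun t v => v ⬝ᵥ (P t *ᵥ v) - μ + δ * Real.exp t with hFdef
    set Bad : Set ℝ := {t | 0 ≤ t ∧ ∃ v, v ⬝ᵥ v = 1 ∧ F t v ≤ 0} with hBad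
    have hBadne : Bad.Nonempty := by
      obtain ⟨t, ht, v, hv, hle⟩ := hcon
      exact ⟨t, ht, v, hv, hle⟩
    have hBadbdd : BddBelow Bad := ⟨0, fun x hx => hx.1⟩
    have hFcont : ∀ v : Fin r → ℝ, ContinuousOn (fun s => F s v) (Set.Ici (0:ℝ)) := by
      intro v
      exact ((hQuadCont v).sub continuousOn_const).add
        ((Real.continuous_exp.continuousOn).const_smul δ |>.congr (fun s _ => by
          simp [smul_eq_mul]))
    have hBadclosed : IsClosed Bad := by
      apply IsSeqClosed.isClosed
      intro ts t hts hlim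
      have ht : (0:ℝ) ≤ t := ge_of_tendsto hlim (Filter.Eventually.of_forall fun nn => (hts nn).1)
      choose w hw1 hw2 using fun nn => (hts nn).2
      obtain ⟨a, haS, φ, hφmono, hφtend⟩ := OjaAux.isCompact_unit_sphere.tendsto_subseq hw1
      refine ⟨ht, a, haS, ?_⟩
      have htk : Filter.Tendsto (fun kk => ts (φ kk)) Filter.atTop (nhds t) :=
        hlim.comp hφmono.tendsto_atTop
      have htkIci : Filter.Tendsto (fun kk => ts (φ kk)) Filter.atTop (nhdsWithin t (Set.Ici 0)) :=
        tendsto_nhdsWithin_iff.mpr ⟨htk, Filter.Eventually.of_forall fun kk => (hts (φ kk)).1⟩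
      have hvk : ∀ i, Filter.Tendsto (fun kk => (w ∘ φ) kk i) Filter.atTop (nhds (a i)) :=
        fun i => tendsto_pi_nhds.mp hφtend i
      have hPk : ∀ i j, Filter.Tendsto (fun kk => P (ts (φ kk)) i j) Filter.atTop
          (nhds (P t i j)) := fun i j => ((hPcont i j t ht).tendsto).comp htkIci
      have hquadtend : Filter.Tendsto (fun kk => (w (φ kk)) ⬝ᵥ (P (ts (φ kk)) *ᵥ (w (φ kk))))
          Filter.atTop (nhds (a ⬝ᵥ (P t *ᵥ a))) := by
        simp only [dotProduct, Matrix.mulVec]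
        exact tendsto_finset_sum _ fun i _ => (hvk i).mul
          (tendsto_finset_sum _ fun j _ => (hPk i j).mul (hvk j))
      have hFtend : Filter.Tendsto (fun kk => F (ts (φ kk)) (w (φ kk))) Filter.atTop
          (nhds (F t a)) := by
        refine ((hquadtend.sub tendsto_const_nhds).add ?_)
        exact (tendsto_const_nhds.mul ((Real.continuous_exp.tendsto _).comp htk))
      exact le_of_tendsto hFtend (Filter.Eventually.of_forall fun kk => hw2 (φ kk))
    set t₁ : ℝ := sInf Bad with ht₁def
    have ht₁Bad : t₁ ∈ Bad := hBadclosed.csInf_mem hBadne hBadbdd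
    have ht₁0 : (0:ℝ) ≤ t₁ := ht₁Bad.1
    obtain ⟨v₀, hv₀S, hv₀le⟩ := ht₁Bad.2
    have ht₁pos : 0 < t₁ := by
      rcases lt_or_eq_of_le ht₁0 with h | h
      · exact h
      · exfalso
        have h0 : F 0 v₀ ≤ 0 := by rw [← h] at hv₀le; exact hv₀le
        have h1 := hμP0 v₀
        rw [hv₀S, mul_one] at h1
        have : F 0 v₀ = v₀ ⬝ᵥ (P 0 *ᵥ v₀) - μ + δ := by simp [hFdef]
        rw [this] at h0
        linarith
    have hbefore : ∀ s, 0 ≤ s → s < t₁ → ∀ v : Fin r → ℝ, v ⬝ᵥ v = 1 → 0 < F s v := by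
      intro s hs0 hst v hv
      by_contra hle
      push_neg at hle
      exact absurd (csInf_le hBadbdd ⟨hs0, v, hv, hle⟩) (not_le.mpr hst)
    have hFt₁nonneg : ∀ v : Fin r → ℝ, v ⬝ᵥ v = 1 → 0 ≤ F t₁ v := by
      intro v hv
      haveI := right_nhdsWithin_Ico_neBot ht₁pos
      have hc : Filter.Tendsto (fun s => F s v) (nhdsWithin t₁ (Set.Ico 0 t₁))
          (nhds (F t₁ v)) :=
        ((hFcont v) t₁ ht₁0).tendsto.mono_left
          (nhdsWithin_mono _ (fun x hx => hx.1))
      refine ge_of_tendsto hc ?_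
      filter_upwards [self_mem_nhdsWithin] with s hs
      exact (hbefore s hs.1 hs.2 v hv).le
    -- the perturbed Gram matrix at the first crossing time
    set Dm : Matrix (Fin r) (Fin r) ℝ := P t₁ - μ • 1 + (δ * Real.exp t₁) • 1 with hDmdef
    have hDquad' : ∀ v : Fin r → ℝ, v ⬝ᵥ (Dm *ᵥ v)
        = v ⬝ᵥ (P t₁ *ᵥ v) - μ * (v ⬝ᵥ v) + (δ * Real.exp t₁) * (v ⬝ᵥ v) := by
      intro v
      simp only [hDmdef, Matrix.add_mulVec, Matrix.sub_mulVec, Matrix.smul_mulVec,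
        Matrix.one_mulVec, dotProduct_add, dotProduct_sub, dotProduct_smul, smul_eq_mul]
    have hDsym : Dmᵀ = Dm := by
      simp [hDmdef, Matrix.transpose_add, Matrix.transpose_sub, Matrix.transpose_smul,
        Matrix.transpose_one, hPsym]
    have hDpsd : ∀ v : Fin r → ℝ, 0 ≤ v ⬝ᵥ (Dm *ᵥ v) := by
      intro v
      rw [hDquad']
      rcases eq_or_ne v 0 with rfl | hv
      · simp
      · have hvv : 0 < v ⬝ᵥ v := OjaAux.dot_self_pos hv
        set c : ℝ := Real.sqrt (v ⬝ᵥ v) with hc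
        have hcpos : 0 < c := Real.sqrt_pos.mpr hvv
        have hc2 : c * c = v ⬝ᵥ v := Real.mul_self_sqrt hvv.le
        have hyunit : (c⁻¹ • v) ⬝ᵥ (c⁻¹ • v) = 1 := by
          rw [smul_dotProduct, dotProduct_smul, smul_eq_mul, smul_eq_mul, ← mul_assoc,
            ← mul_inv, hc2]
          field_simp
        have h1 := hFt₁nonneg (c⁻¹ • v) hyunit
        have hyval : (c⁻¹ • v) ⬝ᵥ (P t₁ *ᵥ (c⁻¹ • v)) = c⁻¹ * c⁻¹ * (v ⬝ᵥ (P t₁ *ᵥ v)) := by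
          rw [Matrix.mulVec_smul, smul_dotProduct, dotProduct_smul, smul_eq_mul, smul_eq_mul,
            mul_assoc]
        have h2 : F t₁ (c⁻¹ • v) = c⁻¹ * c⁻¹ * (v ⬝ᵥ (P t₁ *ᵥ v)) - μ + δ * Real.exp t₁ := by
          simp only [hFdef]; rw [hyval]
        rw [h2] at h1
        have h3 := mul_le_mul_of_nonneg_right h1 (mul_self_nonneg c)
        have h4 : (c⁻¹ * c⁻¹ * (v ⬝ᵥ (P t₁ *ᵥ v)) - μ + δ * Real.exp t₁) * (c * c)
            = v ⬝ᵥ (P t₁ *ᵥ v) - μ * (c * c) + δ * Real.exp t₁ * (c * c) := by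
          field_simp
        rw [h4, hc2] at h3
        simpa using h3
    have hDv₀ : v₀ ⬝ᵥ (Dm *ᵥ v₀) = 0 := by
      have hge := hDpsd v₀
      have hle2 : v₀ ⬝ᵥ (Dm *ᵥ v₀) ≤ 0 := by
        rw [hDquad', hv₀S, mul_one, mul_one]
        exact hv₀le
      linarith
    have hker := OjaAux.psd_kernel hDsym hDpsd hDv₀
    have hPv₀ : P t₁ *ᵥ v₀ = (μ - δ * Real.exp t₁) • v₀ := by
      have e : P t₁ *ᵥ v₀ - μ • v₀ + (δ * Real.exp t₁) • v₀ = 0 := by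
        have := hker
        rw [hDmdef] at this
        simpa [Matrix.add_mulVec, Matrix.sub_mulVec, Matrix.smul_mulVec,
          Matrix.one_mulVec] using this
      have e2 : P t₁ *ᵥ v₀ - (μ - δ * Real.exp t₁) • v₀
          = P t₁ *ᵥ v₀ - μ • v₀ + (δ * Real.exp t₁) • v₀ := by
        rw [sub_smul]; abel
      rw [← sub_eq_zero, e2]
      exact e
    -- eigen-relation for Mm
    set lam : ℝ := 1 - (μ - δ * Real.exp t₁) with hlam
    have hMv₀ : Mm t₁ *ᵥ v₀ = lam • v₀ := by
      simp only [hMmdef, Matrix.sub_mulVec, Matrix.one_mulVec, hPv₀, hlam]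
      module
    -- derivative of g at t₁
    set g : ℝ → ℝ := fun s => F s v₀ with hgdef
    have hg : HasDerivWithinAt g (v₀ ⬝ᵥ (Q t₁ *ᵥ v₀) + δ * Real.exp t₁)
        (Set.Ici (0:ℝ)) t₁ := by
      have hq : HasDerivWithinAt (fun s => v₀ ⬝ᵥ (P s *ᵥ v₀)) (v₀ ⬝ᵥ (Q t₁ *ᵥ v₀))
          (Set.Ici (0:ℝ)) t₁ := by
        have h1 : HasDerivWithinAt (fun s => ∑ i, v₀ i * ∑ j, P s i j * v₀ j)
            (∑ i, v₀ i * ∑ j, Q t₁ i j * v₀ j) (Set.Ici (0:ℝ)) t₁ :=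
          HasDerivWithinAt.fun_sum fun i _ => (HasDerivWithinAt.fun_sum fun j _ =>
            (hPderiv t₁ ht₁0 i j).mul_const (v₀ j)).const_mul (v₀ i)
        simpa only [dotProduct, Matrix.mulVec] using h1
      have hexp : HasDerivWithinAt (fun s => δ * Real.exp s) (δ * Real.exp t₁)
          (Set.Ici (0:ℝ)) t₁ :=
        ((Real.hasDerivAt_exp t₁).hasDerivWithinAt).const_mul δ
      exact (hq.sub_const μ).add hexp
    have hgt₁ : g t₁ = 0 :=
      le_antisymm hv₀le (hFt₁nonneg v₀ hv₀S)
    have hmin : ∀ s ∈ Set.Icc (0:ℝ) t₁, g t₁ ≤ g s := by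
      intro s hs
      rcases lt_or_eq_of_le hs.2 with h | h
      · rw [hgt₁]; exact (hbefore s hs.1 h v₀ hv₀S).le
      · rw [h]
    have hnonpos := OjaAux.slope_nonpos ht₁pos
      (hg.mono Set.Icc_subset_Ici_self) hmin
    -- but the derivative is positive
    have hQv₀ : v₀ ⬝ᵥ (Q t₁ *ᵥ v₀)
        = ε⁻¹ * (lam * (v₀ ⬝ᵥ ((Sm t₁ + (Sm t₁)ᵀ) *ᵥ v₀))) := by
      rw [hQdef]
      simp only [Matrix.smul_mulVec, dotProduct_smul, smul_eq_mul]
      congr 1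
      rw [Matrix.add_mulVec, dotProduct_add, ← Matrix.mulVec_mulVec, ← Matrix.mulVec_mulVec,
        hMv₀]
      have hterm1 : v₀ ⬝ᵥ ((Sm t₁)ᵀ *ᵥ (lam • v₀)) = lam * (v₀ ⬝ᵥ ((Sm t₁)ᵀ *ᵥ v₀)) := by
        rw [Matrix.mulVec_smul, dotProduct_smul, smul_eq_mul]
      have hterm2 : v₀ ⬝ᵥ (Mm t₁ *ᵥ (Sm t₁ *ᵥ v₀)) = lam * (v₀ ⬝ᵥ (Sm t₁ *ᵥ v₀)) := by
        rw [Matrix.dotProduct_mulVec v₀ (Mm t₁), ← Matrix.mulVec_transpose, hMsym, hMv₀,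
          smul_dotProduct, smul_eq_mul]
      rw [hterm1, hterm2, Matrix.add_mulVec, dotProduct_add]
      ring
    have hSnn : 0 ≤ v₀ ⬝ᵥ ((Sm t₁ + (Sm t₁)ᵀ) *ᵥ v₀) := by
      rw [hSquad]
      nlinarith [hαB (U t₁ *ᵥ v₀), OjaAux.dot_self_nonneg (U t₁ *ᵥ v₀)]
    have hlampos : 0 < lam := by
      have := Real.exp_pos t₁
      rw [hlam]
      have h2 : μ ≤ 2⁻¹ := hμhalf
      nlinarith
    have hQnn : 0 ≤ v₀ ⬝ᵥ (Q t₁ *ᵥ v₀) := by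
      rw [hQv₀]
      have : (0:ℝ) < ε⁻¹ := inv_pos.mpr hε
      positivity
    have : 0 < δ * Real.exp t₁ := by positivity
    linarith
  -- uniform coercivity of the Gram matrix
  have hlow : ∀ t ∈ Set.Ici (0:ℝ), ∀ v : Fin r → ℝ, μ * (v ⬝ᵥ v) ≤ v ⬝ᵥ (P t *ᵥ v) := by
    intro t ht v
    rcases eq_or_ne v 0 with rfl | hv
    · simp
    · have hvv : 0 < v ⬝ᵥ v := OjaAux.dot_self_pos hv
      set c : ℝ := Real.sqrt (v ⬝ᵥ v) with hc
      have hcpos : 0 < c := Real.sqrt_pos.mpr hvv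
      have hc2 : c * c = v ⬝ᵥ v := Real.mul_self_sqrt hvv.le
      have hyunit : (c⁻¹ • v) ⬝ᵥ (c⁻¹ • v) = 1 := by
        rw [smul_dotProduct, dotProduct_smul, smul_eq_mul, smul_eq_mul, ← mul_assoc,
          ← mul_inv, hc2]
        field_simp
      have hyval : (c⁻¹ • v) ⬝ᵥ (P t *ᵥ (c⁻¹ • v)) = c⁻¹ * c⁻¹ * (v ⬝ᵥ (P t *ᵥ v)) := by
        rw [Matrix.mulVec_smul, smul_dotProduct, dotProduct_smul, smul_eq_mul, smul_eq_mul,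
          mul_assoc]
      have hyP : μ ≤ (c⁻¹ • v) ⬝ᵥ (P t *ᵥ (c⁻¹ • v)) := by
        by_contra hlt
        push_neg at hlt
        set gap : ℝ := μ - (c⁻¹ • v) ⬝ᵥ (P t *ᵥ (c⁻¹ • v)) with hgap
        have hgappos : 0 < gap := by rw [hgap]; linarith
        have hd := hdelta (gap / (2 * Real.exp t)) (by positivity) t ht (c⁻¹ • v) hyunit
        rw [div_mul_eq_mul_div, mul_comm (2:ℝ) (Real.exp t), ← div_div,
          mul_div_assoc] at hd
        rw [div_self (ne_of_gt (Real.exp_pos t))] at hd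
        rw [hgap] at hd
        nlinarith [hd]
      rw [hyval] at hyP
      have h3 := mul_le_mul_of_nonneg_right hyP (mul_self_nonneg c)
      have h4 : c⁻¹ * c⁻¹ * (v ⬝ᵥ (P t *ᵥ v)) * (c * c) = v ⬝ᵥ (P t *ᵥ v) := by
        field_simp
      rw [h4, hc2] at h3
      linarith
  -- coercivity of the symmetrized S
  have hSlow : ∀ t ∈ Set.Ici (0:ℝ), ∀ x : Fin r → ℝ,
      2 * α * μ * (x ⬝ᵥ x) ≤ x ⬝ᵥ ((Sm t + (Sm t)ᵀ) *ᵥ x) := by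
    intro t ht x
    rw [hSquad t x]
    have h1 := hαB (U t *ᵥ x)
    have h2 := hlow t ht x
    rw [hPquad t x] at h2
    nlinarith
  -- the Lyapunov function
  set V : ℝ → ℝ := fun t => ∑ i, ∑ j, (Mm t i j)^2 with hVdef
  set k : ℝ := 4 * α * μ / ε with hkdef
  have hkpos : 0 < k := by positivity
  have hVnonneg : ∀ t, 0 ≤ V t :=
    fun t => Finset.sum_nonneg fun i _ => Finset.sum_nonneg fun j _ => sq_nonneg _
  have hVderiv : ∀ t ∈ Set.Ici (0:ℝ),
      HasDerivWithinAt V (-2 * ∑ i, ∑ j, Mm t i j * Q t i j) (Set.Ici (0:ℝ)) t := by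
    intro t ht
    have hMij : ∀ i j, HasDerivWithinAt (fun s => Mm s i j) (-(Q t i j)) (Set.Ici (0:ℝ)) t := by
      intro i j
      have h := (hasDerivWithinAt_const t (Set.Ici (0:ℝ))
        ((1 : Matrix (Fin r) (Fin r) ℝ) i j)).fun_sub (hPderiv t ht i j)
      simpa [hMmdef, Matrix.sub_apply] using h
    have h1 : HasDerivWithinAt V
        (∑ i, ∑ j, ((2:ℕ) * Mm t i j ^ 1 * (-(Q t i j)))) (Set.Ici (0:ℝ)) t :=
      HasDerivWithinAt.fun_sum fun i _ => HasDerivWithinAt.fun_sum fun j _ => (hMij i j).fun_pow 2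
    have h2 : (∑ i, ∑ j, ((2:ℕ) * Mm t i j ^ 1 * (-(Q t i j))))
        = -2 * ∑ i, ∑ j, Mm t i j * Q t i j := by
      rw [Finset.mul_sum]
      refine Finset.sum_congr rfl fun i _ => ?_
      rw [Finset.mul_sum]
      exact Finset.sum_congr rfl fun j _ => by push_cast; ring
    rw [← h2]
    exact h1
  have hVbound : ∀ t ∈ Set.Ici (0:ℝ),
      -2 * (∑ i, ∑ j, Mm t i j * Q t i j) ≤ -k * V t := by
    intro t ht
    have hsq := OjaAux.sum_quad (Mm t) (Sm t) (hMsym t)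
    have h1 : (∑ i, ∑ j, Mm t i j * Q t i j)
        = ε⁻¹ * ∑ i, ∑ j, Mm t i j * (((Sm t)ᵀ * Mm t + Mm t * Sm t) i j) := by
      simp only [hQdef, Matrix.smul_apply, smul_eq_mul, Finset.mul_sum]
      exact Finset.sum_congr rfl fun i _ => Finset.sum_congr rfl fun j _ => by ring
    have h3 : (∑ i, ((fun j => Mm t i j) ⬝ᵥ (fun j => Mm t i j))) = V t := by
      simp only [hVdef, dotProduct]
      exact Finset.sum_congr rfl fun i _ => Finset.sum_congr rfl fun j _ => (sq _).symm
    have h4 : 2 * α * μ * V t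
        ≤ ∑ i, (fun j => Mm t i j) ⬝ᵥ ((Sm t + (Sm t)ᵀ) *ᵥ (fun j => Mm t i j)) := by
      rw [← h3, Finset.mul_sum]
      exact Finset.sum_le_sum fun i _ => hSlow t ht _
    rw [h1, hsq]
    have hεinv : (0:ℝ) < ε⁻¹ := inv_pos.mpr hε
    have h5 := mul_le_mul_of_nonneg_left h4 hεinv.le
    have h6 : -k * V t = -2 * (ε⁻¹ * (2 * α * μ * V t)) := by
      rw [hkdef, div_eq_mul_inv]; ring
    rw [h6]
    nlinarith [h5]
  have hVcont : ContinuousOn V (Set.Ici (0:ℝ)) :=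
    fun t ht => ((hVderiv t ht).continuousWithinAt)
  -- Gronwall
  have hVexp : ∀ t ∈ Set.Ici (0:ℝ), V t ≤ V 0 * Real.exp (-k * t) := by
    have hganti : AntitoneOn (fun s => V s * Real.exp (k * s)) (Set.Ici (0:ℝ)) := by
      refine antitoneOn_of_hasDerivWithinAt_nonpos (convex_Ici 0)
        (hVcont.mul ((Real.continuous_exp.comp (continuous_const.mul continuous_id)).continuousOn))
        (f' := fun s => (-2 * ∑ i, ∑ j, Mm s i j * Q s i j) * Real.exp (k * s)
          + V s * (Real.exp (k * s) * k)) ?_ ?_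
      · intro x hx
        rw [interior_Ici] at hx
        have hexp : HasDerivAt (fun s => Real.exp (k * s)) (Real.exp (k * x) * k) x := by
          simpa [Function.comp_def] using (Real.hasDerivAt_exp (k * x)).comp x ((hasDerivAt_id x).const_mul k)
        rw [interior_Ici]
        exact ((hVderiv x (Set.mem_Ici.mpr (le_of_lt hx))).mono Ioi_subset_Ici_self).fun_mul
          (hexp.hasDerivWithinAt.mono (Set.subset_univ _))
      · intro x hx
        rw [interior_Ici] at hx
        beta_reduce
        have hb := hVbound x (Set.mem_Ici.mpr (le_of_lt hx))
        have he := Real.exp_pos (k * x)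
        have h7 := mul_le_mul_of_nonneg_right hb he.le
        have h8 : -k * V x * Real.exp (k * x) + V x * (Real.exp (k * x) * k) = 0 := by ring
        nlinarith [h7, h8]
    intro t ht
    have h5 : V t * Real.exp (k * t) ≤ V 0 := by
      have := hganti (Set.self_mem_Ici) ht ht
      simpa using this
    have h6 := mul_le_mul_of_nonneg_right h5 (Real.exp_pos (-(k * t))).le
    rw [mul_assoc, ← Real.exp_add] at h6
    simp only [add_neg_cancel, Real.exp_zero, mul_one] at h6
    rw [neg_mul] at *
    exact h6
  -- conclusion
  have hexp0 : Filter.Tendsto (fun t => Real.sqrt (V 0) * Real.exp (-k * t / 2))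
      Filter.atTop (nhds 0) := by
    have hlin : Filter.Tendsto (fun t : ℝ => -k * t / 2) Filter.atTop Filter.atBot := by
      have : Filter.Tendsto (fun t : ℝ => t * (-k / 2)) Filter.atTop Filter.atBot :=
        Filter.Tendsto.atTop_mul_const_of_neg (by linarith) Filter.tendsto_id
      refine this.congr fun t => by ring
    have := Real.tendsto_exp_atBot.comp hlin
    simpa using Filter.Tendsto.const_mul (Real.sqrt (V 0)) this
  have hMten : ∀ i j, Filter.Tendsto (fun t => Mm t i j) Filter.atTop (nhds 0) := by
    intro i j
    apply squeeze_zero_norm' ?_ hexp0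
    filter_upwards [Filter.eventually_ge_atTop (0:ℝ)] with t ht
    have h1 : (Mm t i j)^2 ≤ V t := by
      calc (Mm t i j)^2 ≤ ∑ j', (Mm t i j')^2 :=
            Finset.single_le_sum (f := fun j' => (Mm t i j')^2)
              (fun j' _ => sq_nonneg _) (Finset.mem_univ j)
        _ ≤ V t := Finset.single_le_sum (f := fun i' => ∑ j', (Mm t i' j')^2)
              (fun i' _ => Finset.sum_nonneg fun j' _ => sq_nonneg _) (Finset.mem_univ i)
    have h2 : (Mm t i j)^2 ≤ V 0 * Real.exp (-k * t) := h1.trans (hVexp t ht)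
    have hee : Real.exp (-k * t) = Real.exp (-k * t / 2) * Real.exp (-k * t / 2) := by
      rw [← Real.exp_add]; ring_nf
    calc ‖Mm t i j‖ = Real.sqrt ((Mm t i j)^2) := by
          rw [Real.sqrt_sq_eq_abs, Real.norm_eq_abs]
      _ ≤ Real.sqrt (V 0 * Real.exp (-k * t)) := Real.sqrt_le_sqrt h2
      _ = Real.sqrt (V 0) * Real.exp (-k * t / 2) := by
          rw [hee, Real.sqrt_mul (hVnonneg 0), Real.sqrt_mul_self (Real.exp_pos _).le]
  apply tendsto_pi_nhds.mpr
  intro i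
  rw [tendsto_pi_nhds]
  intro j
  have hPM : ∀ t, P t i j = (1 : Matrix (Fin r) (Fin r) ℝ) i j - Mm t i j := by
    intro t
    simp [hMmdef, Matrix.sub_apply]
  have h9 := Filter.Tendsto.sub
    (tendsto_const_nhds (x := (1 : Matrix (Fin r) (Fin r) ℝ) i j) (f := Filter.atTop)) (hMten i j)
  rw [sub_zero] at h9
  exact h9.congr fun t => (hPM t).symm
end

section
/- Let A ∈ ℝ^{n×n} with A_sym := (A+Aᵀ)/2 positive definite, let ε > 0, and let U : ℝ → ℝ^{n×r} be differentiable on [0,∞), satisfy the Oja flow ε·(d/dt)U(t) = (I_n − U(t)U(t)ᵀ)·A·U(t) for all t ≥ 0, and have U(0) of full column rank r. Let μ := min(1, λ_min(U(0)ᵀU(0))), where λ_min denotes the smallest eigenvalue of a symmetric matrix. Then for every t ≥ 0 the matrix U(t)ᵀU(t) − μ·I_r is positive semidefinite (equivalently, the smallest singular value of U(t) is at least min(1, σ_r(0)) where σ_r(0) is the smallest singular value of U(0)). -/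
open Matrix Set
open scoped NNReal

section Helpers

lemma hasDerivWithinAt_singleton' {E : Type*} [NormedAddCommGroup E] [NormedSpace ℝ E]
    (f : ℝ → E) (d : E) (x : ℝ) : HasDerivWithinAt f d {x} x := by
  rw [hasDerivWithinAt_iff_isLittleO, nhdsWithin_singleton]
  simp [Asymptotics.isLittleO_pure]

lemma global_linear_ode_exists {E : Type*} [NormedAddCommGroup E] [NormedSpace ℝ E]
    [CompleteSpace E] (v : ℝ → E → E) (a b : ℝ) (hab : a ≤ b) (L : ℝ≥0)
    (hlip : ∀ t ∈ Icc a b, LipschitzWith L (v t))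
    (hcont : ∀ x, ContinuousOn (fun t => v t x) (Icc a b))
    (hv0 : ∀ t ∈ Icc a b, v t 0 = 0) (x₀ : E) :
    ∃ f : ℝ → E, f a = x₀ ∧ ∀ t ∈ Icc a b, HasDerivWithinAt f (v t (f t)) (Icc a b) t := by
  set h : ℝ := (2 * (L : ℝ) + 1)⁻¹ with hh
  have hhpos : 0 < h := by positivity
  have key : ∀ N : ℕ, ∃ f : ℝ → E, f a = x₀ ∧ ∀ t ∈ Icc a (min b (a + N * h)),
      HasDerivWithinAt f (v t (f t)) (Icc a (min b (a + N * h))) t := by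
    intro N
    induction N with
    | zero =>
      refine ⟨fun _ => x₀, rfl, ?_⟩
      have hmin : min b (a + (0:ℕ) * h) = a := by norm_num [min_eq_right hab]
      rw [hmin]
      intro t ht
      rw [Icc_self] at ht
      rw [Icc_self, ht]
      exact hasDerivWithinAt_singleton' _ _ _
    | succ N ih =>
      obtain ⟨f, hfa, hf⟩ := ih
      set c : ℝ := min b (a + N * h) with hc
      set c' : ℝ := min b (a + (N + 1 : ℕ) * h) with hc'
      have hac : a ≤ c := le_min hab (by nlinarith [Nat.cast_nonneg (α := ℝ) N, hhpos])
      have hcc' : c ≤ c' := by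
        apply le_min (min_le_left _ _)
        refine (min_le_right _ _).trans ?_
        have : (N : ℝ) * h ≤ (N + 1 : ℕ) * h := by push_cast; nlinarith
        linarith
      have hc'b : c' ≤ b := min_le_left _ _
      set R : ℝ := 2 * ‖f c‖ + 1 with hR
      set C : ℝ := (L : ℝ) * (3 * ‖f c‖ + 1) with hC
      have hL0 : (0:ℝ) ≤ L := L.coe_nonneg
      have hsub : Icc c c' ⊆ Icc a b := Icc_subset_Icc hac hc'b
      have hR0 : 0 ≤ R := by positivity
      have hC0 : 0 ≤ C := by positivity
      have hpl : IsPicardLindelof v (tmin := c) (tmax := c') ⟨c, le_rfl, hcc'⟩ (f c)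
          ⟨R, hR0⟩ 0 ⟨C, hC0⟩ L := by
        refine ⟨?_, ?_, ?_, ?_⟩
        · exact fun t ht => LipschitzWith.lipschitzOnWith (hlip t (hsub ht))
        · exact fun x _ => (hcont x).mono hsub
        · intro t ht x hx
          show ‖v t x‖ ≤ C
          have h1 : ‖v t x‖ ≤ (L : ℝ) * ‖x‖ := by
            have := (hlip t (hsub ht)).dist_le_mul x 0
            simpa [hv0 t (hsub ht), dist_eq_norm] using this
          refine h1.trans ?_
          have hxn : ‖x‖ ≤ 3 * ‖f c‖ + 1 := by
            have h2 : ‖x - f c‖ ≤ R := mem_closedBall_iff_norm.mp hx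
            have h3 := norm_sub_norm_le x (f c)
            rw [hR] at h2; linarith
          rw [hC]
          nlinarith [norm_nonneg (f c)]
        · show C * max (c' - c) (c - c) ≤ R - 0
          rw [sub_zero]
          have hmax : max (c' - c) (c - c) = c' - c := by
            rw [max_eq_left]; linarith
          rw [hmax]
          have h2 : c' - c ≤ h := by
            have h4 : c' ≤ a + (N+1:ℕ) * h := min_le_right _ _
            have h3 : c = b ∨ c = a + N * h :=
              (min_cases b (a + N*h)).imp (fun h => h.1) (fun h => h.1)
            rcases h3 with h3 | h3
            · push_cast at h4 ⊢; nlinarith [hc'b, hhpos]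
            · push_cast at h4 ⊢; nlinarith
          have hcc'0 : 0 ≤ c' - c := by linarith
          calc C * (c' - c) ≤ C * h :=
                mul_le_mul_of_nonneg_left h2 (by positivity)
            _ ≤ R := by
                rw [hC, hR, hh, ← div_eq_mul_inv, div_le_iff₀ (by positivity)]
                nlinarith [norm_nonneg (f c)]
      obtain ⟨g, hgc, hg⟩ := hpl.exists_eq_forall_mem_Icc_hasDerivWithinAt₀
      have hgc : g c = f c := hgc
      refine ⟨fun t => if t ≤ c then f t else g t, by simp [hfa, hac], ?_⟩
      have hicc : Icc a c ∪ Icc c c' = Icc a c' := Icc_union_Icc_eq_Icc hac hcc'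
      intro t ht
      rw [← hicc]
      have hFg : ∀ τ ∈ Icc c c', (if τ ≤ c then f τ else g τ) = g τ := by
        intro τ hτ
        rcases lt_or_ge c τ with h' | h'
        · rw [if_neg (not_le.mpr h')]
        · have : τ = c := le_antisymm h' hτ.1
          rw [this, if_pos le_rfl, hgc]
      have hFf : ∀ τ ∈ Icc a c, (if τ ≤ c then f τ else g τ) = f τ := fun τ hτ => if_pos hτ.2
      apply HasDerivWithinAt.union
      · rcases le_or_gt t c with htc | htc
        · have htm : t ∈ Icc a c := by
            rw [← hicc] at ht
            rcases ht with h' | h'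
            · exact h'
            · exact ⟨hac.trans h'.1, htc⟩
          show HasDerivWithinAt _ (v t (if t ≤ c then f t else g t)) (Icc a c) t
          rw [if_pos htc]
          exact (hf t htm).congr hFf (hFf t htm)
        · exact HasFDerivWithinAt.of_notMem_closure (by
            rw [closure_Icc]; exact fun hmem => absurd hmem.2 (not_le.mpr htc))
      · rcases le_or_gt c t with htc | htc
        · have htm : t ∈ Icc c c' := by
            rw [← hicc] at ht
            rcases ht with h' | h'
            · exact ⟨htc, h'.2.trans hcc'⟩
            · exact h'
          show HasDerivWithinAt _ (v t (if t ≤ c then f t else g t)) (Icc c c') t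
          rw [hFg t htm]
          exact (hg t htm).congr hFg (hFg t htm)
        · exact HasFDerivWithinAt.of_notMem_closure (by
            rw [closure_Icc]; exact fun hmem => absurd hmem.1 (not_le.mpr htc))
  obtain ⟨N, hN⟩ := exists_nat_ge ((b - a) / h)
  obtain ⟨f, hfa, hf⟩ := key N
  have hmin : min b (a + N * h) = b := by
    rw [min_eq_left]
    rw [div_le_iff₀ hhpos] at hN
    linarith
  rw [hmin] at hf
  exact ⟨f, hfa, hf⟩

def MatDeriv {m n : Type*} (s : Set ℝ) (t : ℝ) (M : ℝ → Matrix m n ℝ) (M' : Matrix m n ℝ) : Prop :=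
  ∀ i j, HasDerivWithinAt (fun τ => M τ i j) (M' i j) s t

lemma MatDeriv.mul {m n p : Type*} [Fintype n] {s t} {M : ℝ → Matrix m n ℝ}
    {N : ℝ → Matrix n p ℝ} {M' N'} (hM : MatDeriv s t M M') (hN : MatDeriv s t N N') :
    MatDeriv s t (fun τ => M τ * N τ) (M' * N t + M t * N') := by
  intro i j
  have hrw : ∀ τ, (M τ * N τ) i j = ∑ k, M τ i k * N τ k j := fun τ => Matrix.mul_apply
  simp only [hrw]
  have h : HasDerivWithinAt (fun τ => ∑ k, M τ i k * N τ k j)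
      (∑ k, (M' i k * N t k j + M t i k * N' k j)) s t :=
    HasDerivWithinAt.fun_sum fun k _ => (hM i k).mul (hN k j)
  simpa [Matrix.add_apply, Matrix.mul_apply, Finset.sum_add_distrib] using h

lemma MatDeriv.transpose {m n : Type*} {s t} {M : ℝ → Matrix m n ℝ} {M'}
    (hM : MatDeriv s t M M') : MatDeriv s t (fun τ => (M τ)ᵀ) M'ᵀ :=
  fun i j => hM j i

lemma MatDeriv.sub_const {m n : Type*} {s t} {M : ℝ → Matrix m n ℝ} {M'} (C : Matrix m n ℝ)
    (hM : MatDeriv s t M M') : MatDeriv s t (fun τ => M τ - C) M' := by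
  intro i j
  simpa using (hM i j).sub_const (C i j)

lemma key_identity {N R : Type*} [Fintype N] [Fintype R] [DecidableEq N] [DecidableEq R]
    (A : Matrix N N ℝ) (U : Matrix N R ℝ) (Y : Matrix R Unit ℝ) (c μ : ℝ) :
    (c • ((Uᵀ * A * U) * Y))ᵀ * ((Uᵀ * U - μ • 1) * Y)
      + Yᵀ * (((c • ((1 - U * Uᵀ) * A * U))ᵀ * U + Uᵀ * (c • ((1 - U * Uᵀ) * A * U))) * Y
          + (Uᵀ * U - μ • 1) * (c • ((Uᵀ * A * U) * Y)))
      = ((1 - μ) * c) • (Yᵀ * ((Uᵀ * A * U + (Uᵀ * A * U)ᵀ) * Y)) := by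
  simp only [Matrix.transpose_smul, Matrix.transpose_mul, Matrix.transpose_one,
    Matrix.transpose_sub, Matrix.transpose_transpose, Matrix.smul_mul, Matrix.mul_smul,
    Matrix.sub_mul, Matrix.mul_sub, Matrix.add_mul, Matrix.mul_add, Matrix.one_mul,
    Matrix.mul_one, smul_sub, smul_add, smul_smul, Matrix.mul_assoc, sub_smul, one_smul]
  module

lemma sub_smul_one_posSemidef {R : Type*} [Fintype R] [DecidableEq R] {B : Matrix R R ℝ}
    (hB : B.IsHermitian) {μ : ℝ} (hμ : ∀ i, μ ≤ hB.eigenvalues i) :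
    (B - μ • 1).PosSemidef := by
  set V : Matrix R R ℝ := (hB.eigenvectorUnitary : Matrix R R ℝ) with hV
  have hVV : V * star V = 1 := (Matrix.mem_unitaryGroup_iff).mp hB.eigenvectorUnitary.2
  have hdiag : (RCLike.ofReal ∘ hB.eigenvalues : R → ℝ) = hB.eigenvalues := by
    funext i; simp [RCLike.ofReal]
  have heq : B - μ • 1 = V * Matrix.diagonal (fun i => hB.eigenvalues i - μ) * Vᴴ := by
    have hs := hB.spectral_theorem
    rw [Unitary.conjStarAlgAut_apply] at hs
    rw [← Matrix.star_eq_conjTranspose]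
    have h2 : Matrix.diagonal (fun i => hB.eigenvalues i - μ)
        = Matrix.diagonal hB.eigenvalues - μ • 1 := by
      rw [Matrix.smul_one_eq_diagonal, ← Matrix.diagonal_sub]
    rw [h2, Matrix.mul_sub, Matrix.sub_mul, ← hdiag, ← hs]
    congr 1
    rw [Matrix.mul_smul, Matrix.smul_mul, Matrix.mul_one, hVV]
  rw [heq]
  exact (Matrix.PosSemidef.diagonal fun i => sub_nonneg.mpr (hμ i)).mul_mul_conjTranspose_same V

lemma quad_entry {R : Type*} [Fintype R] (B : Matrix R R ℝ) (Y : Matrix R Unit ℝ) :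
    (Yᵀ * (B * Y)) () () = (fun i => Y i ()) ⬝ᵥ (B *ᵥ (fun i => Y i ())) := by
  simp [Matrix.mul_apply, dotProduct, mulVec, Finset.mul_sum]

lemma conj_quad_nonneg {N R : Type*} [Fintype N] [Fintype R] {A : Matrix N N ℝ}
    (hA : (((2:ℝ)⁻¹) • (A + Aᵀ)).PosDef) (U : Matrix N R ℝ) (y : R → ℝ) :
    0 ≤ y ⬝ᵥ ((Uᵀ * A * U + (Uᵀ * A * U)ᵀ) *ᵥ y) := by
  have h1 : Uᵀ * A * U + (Uᵀ * A * U)ᵀ = Uᵀ * (A + Aᵀ) * U := by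
    simp [Matrix.transpose_mul, Matrix.mul_add, Matrix.add_mul, Matrix.mul_assoc]
  rw [h1]
  have h2 : y ⬝ᵥ ((Uᵀ * (A + Aᵀ) * U) *ᵥ y) = (U *ᵥ y) ⬝ᵥ ((A + Aᵀ) *ᵥ (U *ᵥ y)) := by
    rw [← Matrix.mulVec_mulVec, ← Matrix.mulVec_mulVec, Matrix.dotProduct_mulVec (A := Uᵀ),
      Matrix.vecMul_transpose]
  rw [h2]
  have h3 := hA.posSemidef.dotProduct_mulVec_nonneg (U *ᵥ y)
  rw [star_trivial] at h3
  rw [Matrix.smul_mulVec, dotProduct_smul, smul_eq_mul] at h3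
  linarith

end Helpers

/-- Under the Oja flow with positive-definite symmetric part of `A`
and full-column-rank initial value, with `μ := min(1, λ_min(U(0)ᵀU(0)))`, the matrix
`U(t)ᵀU(t) − μ·I_r` is positive semidefinite for all `t ≥ 0` (equivalently, the
smallest singular value of `U(t)` stays at least `min(1, σ_r(0))`). -/
theorem oja_flow_smallest_singular_value_bound
    (n r : ℕ) (hr : 1 ≤ r) (hrn : r ≤ n)
    (A : Matrix (Fin n) (Fin n) ℝ)
    (hA : (((2:ℝ)⁻¹) • (A + Aᵀ)).PosDef)
    (ε : ℝ) (hε : 0 < ε)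
    (U U' : ℝ → Matrix (Fin n) (Fin r) ℝ)
    (hderiv : ∀ t ∈ Set.Ici (0:ℝ), ∀ i j,
      HasDerivWithinAt (fun s => U s i j) (U' t i j) (Set.Ici (0:ℝ)) t)
    (hode : ∀ t ∈ Set.Ici (0:ℝ),
      ε • U' t = (1 - U t * (U t)ᵀ) * A * U t)
    (hrank0 : (U 0).rank = r)
    (μ : ℝ)
    (hμ : μ = min 1 (⨅ i,
      ((Matrix.conjTranspose_eq_transpose_of_trivial (U 0)) ▸
        Matrix.isHermitian_conjTranspose_mul_self (U 0)).eigenvalues i)) :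
    ∀ t ∈ Set.Ici (0:ℝ),
      ((U t)ᵀ * U t - μ • (1 : Matrix (Fin r) (Fin r) ℝ)).PosSemidef := by
  intro t₁ ht₁
  rw [Set.mem_Ici] at ht₁
  have hμ1 : μ ≤ 1 := hμ ▸ min_le_left _ _
  have hμeig : ∀ i, μ ≤ ((Matrix.conjTranspose_eq_transpose_of_trivial (U 0)) ▸
      Matrix.isHermitian_conjTranspose_mul_self (U 0)).eigenvalues i := by
    intro i
    rw [hμ]
    exact (min_le_right _ _).trans (ciInf_le (Set.Finite.bddBelow (Set.finite_range _)) i)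
  have hW0 : ((U 0)ᵀ * U 0 - μ • 1).PosSemidef := sub_smul_one_posSemidef _ hμeig
  -- Hermitian part
  have hherm : ((U t₁)ᵀ * U t₁ - μ • (1 : Matrix (Fin r) (Fin r) ℝ)).IsHermitian := by
    have h1 : ((U t₁)ᵀ * U t₁).IsHermitian :=
      (Matrix.conjTranspose_eq_transpose_of_trivial (U t₁)) ▸
        Matrix.isHermitian_conjTranspose_mul_self (U t₁)
    have h2 : (μ • (1 : Matrix (Fin r) (Fin r) ℝ)).IsHermitian := by
      rw [Matrix.smul_one_eq_diagonal]
      exact Matrix.isHermitian_diagonal _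
    exact h1.sub h2
  refine PosSemidef.of_dotProduct_mulVec_nonneg hherm ?_
  intro x
  rw [star_trivial]
  -- abbreviations
  set Q : ℝ → Matrix (Fin r) (Fin r) ℝ := fun τ => (U τ)ᵀ * A * U τ with hQdef
  -- continuity of U and Q entries
  have hUc : ∀ i j, ContinuousOn (fun τ => U τ i j) (Set.Ici (0:ℝ)) :=
    fun i j τ hτ => (hderiv τ hτ i j).continuousWithinAt
  have hQc : ∀ i j, ContinuousOn (fun τ => Q τ i j) (Set.Ici (0:ℝ)) := by
    intro i j
    simp only [hQdef, Matrix.mul_apply, Matrix.transpose_apply]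
    exact continuousOn_finset_sum _ fun l _ =>
      (continuousOn_finset_sum _ fun k _ => (hUc k i).mul continuousOn_const).mul (hUc l j)
  -- uniform bound on Q over [0, t₁]
  obtain ⟨K, hK⟩ := (isCompact_Icc (a := (0:ℝ)) (b := t₁)).exists_bound_of_continuousOn
    (f := fun τ => (fun p : Fin r × Fin r => Q τ p.1 p.2))
    (continuousOn_pi.mpr fun p => (hQc p.1 p.2).mono Icc_subset_Ici_self)
  set K' : ℝ := max K 0 with hK'def
  have hK'0 : 0 ≤ K' := le_max_right _ _
  have hQb : ∀ τ ∈ Icc (0:ℝ) t₁, ∀ i j, |Q τ i j| ≤ K' := by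
    intro τ hτ i j
    calc |Q τ i j| = ‖(fun p : Fin r × Fin r => Q τ p.1 p.2) (i, j)‖ := by
          simp [Real.norm_eq_abs]
      _ ≤ ‖(fun p : Fin r × Fin r => Q τ p.1 p.2)‖ :=
          norm_le_pi_norm (G := fun _ : Fin r × Fin r => ℝ) (fun p => Q τ p.1 p.2) (i, j)
      _ ≤ K := hK τ hτ
      _ ≤ K' := le_max_left _ _
  set Lr : ℝ := ε⁻¹ * (r * K') with hLrdef
  have hLr0 : 0 ≤ Lr := by positivity
  set L : ℝ≥0 := ⟨Lr, hLr0⟩ with hLdef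
  -- the backward vector field
  set v : ℝ → (Fin r → ℝ) → (Fin r → ℝ) := fun s z => (-ε⁻¹) • ((Q (t₁ - s)) *ᵥ z) with hvdef
  have hvlin : ∀ s, ∀ z w : Fin r → ℝ, v s z - v s w = v s (z - w) := by
    intro s z w
    simp only [hvdef, Matrix.mulVec_sub, smul_sub, neg_smul, neg_sub]
    abel
  have hmv : ∀ s ∈ Icc (0:ℝ) t₁, ∀ z : Fin r → ℝ, ‖v s z‖ ≤ Lr * ‖z‖ := by
    intro s hs z
    have hmem : t₁ - s ∈ Icc (0:ℝ) t₁ := ⟨by linarith [hs.2], by linarith [hs.1]⟩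
    have hb : ‖(Q (t₁ - s)) *ᵥ z‖ ≤ (r * K') * ‖z‖ := by
      rw [pi_norm_le_iff_of_nonneg (by positivity)]
      intro i
      rw [Real.norm_eq_abs]
      calc |((Q (t₁ - s)) *ᵥ z) i| = |∑ j, Q (t₁ - s) i j * z j| := by
            simp [Matrix.mulVec, dotProduct]
        _ ≤ ∑ j, |Q (t₁ - s) i j * z j| := Finset.abs_sum_le_sum_abs _ _
        _ ≤ ∑ _j : Fin r, K' * ‖z‖ := by
            refine Finset.sum_le_sum fun j _ => ?_
            rw [abs_mul]
            exact mul_le_mul (hQb _ hmem i j) ((Real.norm_eq_abs (z j)) ▸ norm_le_pi_norm z j)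
              (abs_nonneg _) hK'0
        _ = (r * K') * ‖z‖ := by simp [Finset.sum_const]; ring
    calc ‖v s z‖ = ε⁻¹ * ‖(Q (t₁ - s)) *ᵥ z‖ := by
          rw [hvdef]
          simp only [norm_smul, norm_neg, Real.norm_eq_abs, abs_inv, abs_of_pos hε]
      _ ≤ ε⁻¹ * ((r * K') * ‖z‖) := by
          apply mul_le_mul_of_nonneg_left hb (by positivity)
      _ = Lr * ‖z‖ := by rw [hLrdef]; ring
  have hlip : ∀ s ∈ Icc (0:ℝ) t₁, LipschitzWith L (v s) := by
    intro s hs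
    apply LipschitzWith.of_dist_le_mul
    intro z w
    rw [dist_eq_norm, dist_eq_norm, hvlin s z w]
    exact hmv s hs (z - w)
  have hvcont : ∀ z, ContinuousOn (fun s => v s z) (Icc (0:ℝ) t₁) := by
    intro z
    apply continuousOn_pi.mpr
    intro i
    have h1 : ∀ s, v s z i = (-ε⁻¹) * ∑ j, Q (t₁ - s) i j * z j := by
      intro s; simp [hvdef, Matrix.mulVec, dotProduct]
    simp only [h1]
    apply ContinuousOn.mul continuousOn_const
    apply continuousOn_finset_sum
    intro j _
    apply ContinuousOn.mul _ continuousOn_const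
    have hmaps : MapsTo (fun s => t₁ - s) (Icc (0:ℝ) t₁) (Set.Ici (0:ℝ)) := by
      intro s hs; simp only [mem_Ici]; linarith [hs.2]
    exact (hQc i j).comp (Continuous.continuousOn (by continuity)) hmaps
  have hv0 : ∀ s ∈ Icc (0:ℝ) t₁, v s 0 = 0 := by
    intro s _; simp [hvdef]
  obtain ⟨w, hw0, hwd⟩ := global_linear_ode_exists v 0 t₁ ht₁ L hlip hvcont hv0 x
  set y : ℝ → Fin r → ℝ := fun τ => w (t₁ - τ) with hydef
  have hyd : ∀ τ ∈ Icc (0:ℝ) t₁, HasDerivWithinAt y (ε⁻¹ • ((Q τ) *ᵥ (y τ))) (Icc 0 t₁) τ := by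
    intro τ hτ
    have h1 : t₁ - τ ∈ Icc (0:ℝ) t₁ := ⟨by linarith [hτ.2], by linarith [hτ.1]⟩
    have h2 := hwd (t₁ - τ) h1
    have h3 : HasDerivWithinAt (fun s : ℝ => t₁ - s) (-1) (Icc (0:ℝ) t₁) τ := by
      simpa using (hasDerivWithinAt_id τ (Icc (0:ℝ) t₁)).const_sub t₁
    have hmaps : MapsTo (fun s : ℝ => t₁ - s) (Icc (0:ℝ) t₁) (Icc (0:ℝ) t₁) := by
      intro s hs
      have hm : t₁ - s ∈ Icc (0:ℝ) t₁ := ⟨by linarith [hs.2], by linarith [hs.1]⟩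
      exact hm
    have h4 := HasDerivWithinAt.scomp τ h2 h3 hmaps
    have h5 : ((-1 : ℝ) • (v (t₁ - τ) (w (t₁ - τ)))) = ε⁻¹ • ((Q τ) *ᵥ (y τ)) := by
      show ((-1 : ℝ) • ((-ε⁻¹) • ((Q (t₁ - (t₁ - τ))) *ᵥ (w (t₁ - τ)))))
        = ε⁻¹ • ((Q τ) *ᵥ (w (t₁ - τ)))
      rw [sub_sub_cancel, smul_smul]
      norm_num
    rw [← h5]
    exact h4
  -- matrices
  set Y : ℝ → Matrix (Fin r) Unit ℝ := fun τ => Matrix.of (fun i _ => y τ i) with hYdef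
  have hyentry : ∀ τ ∈ Icc (0:ℝ) t₁, MatDeriv (Icc 0 t₁) τ Y (ε⁻¹ • ((Q τ) * Y τ)) := by
    intro τ hτ i j
    have h5 := hasDerivWithinAt_pi.mp (hyd τ hτ) i
    have he : (ε⁻¹ • ((Q τ) * Y τ)) i j = (ε⁻¹ • ((Q τ) *ᵥ (y τ))) i := by
      simp [hYdef, Matrix.mul_apply, Matrix.mulVec, dotProduct]
    rw [he]
    exact h5
  have hUd : ∀ τ ∈ Icc (0:ℝ) t₁,
      MatDeriv (Icc 0 t₁) τ U (ε⁻¹ • ((1 - U τ * (U τ)ᵀ) * A * U τ)) := by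
    intro τ hτ i j
    have h1 := (hderiv τ (mem_Ici.mpr hτ.1) i j).mono (Icc_subset_Ici_self : Icc (0:ℝ) t₁ ⊆ Ici 0)
    have he : U' τ = ε⁻¹ • ((1 - U τ * (U τ)ᵀ) * A * U τ) := by
      rw [← hode τ (mem_Ici.mpr hτ.1), inv_smul_smul₀ hε.ne']
    rw [he] at h1
    exact h1
  -- the scalar function and its derivative
  set F : ℝ → ℝ := fun τ =>
    (((Y τ)ᵀ * (((U τ)ᵀ * U τ - μ • 1) * Y τ) : Matrix Unit Unit ℝ)) () () with hFdef
  have hFd : ∀ τ ∈ Icc (0:ℝ) t₁, HasDerivWithinAt F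
      (((((1 - μ) * ε⁻¹) • ((Y τ)ᵀ * ((Q τ + (Q τ)ᵀ) * Y τ)) : Matrix Unit Unit ℝ)) () ())
      (Icc 0 t₁) τ := by
    intro τ hτ
    have hU := hUd τ hτ
    have hY := hyentry τ hτ
    have hWd : MatDeriv (Icc 0 t₁) τ (fun σ => (U σ)ᵀ * U σ - μ • 1)
        ((ε⁻¹ • ((1 - U τ * (U τ)ᵀ) * A * U τ))ᵀ * U τ
          + (U τ)ᵀ * (ε⁻¹ • ((1 - U τ * (U τ)ᵀ) * A * U τ))) :=
      MatDeriv.sub_const _ (hU.transpose.mul hU)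
    have hprod := (hY.transpose).mul (hWd.mul hY)
    have hD := hprod () ()
    have e := key_identity A (U τ) (Y τ) ε⁻¹ μ
    show HasDerivWithinAt F
      (((((1 - μ) * ε⁻¹) • ((Y τ)ᵀ * (((U τ)ᵀ * A * U τ + ((U τ)ᵀ * A * U τ)ᵀ) * Y τ))
        : Matrix Unit Unit ℝ)) () ())
      (Icc 0 t₁) τ
    rw [← e]
    exact hD
  have hG0 : ∀ τ ∈ Icc (0:ℝ) t₁,
      0 ≤ (((((1 - μ) * ε⁻¹) • ((Y τ)ᵀ * ((Q τ + (Q τ)ᵀ) * Y τ)) : Matrix Unit Unit ℝ)) () ()) := by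
    intro τ hτ
    rw [Matrix.smul_apply, smul_eq_mul]
    apply mul_nonneg (mul_nonneg (by linarith) (inv_nonneg.mpr hε.le))
    rw [quad_entry]
    exact conj_quad_nonneg hA (U τ) (fun i => Y τ i ())
  have hFc : ContinuousOn F (Icc (0:ℝ) t₁) := fun τ hτ => (hFd τ hτ).continuousWithinAt
  have hmono : MonotoneOn F (Icc (0:ℝ) t₁) := by
    apply monotoneOn_of_deriv_nonneg (convex_Icc _ _) hFc
    · intro τ hτ
      rw [interior_Icc] at hτ
      exact ((hFd τ (Ioo_subset_Icc_self hτ)).hasDerivAt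
        (Icc_mem_nhds hτ.1 hτ.2)).differentiableAt.differentiableWithinAt
    · intro τ hτ
      rw [interior_Icc] at hτ
      rw [((hFd τ (Ioo_subset_Icc_self hτ)).hasDerivAt (Icc_mem_nhds hτ.1 hτ.2)).deriv]
      exact hG0 τ (Ioo_subset_Icc_self hτ)
  have hF0 : 0 ≤ F 0 := by
    simp only [hFdef]
    rw [quad_entry]
    have h6 := hW0.dotProduct_mulVec_nonneg (fun i => Y 0 i ())
    rwa [star_trivial] at h6
  have hFt : F 0 ≤ F t₁ := hmono ⟨le_rfl, ht₁⟩ ⟨ht₁, le_rfl⟩ ht₁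
  have hyt1 : y t₁ = x := by rw [hydef]; simp [hw0]
  have hYx : (fun i => Y t₁ i ()) = x := by
    funext i
    show y t₁ i = x i
    rw [hyt1]
  have hFt1 : F t₁ = x ⬝ᵥ (((U t₁)ᵀ * U t₁ - μ • 1) *ᵥ x) := by
    simp only [hFdef]
    rw [quad_entry, hYx]
  linarith [hF0, hFt, hFt1.symm.le]
end

section
/- Let A ∈ ℝ^{n×n}, ε > 0, and let U : ℝ → ℝ^{n×r} be differentiable and satisfy the Oja flow ε·(d/dt)U(t) = (I_n − U(t)U(t)ᵀ)·A·U(t) for all t. Then P(t) := U(t)·U(t)ᵀ is differentiable and satisfies the Riccati differential equation ε·(d/dt)P(t) = A·P(t) + P(t)·Aᵀ − P(t)·(A+Aᵀ)·P(t) for all t. -/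
open Matrix

/-- If `U` solves the Oja flow `ε·U'(t) = (Iₙ − U(t)U(t)ᵀ)·A·U(t)` for all `t`,
then `P(t) := U(t)U(t)ᵀ` is differentiable and satisfies the Riccati equation
`ε·P'(t) = A·P(t) + P(t)·Aᵀ − P(t)·(A+Aᵀ)·P(t)` for all `t`. -/
theorem oja_flow_projector_riccati
    (n r : ℕ) (hr : 1 ≤ r) (hrn : r ≤ n)
    (A : Matrix (Fin n) (Fin n) ℝ)
    (ε : ℝ) (hε : 0 < ε)
    (U U' : ℝ → Matrix (Fin n) (Fin r) ℝ)
    (hderiv : ∀ t, ∀ i j, HasDerivAt (fun s => U s i j) (U' t i j) t)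
    (hode : ∀ t, ε • U' t = (1 - U t * (U t)ᵀ) * A * U t) :
    ∃ P' : ℝ → Matrix (Fin n) (Fin n) ℝ,
      (∀ t, ∀ i j, HasDerivAt (fun s => (U s * (U s)ᵀ) i j) (P' t i j) t) ∧
      (∀ t, ε • P' t =
        A * (U t * (U t)ᵀ) + (U t * (U t)ᵀ) * Aᵀ -
          (U t * (U t)ᵀ) * (A + Aᵀ) * (U t * (U t)ᵀ)) := by
  refine ⟨fun t => U' t * (U t)ᵀ + U t * (U' t)ᵀ, ?_, ?_⟩
  · intro t i j
    have : ∀ s, (U s * (U s)ᵀ) i j = ∑ k, U s i k * U s j k := by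
      intro s; simp [Matrix.mul_apply, Matrix.transpose_apply]
    simp only [this]
    have h : HasDerivAt (fun s => ∑ k, U s i k * U s j k)
        (∑ k, (U' t i k * U t j k + U t i k * U' t j k)) t :=
      HasDerivAt.fun_sum fun k _ => (hderiv t i k).mul (hderiv t j k)
    convert h using 1
    simp [Matrix.add_apply, Matrix.mul_apply, Matrix.transpose_apply, Finset.sum_add_distrib]
  · intro t
    have h := hode t
    have h1 : ε • (U' t * (U t)ᵀ + U t * (U' t)ᵀ)
        = (ε • U' t) * (U t)ᵀ + U t * (ε • U' t)ᵀ := by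
      rw [smul_add, Matrix.smul_mul, Matrix.transpose_smul, Matrix.mul_smul]
    rw [h1, h]
    have hTT : ((1 - U t * (U t)ᵀ) * A * U t)ᵀ = (U t)ᵀ * Aᵀ * (1 - U t * (U t)ᵀ) := by
      simp [Matrix.transpose_mul, Matrix.transpose_sub, Matrix.mul_assoc]
    rw [hTT]
    simp only [Matrix.sub_mul, Matrix.mul_sub, Matrix.one_mul, Matrix.mul_one,
      Matrix.add_mul, Matrix.mul_add, Matrix.mul_assoc]
    abel
end

section
/- Let A ∈ ℝ^{n×n}, ε > 0, and let Z₀ ∈ ℝ^{n×r} have full column rank r. Define Z(t) := exp((t/ε)·A)·Z₀. Then for every t ∈ ℝ the matrix Z(t)ᵀZ(t) is invertible, and the orthogonal-projection-valued function P(t) := Z(t)·(Z(t)ᵀZ(t))⁻¹·Z(t)ᵀ is differentiable and satisfies the Riccati differential equation ε·(d/dt)P(t) = A·P(t) + P(t)·Aᵀ − P(t)·(A+Aᵀ)·P(t) for all t. -/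
open Matrix NormedSpace

lemma expEntry (n : ℕ) (A : Matrix (Fin n) (Fin n) ℝ) (t : ℝ) (i j : Fin n) :
    HasDerivAt (fun u : ℝ => exp (u • A) i j) ((A * exp (t • A)) i j) t := by
  letI : SeminormedRing (Matrix (Fin n) (Fin n) ℝ) := Matrix.linftyOpSemiNormedRing
  letI : NormedRing (Matrix (Fin n) (Fin n) ℝ) := Matrix.linftyOpNormedRing
  letI : NormedAlgebra ℝ (Matrix (Fin n) (Fin n) ℝ) := Matrix.linftyOpNormedAlgebra
  have h := hasDerivAt_exp_smul_const' (𝕂 := ℝ) A t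
  let L : Matrix (Fin n) (Fin n) ℝ →ₗ[ℝ] ℝ :=
    { toFun := fun M => M i j, map_add' := fun _ _ => rfl, map_smul' := fun _ _ => rfl }
  have hL := (LinearMap.toContinuousLinearMap L).hasFDerivAt (x := exp (t • A))
  exact (hL.comp_hasDerivAt t h :)

lemma matMulDeriv {m p q : ℕ} {f : ℝ → Matrix (Fin m) (Fin p) ℝ} {g : ℝ → Matrix (Fin p) (Fin q) ℝ}
    {f' : Matrix (Fin m) (Fin p) ℝ} {g' : Matrix (Fin p) (Fin q) ℝ} {t : ℝ}
    (hf : ∀ i j, HasDerivAt (fun s => f s i j) (f' i j) t)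
    (hg : ∀ i j, HasDerivAt (fun s => g s i j) (g' i j) t) :
    ∀ i j, HasDerivAt (fun s => (f s * g s) i j) ((f' * g t + f t * g') i j) t := by
  intro i j
  have h : ∀ s, (f s * g s) i j = ∑ k, f s i k * g s k j := fun s => Matrix.mul_apply
  simp only [h, Matrix.add_apply, Matrix.mul_apply, ← Finset.sum_add_distrib]
  exact HasDerivAt.fun_sum fun k _ => (hf i k).mul (hg k j)

lemma detDiff {p : ℕ} {M : ℝ → Matrix (Fin p) (Fin p) ℝ} {t : ℝ}
    (h : ∀ i j, DifferentiableAt ℝ (fun s => M s i j) t) :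
    DifferentiableAt ℝ (fun s => (M s).det) t := by
  simp only [Matrix.det_apply']
  exact DifferentiableAt.fun_sum fun σ _ =>
    (differentiableAt_const _).mul (DifferentiableAt.fun_finsetProd fun i _ => h _ _)

lemma invDiff {p : ℕ} {M : ℝ → Matrix (Fin p) (Fin p) ℝ} {t : ℝ}
    (h : ∀ i j, DifferentiableAt ℝ (fun s => M s i j) t) (hdet : (M t).det ≠ 0) :
    ∀ i j, DifferentiableAt ℝ (fun s => (M s)⁻¹ i j) t := by
  intro i j
  have hadj : DifferentiableAt ℝ (fun s => (M s).adjugate i j) t := by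
    simp only [Matrix.adjugate_apply]
    refine detDiff fun k l => ?_
    rcases eq_or_ne k j with rfl | hk
    · simp only [Matrix.updateRow_self]
      exact differentiableAt_const _
    · simp only [Matrix.updateRow_ne hk]
      exact h k l
  have heq : ∀ s, (M s)⁻¹ i j = ((M s).det)⁻¹ * (M s).adjugate i j := by
    intro s
    rw [Matrix.inv_def, Matrix.smul_apply, Ring.inverse_eq_inv', smul_eq_mul]
  simp only [heq]
  exact ((detDiff h).inv hdet).mul hadj

/-- For `Z(t) := exp((t/ε)A)·Z₀` with `Z₀` of full column rank,
`Z(t)ᵀZ(t)` is invertible for every `t`, and the projector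
`P(t) := Z(t)(Z(t)ᵀZ(t))⁻¹Z(t)ᵀ` is differentiable and satisfies the Riccati equation
`ε·P'(t) = A·P(t) + P(t)·Aᵀ − P(t)·(A+Aᵀ)·P(t)`. -/
theorem projector_of_linear_flow_satisfies_riccati
    (n r : ℕ) (hr : 1 ≤ r) (hrn : r ≤ n)
    (A : Matrix (Fin n) (Fin n) ℝ)
    (ε : ℝ) (hε : 0 < ε)
    (Z₀ : Matrix (Fin n) (Fin r) ℝ) (hZ₀ : Z₀.rank = r)
    (Z : ℝ → Matrix (Fin n) (Fin r) ℝ)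
    (hZ : ∀ t, Z t = exp ((t / ε) • A) * Z₀)
    (P : ℝ → Matrix (Fin n) (Fin n) ℝ)
    (hP : ∀ t, P t = Z t * ((Z t)ᵀ * Z t)⁻¹ * (Z t)ᵀ) :
    (∀ t : ℝ, IsUnit ((Z t)ᵀ * Z t)) ∧
    ∃ P' : ℝ → Matrix (Fin n) (Fin n) ℝ,
      (∀ t, ∀ i j, HasDerivAt (fun s => P s i j) (P' t i j) t) ∧
      (∀ t, ε • P' t = A * P t + P t * Aᵀ - P t * (A + Aᵀ) * P t) := by
  have hεne : ε ≠ 0 := hε.ne'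
  -- invertibility of the Gram matrix
  have hEunit : ∀ t : ℝ, IsUnit (exp ((t / ε) • A)).det := fun t =>
    (Matrix.isUnit_iff_isUnit_det _).mp (Matrix.isUnit_exp _)
  have hrankZ : ∀ t, (Z t).rank = r := by
    intro t
    rw [hZ t, Matrix.rank_mul_eq_right_of_isUnit_det _ _ (hEunit t), hZ₀]
  have hGunit : ∀ t, IsUnit ((Z t)ᵀ * Z t) := by
    intro t
    rw [← Matrix.mulVec_surjective_iff_isUnit]
    have hrank : ((Z t)ᵀ * Z t).rank = r := by
      rw [Matrix.rank_transpose_mul_self, hrankZ]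
    have htop : LinearMap.range ((Z t)ᵀ * Z t).mulVecLin = ⊤ := by
      apply Submodule.eq_top_of_finrank_eq
      rw [Module.finrank_fintype_fun_eq_card, Fintype.card_fin]
      exact hrank
    exact fun v => LinearMap.range_eq_top.mp htop v
  refine ⟨hGunit, ?_⟩
  have hGdet : ∀ t, IsUnit ((Z t)ᵀ * Z t).det := fun t =>
    (Matrix.isUnit_iff_isUnit_det _).mp (hGunit t)
  -- derivative of Z
  have hZd : ∀ t, ∀ i j, HasDerivAt (fun s => Z s i j) ((ε⁻¹ • (A * Z t)) i j) t := by
    intro t i j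
    have h1 : ∀ i j, HasDerivAt (fun s => exp ((s / ε) • A) i j)
        ((ε⁻¹ • (A * exp ((t / ε) • A))) i j) t := by
      intro i j
      have hdiv : HasDerivAt (fun s : ℝ => s / ε) ε⁻¹ t := by
        simpa using (hasDerivAt_id t).div_const ε
      have h0 := (expEntry n A (t / ε) i j).comp t hdiv
      simpa [Function.comp_def, Matrix.smul_apply, mul_comm] using h0
    have h2 := matMulDeriv (g := fun _ => Z₀) (g' := 0) h1 (fun i j => hasDerivAt_const _ _)
    have hval : ε⁻¹ • (A * exp ((t / ε) • A)) * Z₀ + exp ((t / ε) • A) *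
        (0 : Matrix (Fin n) (Fin r) ℝ) = ε⁻¹ • (A * Z t) := by
      rw [hZ t]
      simp [Matrix.smul_mul, Matrix.mul_assoc]
    have hfun : (fun s => Z s i j) = fun s => (exp ((s / ε) • A) * Z₀) i j := by
      funext s; rw [hZ s]
    rw [hfun]
    have h3 := h2 i j
    rwa [hval] at h3
  have hZTd : ∀ t, ∀ i j, HasDerivAt (fun s => (Z s)ᵀ i j) ((ε⁻¹ • (A * Z t))ᵀ i j) t := by
    intro t i j
    simpa [Matrix.transpose_apply] using hZd t j i
  -- derivative of G = ZᵀZ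
  have hGd : ∀ t, ∀ i j, HasDerivAt (fun s => ((Z s)ᵀ * Z s) i j)
      (((ε⁻¹ • (A * Z t))ᵀ * Z t + (Z t)ᵀ * (ε⁻¹ • (A * Z t))) i j) t := fun t =>
    matMulDeriv (hZTd t) (hZd t)
  -- derivative of Q = G⁻¹
  set Qd : ℝ → Matrix (Fin r) (Fin r) ℝ :=
    fun u => Matrix.of fun i j => deriv (fun s => ((Z s)ᵀ * Z s)⁻¹ i j) u with hQdDef
  have hQd : ∀ t, ∀ i j, HasDerivAt (fun s => ((Z s)ᵀ * Z s)⁻¹ i j) (Qd t i j) t := by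
    intro t i j
    exact (invDiff (fun i j => (hGd t i j).differentiableAt) (hGdet t).ne_zero i j).hasDerivAt
  have hGQ : ∀ s : ℝ, ((Z s)ᵀ * Z s) * ((Z s)ᵀ * Z s)⁻¹ = 1 := fun s =>
    Matrix.mul_nonsing_inv _ (hGdet s)
  have hQG : ∀ s : ℝ, ((Z s)ᵀ * Z s)⁻¹ * ((Z s)ᵀ * Z s) = 1 := fun s =>
    Matrix.nonsing_inv_mul _ (hGdet s)
  have hQdval : ∀ t, Qd t = -((((Z t)ᵀ * Z t)⁻¹ * (ε⁻¹ • (A * Z t))ᵀ * Z t +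
      ((Z t)ᵀ * Z t)⁻¹ * (Z t)ᵀ * ε⁻¹ • (A * Z t)) * ((Z t)ᵀ * Z t)⁻¹) := by
    intro t
    have hzero : ((ε⁻¹ • (A * Z t))ᵀ * Z t + (Z t)ᵀ * (ε⁻¹ • (A * Z t))) * ((Z t)ᵀ * Z t)⁻¹
        + ((Z t)ᵀ * Z t) * Qd t = 0 := by
      ext i j
      have h1 := matMulDeriv (hGd t) (hQd t) i j
      simp only [hGQ] at h1
      simpa using h1.unique (hasDerivAt_const _ _)
    have h3 := congrArg (fun M => ((Z t)ᵀ * Z t)⁻¹ * M) hzero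
    simp only [Matrix.mul_add, ← Matrix.mul_assoc, hQG t, Matrix.one_mul, Matrix.mul_zero] at h3
    exact eq_neg_of_add_eq_zero_right h3
  -- conclusion
  refine ⟨fun t => ε⁻¹ • (A * P t + P t * Aᵀ - P t * (A + Aᵀ) * P t), ?_, ?_⟩
  · intro t i j
    have hfun : (fun s => P s i j) = fun s => ((Z s * ((Z s)ᵀ * Z s)⁻¹) * (Z s)ᵀ) i j := by
      funext s; rw [hP s, Matrix.mul_assoc, ← Matrix.mul_assoc]
    rw [hfun]
    have h1 := matMulDeriv (matMulDeriv (hZd t) (hQd t)) (hZTd t) i j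
    have hval : ((ε⁻¹ • (A * Z t)) * ((Z t)ᵀ * Z t)⁻¹ + Z t * Qd t) * (Z t)ᵀ
        + Z t * ((Z t)ᵀ * Z t)⁻¹ * (ε⁻¹ • (A * Z t))ᵀ
        = ε⁻¹ • (A * P t + P t * Aᵀ - P t * (A + Aᵀ) * P t) := by
      rw [hQdval t, hP t]
      simp only [Matrix.transpose_smul, Matrix.transpose_mul, Matrix.smul_mul, Matrix.mul_smul,
        Matrix.neg_mul, Matrix.mul_neg, Matrix.add_mul, Matrix.mul_add, smul_add, smul_neg,
        Matrix.mul_assoc, sub_eq_add_neg, neg_add]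
      abel
    rwa [hval] at h1
  · intro t
    rw [smul_smul, mul_inv_cancel₀ hεne, one_smul]
end

section
/- Let Ψ ∈ ℂ^{n×n} be invertible and let r ≤ m < n. Define 𝒱_{m,r} := {U ∈ St(r,n) : the m×r matrix consisting of the first m rows of Ψ⁻¹·U (U viewed as a complex matrix) has rank r}. Then 𝒱_{m,r} is dense in St(r,n): for every U ∈ St(r,n) and every δ > 0 there exists V ∈ 𝒱_{m,r} with ‖U − V‖ < δ, where ‖·‖ is the ℓ²-operator norm. -/
open Matrix
open scoped Matrix.Norms.L2Operator

namespace DomainOfAttractionAux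

noncomputable section

open Finset Submodule Module

/-- `M *ᵥ y` lies in the span of the columns of `M`. -/
lemma mulVec_mem_span_cols {m r : ℕ} (M : Matrix (Fin m) (Fin r) ℂ) (y : Fin r → ℂ) :
    M *ᵥ y ∈ Submodule.span ℂ (Set.range Mᵀ) := by
  have h : M *ᵥ y = ∑ j, y j • Mᵀ j := by
    funext i
    simp [Matrix.mulVec, dotProduct, Finset.sum_apply, mul_comm]
  rw [h]
  exact Submodule.sum_mem _ fun j _ => Submodule.smul_mem _ _ (Submodule.subset_span ⟨j, rfl⟩)

lemma sum_expand {ι : Type*} (s : Finset ι) (a e : ℝ) (x y z t : ι → ℝ) :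
    ∑ i ∈ s, (a * x i + e * y i) * (a * z i + e * t i)
      = a * a * ∑ i ∈ s, x i * z i + a * e * ∑ i ∈ s, x i * t i
        + e * a * ∑ i ∈ s, y i * z i + e * e * ∑ i ∈ s, y i * t i := by
  simp only [Finset.mul_sum, ← Finset.sum_add_distrib]
  exact Finset.sum_congr rfl fun i _ => by ring

lemma sum_expand_left {ι : Type*} (s : Finset ι) (a e : ℝ) (x y z : ι → ℝ) :
    ∑ i ∈ s, (a * x i + e * y i) * z i
      = a * ∑ i ∈ s, x i * z i + e * ∑ i ∈ s, y i * z i := by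
  simp only [Finset.mul_sum, ← Finset.sum_add_distrib]
  exact Finset.sum_congr rfl fun i _ => by ring

lemma sum_expand_right {ι : Type*} (s : Finset ι) (a e : ℝ) (x y z : ι → ℝ) :
    ∑ i ∈ s, z i * (a * x i + e * y i)
      = a * ∑ i ∈ s, z i * x i + e * ∑ i ∈ s, z i * y i := by
  simp only [Finset.mul_sum, ← Finset.sum_add_distrib]
  exact Finset.sum_congr rfl fun i _ => by ring

lemma map_mulVec {n r : ℕ} (U : Matrix (Fin n) (Fin r) ℝ) (y : Fin r → ℝ) :
    (fun i => (((U *ᵥ y) i : ℝ) : ℂ)) = (U.map (Complex.ofReal ·)) *ᵥ (fun j => ((y j : ℝ) : ℂ)) := by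
  funext i
  simp only [Matrix.mulVec, dotProduct, Matrix.map_apply]
  push_cast
  rfl

set_option maxHeartbeats 1600000 in
/-- One rank-increasing perturbation step. -/
lemma step {n m r : ℕ} (B : Matrix (Fin m) (Fin n) ℂ)
    (hB : Function.Surjective B.mulVec) (hrm : r ≤ m)
    (U : Matrix (Fin n) (Fin r) ℝ) (hU : Uᵀ * U = 1)
    (hlt : (B * U.map (Complex.ofReal ·)).rank < r)
    (δ : ℝ) (hδ : 0 < δ) :
    ∃ V : Matrix (Fin n) (Fin r) ℝ, Vᵀ * V = 1 ∧
      (B * U.map (Complex.ofReal ·)).rank < (B * V.map (Complex.ofReal ·)).rank ∧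
      ‖U - V‖ < δ := by
  set Uc := U.map (Complex.ofReal ·) with hUcdef
  set M := B * Uc with hMdef
  set S := Submodule.span ℂ (Set.range Mᵀ) with hSdef
  have hrank : M.rank = finrank ℂ S := Matrix.rank_eq_finrank_span_cols M
  -- columns are not linearly independent
  have hnli : ¬ LinearIndependent ℂ Mᵀ := by
    intro h
    have hc := finrank_span_eq_card h
    rw [Fintype.card_fin, ← hSdef] at hc
    rw [hrank] at hlt
    omega
  obtain ⟨g, hg0, j, hgj⟩ := Fintype.not_linearIndependent_iff.mp hnli
  -- the j-th column is in the span of the others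
  set S' := Submodule.span ℂ (Mᵀ '' {k | k ≠ j}) with hS'def
  have hjmem : Mᵀ j ∈ S' := by
    have hsum : g j • Mᵀ j = -∑ k ∈ Finset.univ.erase j, g k • Mᵀ k := by
      have h1 := Finset.add_sum_erase Finset.univ (fun k => g k • Mᵀ k) (Finset.mem_univ j)
      rw [hg0] at h1
      linear_combination (norm := module) h1
    have h2 : Mᵀ j = (g j)⁻¹ • (g j • Mᵀ j) := by
      rw [smul_smul, inv_mul_cancel₀ hgj, one_smul]
    rw [h2, hsum]
    exact Submodule.smul_mem _ _ (Submodule.neg_mem _ (Submodule.sum_mem _ fun k hk =>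
      Submodule.smul_mem _ _ (Submodule.subset_span ⟨k, Finset.ne_of_mem_erase hk, rfl⟩)))
  have hSeq : S = S' := by
    refine le_antisymm ?_ (Submodule.span_mono (Set.image_subset_range _ _))
    rw [Submodule.span_le]
    rintro _ ⟨k, rfl⟩
    by_cases hk : k = j
    · subst hk; exact hjmem
    · exact Submodule.subset_span ⟨k, hk, rfl⟩
  -- existence of a real direction outside the span
  have hex : ∃ x : Fin n → ℝ, B *ᵥ (fun i => ((x i : ℝ) : ℂ)) ∉ S := by
    by_contra h
    push_neg at h
    have hall : ∀ z : Fin n → ℂ, B *ᵥ z ∈ S := by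
      intro z
      have hz : z = (fun i => (((z i).re : ℝ) : ℂ)) + Complex.I • (fun i => (((z i).im : ℝ) : ℂ)) := by
        funext i
        simp only [Pi.add_apply, Pi.smul_apply, smul_eq_mul]
        rw [mul_comm, Complex.re_add_im]
      rw [hz, Matrix.mulVec_add, Matrix.mulVec_smul]
      exact Submodule.add_mem _ (h _) (Submodule.smul_mem _ _ (h _))
    have hStop : S = ⊤ := by
      rw [eq_top_iff]
      intro y _
      obtain ⟨z, hz⟩ := hB y
      exact hz ▸ hall z
    have hfr : finrank ℂ S = m := by
      rw [hStop, finrank_top, Module.finrank_pi]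
      exact Fintype.card_fin m
    rw [hrank] at hlt
    omega
  obtain ⟨w₀, hw₀⟩ := hex
  set y0 := Uᵀ *ᵥ w₀ with hy0
  set w := w₀ - U *ᵥ y0 with hwdef
  have hwU : Uᵀ *ᵥ w = 0 := by
    rw [hwdef, Matrix.mulVec_sub, Matrix.mulVec_mulVec, hU, Matrix.one_mulVec, hy0, sub_self]
  have hwB : B *ᵥ (fun i => ((w i : ℝ) : ℂ)) ∉ S := by
    intro hmem
    apply hw₀
    have hsplit : (fun i => ((w₀ i : ℝ) : ℂ))
        = (fun i => ((w i : ℝ) : ℂ)) + (fun i => (((U *ᵥ y0) i : ℝ) : ℂ)) := by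
      funext i
      simp only [Pi.add_apply, hwdef, Pi.sub_apply]
      push_cast
      ring
    rw [hsplit, Matrix.mulVec_add]
    refine Submodule.add_mem _ hmem ?_
    rw [map_mulVec U y0, Matrix.mulVec_mulVec]
    exact mulVec_mem_span_cols M _
  have hw0 : w ≠ 0 := by
    intro hweq
    apply hwB
    have h0 : (fun i => ((w i : ℝ) : ℂ)) = (0 : Fin n → ℂ) := by
      funext i; rw [congrFun hweq i]; simp
    rw [h0, Matrix.mulVec_zero]
    exact Submodule.zero_mem S
  have hpos : 0 < w ⬝ᵥ w := by
    obtain ⟨i, hi⟩ := Function.ne_iff.mp hw0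
    simp only [dotProduct]
    exact Finset.sum_pos' (fun k _ => mul_self_nonneg _)
      ⟨i, Finset.mem_univ i, mul_self_pos.mpr hi⟩
  set nw := Real.sqrt (w ⬝ᵥ w) with hnwdef
  have hnw : 0 < nw := Real.sqrt_pos.mpr hpos
  have hnwsq : nw * nw = w ⬝ᵥ w := Real.mul_self_sqrt hpos.le
  set u : Fin n → ℝ := fun i => nw⁻¹ * w i with hudef
  have huu : ∑ i, u i * u i = 1 := by
    simp only [hudef]
    have h1 : ∀ i : Fin n, nw⁻¹ * w i * (nw⁻¹ * w i) = (nw⁻¹ * nw⁻¹) * (w i * w i) := by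
      intro i; ring
    rw [Finset.sum_congr rfl fun i _ => h1 i, ← Finset.mul_sum]
    have : ∑ i, w i * w i = w ⬝ᵥ w := rfl
    rw [this, ← hnwsq]
    field_simp
  have hwUk : ∀ k, ∑ i, U i k * w i = 0 := by
    intro k
    have := congrFun hwU k
    simpa [Matrix.mulVec, dotProduct, Matrix.transpose_apply] using this
  have hUu : ∀ k, ∑ i, U i k * u i = 0 := by
    intro k
    simp only [hudef]
    have h1 : ∀ i : Fin n, U i k * (nw⁻¹ * w i) = nw⁻¹ * (U i k * w i) := by
      intro i; ring
    rw [Finset.sum_congr rfl fun i _ => h1 i, ← Finset.mul_sum, hwUk k, mul_zero]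
  have huUc : ∀ k, ∑ i, u i * U i k = 0 := by
    intro k
    rw [Finset.sum_congr rfl fun i _ => mul_comm (u i) (U i k)]
    exact hUu k
  have huB : B *ᵥ (fun i => ((u i : ℝ) : ℂ)) ∉ S := by
    intro hmem
    apply hwB
    have hwu : (fun i => ((w i : ℝ) : ℂ)) = (nw : ℂ) • (fun i => ((u i : ℝ) : ℂ)) := by
      funext i
      simp only [Pi.smul_apply, smul_eq_mul, hudef]
      push_cast
      rw [← mul_assoc, mul_inv_cancel₀ (by exact_mod_cast hnw.ne'), one_mul]
    rw [hwu, Matrix.mulVec_smul]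
    exact Submodule.smul_mem _ _ hmem
  -- the perturbation parameters
  set ε := min (δ / 4) (1 / 2) with hεdef
  have hε0 : 0 < ε := lt_min (by linarith) (by norm_num)
  have hεδ : ε ≤ δ / 4 := min_le_left _ _
  have hεhalf : ε ≤ 1 / 2 := min_le_right _ _
  set a := Real.sqrt (1 - ε ^ 2) with hadef
  have ha2 : a ^ 2 = 1 - ε ^ 2 := Real.sq_sqrt (by nlinarith)
  have ha0 : 0 ≤ a := Real.sqrt_nonneg _
  have ha1 : a ≤ 1 := Real.sqrt_le_one.mpr (by nlinarith)
  have h1a : 1 - a ≤ ε ^ 2 := by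
    have hx : 0 ≤ 1 - ε ^ 2 := by nlinarith
    have h := Real.sqrt_le_sqrt
      (show (1 - ε ^ 2) ^ 2 ≤ 1 - ε ^ 2 by nlinarith [mul_nonneg hx (sq_nonneg ε)])
    rw [Real.sqrt_sq hx] at h
    rw [hadef]
    linarith
  -- the perturbed matrix
  set V := Matrix.updateCol U j (fun i => a * U i j + ε * u i) with hVdef
  have hUUk : ∀ k l, ∑ i, U i k * U i l = if k = l then (1 : ℝ) else 0 := by
    intro k l
    have := congrFun (congrFun hU k) l
    simpa [Matrix.mul_apply, Matrix.transpose_apply, Matrix.one_apply] using this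
  have hVo : Vᵀ * V = 1 := by
    ext k l
    rw [Matrix.mul_apply, Matrix.one_apply]
    by_cases hk : k = j <;> by_cases hl : l = j
    · subst hk; subst hl
      simp only [Matrix.transpose_apply, hVdef, Matrix.updateCol_apply, if_true]
      rw [sum_expand, hUUk, huu, hUu, huUc, if_pos rfl]
      nlinarith
    · subst hk
      simp only [Matrix.transpose_apply, hVdef, Matrix.updateCol_apply, if_true,
        if_neg hl]
      rw [sum_expand_left, hUUk, huUc, if_neg (fun h => hl h.symm)]
      ring
    · subst hl
      simp only [Matrix.transpose_apply, hVdef, Matrix.updateCol_apply, if_true,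
        if_neg hk]
      rw [sum_expand_right, hUUk, hUu, if_neg hk]
      ring
    · simp only [Matrix.transpose_apply, hVdef, Matrix.updateCol_apply, if_neg hk, if_neg hl]
      exact hUUk k l
  -- rank increases
  set Vc := V.map (Complex.ofReal ·) with hVcdef
  have hVcol : ∀ k, k ≠ j → (B * Vc)ᵀ k = Mᵀ k := by
    intro k hk
    funext i
    simp only [Matrix.transpose_apply, Matrix.mul_apply, hVcdef, Matrix.map_apply, hVdef,
      Matrix.updateCol_apply, if_neg hk, hMdef, hUcdef]
  have hVcolj : (B * Vc)ᵀ j = (a : ℂ) • Mᵀ j + (ε : ℂ) • (B *ᵥ (fun i => ((u i : ℝ) : ℂ))) := by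
    funext i
    simp only [Matrix.transpose_apply, Matrix.mul_apply, hVcdef, Matrix.map_apply, hVdef,
      Matrix.updateCol_apply, if_pos rfl, Pi.add_apply, Pi.smul_apply, smul_eq_mul,
      Matrix.mulVec, dotProduct, hMdef, hUcdef]
    push_cast
    rw [Finset.mul_sum, Finset.mul_sum, ← Finset.sum_add_distrib]
    exact Finset.sum_congr rfl fun t _ => by ring
  set SV := Submodule.span ℂ (Set.range (B * Vc)ᵀ) with hSVdef
  have hSleSV : S ≤ SV := by
    rw [hSeq, hS'def, Submodule.span_le]
    rintro _ ⟨k, hk, rfl⟩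
    rw [← hVcol k hk]
    exact Submodule.subset_span ⟨k, rfl⟩
  have hjnot : (B * Vc)ᵀ j ∉ S := by
    rw [hVcolj]
    intro hmem
    apply huB
    have hMjS : Mᵀ j ∈ S := Submodule.subset_span ⟨j, rfl⟩
    have h2 : (ε : ℂ) • (B *ᵥ (fun i => ((u i : ℝ) : ℂ))) ∈ S := by
      have := Submodule.sub_mem S hmem (Submodule.smul_mem S (a : ℂ) hMjS)
      simpa using this
    have h3 := Submodule.smul_mem S ((ε : ℂ))⁻¹ h2
    rw [smul_smul, inv_mul_cancel₀ (by exact_mod_cast hε0.ne'), one_smul] at h3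
    exact h3
  have hltSV : S < SV :=
    lt_of_le_of_ne hSleSV (fun h => hjnot (h ▸ Submodule.subset_span ⟨j, rfl⟩))
  have hrankV : M.rank < (B * Vc).rank := by
    rw [hrank, Matrix.rank_eq_finrank_span_cols]
    change finrank ℂ S < finrank ℂ SV
    exact Submodule.finrank_lt_finrank_of_lt hltSV
  -- norm estimate
  refine ⟨V, hVo, by rw [hMdef, hUcdef] at hrankV; exact hrankV, ?_⟩
  set gg : Fin n → ℝ := fun i => (1 - a) * U i j - ε * u i with hggdef
  have hUV : ∀ x : Fin r → ℝ, (U - V) *ᵥ x = fun i => x j * gg i := by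
    intro x
    funext i
    simp only [Matrix.mulVec, dotProduct, Matrix.sub_apply, hVdef,
      Matrix.updateCol_apply]
    rw [Finset.sum_eq_single j]
    · rw [if_pos rfl, hggdef]; ring
    · intro b _ hb
      rw [if_neg hb, sub_self, zero_mul]
    · intro hb
      exact absurd (Finset.mem_univ j) hb
  -- Euclidean norms of the two unit vectors
  have hnormU : ‖(WithLp.equiv 2 (Fin n → ℝ)).symm (fun i => U i j)‖ = 1 := by
    rw [EuclideanSpace.norm_eq]
    have : ∀ i : Fin n, ‖(WithLp.equiv 2 (Fin n → ℝ)).symm (fun i => U i j) i‖ ^ 2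
        = U i j * U i j := by
      intro i
      rw [Real.norm_eq_abs, sq_abs]
      rw [show (WithLp.equiv 2 (Fin n → ℝ)).symm (fun i => U i j) i = U i j from rfl]
      ring
    rw [Finset.sum_congr rfl fun i _ => this i, hUUk j j, if_pos rfl, Real.sqrt_one]
  have hnormu : ‖(WithLp.equiv 2 (Fin n → ℝ)).symm u‖ = 1 := by
    rw [EuclideanSpace.norm_eq]
    have : ∀ i : Fin n, ‖(WithLp.equiv 2 (Fin n → ℝ)).symm u i‖ ^ 2 = u i * u i := by
      intro i
      rw [Real.norm_eq_abs, sq_abs]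
      rw [show (WithLp.equiv 2 (Fin n → ℝ)).symm u i = u i from rfl]
      ring
    rw [Finset.sum_congr rfl fun i _ => this i, huu, Real.sqrt_one]
  have hgnorm : ‖(WithLp.equiv 2 (Fin n → ℝ)).symm gg‖ ≤ (1 - a) + ε := by
    have hdecomp : (WithLp.equiv 2 (Fin n → ℝ)).symm gg
        = (1 - a) • (WithLp.equiv 2 (Fin n → ℝ)).symm (fun i => U i j)
          - ε • (WithLp.equiv 2 (Fin n → ℝ)).symm u := rfl
    rw [hdecomp]
    refine (norm_sub_le _ _).trans ?_
    rw [norm_smul, norm_smul, hnormU, hnormu, Real.norm_eq_abs, Real.norm_eq_abs,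
      abs_of_nonneg (by linarith : (0:ℝ) ≤ 1 - a), abs_of_nonneg hε0.le]
    simp
  have hbound : ‖U - V‖ ≤ (1 - a) + ε := by
    rw [Matrix.l2_opNorm_def]
    refine ContinuousLinearMap.opNorm_le_bound _ (by linarith) fun x => ?_
    have happ : (Matrix.toEuclideanLin.trans LinearMap.toContinuousLinearMap (U - V)) x
        = (WithLp.equiv 2 (Fin n → ℝ)).symm ((U - V) *ᵥ (WithLp.equiv 2 (Fin r → ℝ)) x) := rfl
    rw [happ, hUV]
    have hsm : (WithLp.equiv 2 (Fin n → ℝ)).symm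
          (fun i => ((WithLp.equiv 2 (Fin r → ℝ)) x j) * gg i)
        = ((WithLp.equiv 2 (Fin r → ℝ)) x j) • (WithLp.equiv 2 (Fin n → ℝ)).symm gg := rfl
    rw [hsm, norm_smul, Real.norm_eq_abs]
    have hcoord : |(WithLp.equiv 2 (Fin r → ℝ)) x j| ≤ ‖x‖ := by
      have h1 : |(WithLp.equiv 2 (Fin r → ℝ)) x j| = Real.sqrt (((WithLp.equiv 2 (Fin r → ℝ)) x j) ^ 2) :=
        (Real.sqrt_sq_eq_abs _).symm
      rw [h1, EuclideanSpace.norm_eq]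
      refine Real.sqrt_le_sqrt ?_
      have h2 : ((WithLp.equiv 2 (Fin r → ℝ)) x j) ^ 2 = ‖x j‖ ^ 2 := by
        rw [Real.norm_eq_abs, sq_abs]; rfl
      rw [h2]
      exact Finset.single_le_sum (fun i _ => sq_nonneg ‖x i‖) (Finset.mem_univ j)
    calc |(WithLp.equiv 2 (Fin r → ℝ)) x j| * ‖(WithLp.equiv 2 (Fin n → ℝ)).symm gg‖
        ≤ ‖x‖ * ((1 - a) + ε) :=
          mul_le_mul hcoord hgnorm (norm_nonneg _) (norm_nonneg _)
      _ = ((1 - a) + ε) * ‖x‖ := by ring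
  have : (1 - a) + ε < δ := by nlinarith
  linarith

/-- Strong induction on the rank deficiency. -/
lemma dense_aux {n m r : ℕ} (B : Matrix (Fin m) (Fin n) ℂ)
    (hB : Function.Surjective B.mulVec) (hrm : r ≤ m) :
    ∀ d : ℕ, ∀ U : Matrix (Fin n) (Fin r) ℝ, Uᵀ * U = 1 →
      r - (B * U.map (Complex.ofReal ·)).rank ≤ d →
      ∀ δ : ℝ, 0 < δ →
      ∃ V : Matrix (Fin n) (Fin r) ℝ, Vᵀ * V = 1 ∧
        (B * V.map (Complex.ofReal ·)).rank = r ∧ ‖U - V‖ < δ := by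
  intro d
  induction d with
  | zero =>
    intro U hU hd δ hδ
    have h1 : (B * U.map (Complex.ofReal ·)).rank ≤ r := Matrix.rank_le_width _
    exact ⟨U, hU, by omega, by simpa using hδ⟩
  | succ d ih =>
    intro U hU hd δ hδ
    by_cases hr : (B * U.map (Complex.ofReal ·)).rank = r
    · exact ⟨U, hU, hr, by simpa using hδ⟩
    · have hlt : (B * U.map (Complex.ofReal ·)).rank < r :=
        lt_of_le_of_ne (Matrix.rank_le_width _) hr
      obtain ⟨V₁, hV₁o, hV₁r, hV₁n⟩ := step B hB hrm U hU hlt (δ / 2) (by linarith)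
      obtain ⟨V, hVo, hVr, hVn⟩ := ih V₁ hV₁o (by omega) (δ / 2) (by linarith)
      refine ⟨V, hVo, hVr, ?_⟩
      have h3 : U - V = (U - V₁) + (V₁ - V) := by abel
      calc ‖U - V‖ = ‖(U - V₁) + (V₁ - V)‖ := by rw [← h3]
        _ ≤ ‖U - V₁‖ + ‖V₁ - V‖ := norm_add_le _ _
        _ < δ := by linarith

end

end DomainOfAttractionAux

set_option maxHeartbeats 800000 in
/-- (Density of the domain of attraction.) For invertible `Ψ ∈ ℂ^{n×n}` and
`r ≤ m < n`, the set `𝒱_{m,r}` of matrices `U ∈ St(r,n)` such that the first `m` rows of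
`Ψ⁻¹U` form a matrix of rank `r` is dense in `St(r,n)` (w.r.t. the ℓ²-operator norm). -/
theorem domain_of_attraction_dense
    (n m r : ℕ) (hr : 1 ≤ r) (hrm : r ≤ m) (hmn : m < n)
    (Ψ : Matrix (Fin n) (Fin n) ℂ) (hΨ : IsUnit Ψ) :
    ∀ U : Matrix (Fin n) (Fin r) ℝ, Uᵀ * U = 1 →
      ∀ δ : ℝ, 0 < δ →
        ∃ V : Matrix (Fin n) (Fin r) ℝ, Vᵀ * V = 1 ∧
          ((Ψ⁻¹ * V.map (Complex.ofReal ·)).submatrix (Fin.castLE hmn.le) id).rank = r ∧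
          ‖U - V‖ < δ := by
  intro U hU δ hδ
  set B := (Ψ⁻¹).submatrix (Fin.castLE hmn.le) id with hBdef
  have hsub : ∀ V : Matrix (Fin n) (Fin r) ℝ,
      (Ψ⁻¹ * V.map (Complex.ofReal ·)).submatrix (Fin.castLE hmn.le) id
        = B * V.map (Complex.ofReal ·) := by
    intro V
    ext i k
    simp [Matrix.submatrix_apply, Matrix.mul_apply, hBdef]
  have hBsurj : Function.Surjective B.mulVec := by
    intro y
    set z : Fin n → ℂ := fun i => if h : (i : ℕ) < m then y ⟨i, h⟩ else 0 with hzdef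
    refine ⟨Ψ *ᵥ z, ?_⟩
    have hinv : Ψ⁻¹ * Ψ = 1 := Matrix.nonsing_inv_mul Ψ ((Matrix.isUnit_iff_isUnit_det Ψ).mp hΨ)
    funext i
    have h1 : B.mulVec (Ψ *ᵥ z) i = (Ψ⁻¹ *ᵥ (Ψ *ᵥ z)) (Fin.castLE hmn.le i) := by
      simp [hBdef, Matrix.mulVec, dotProduct]
    rw [h1, Matrix.mulVec_mulVec, hinv, Matrix.one_mulVec, hzdef]
    have hcond : ((Fin.castLE hmn.le i : Fin n) : ℕ) < m := by
      simp only [Fin.coe_castLE]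
      exact i.isLt
    simp only [dif_pos hcond]
    congr 1
  obtain ⟨V, hVo, hVr, hVn⟩ :=
    DomainOfAttractionAux.dense_aux B hBsurj hrm r U hU (by omega) δ hδ
  exact ⟨V, hVo, by rw [hsub V]; exact hVr, hVn⟩
end

section
/- Let U ∈ St(r,n) and let 0 < δ < 2. Then the set 𝒩_δ(U) := {V ∈ St(r,n) : ‖U − V‖ < δ}, where ‖·‖ is the ℓ²-operator norm, is path-connected. -/
set_option maxHeartbeats 1000000

open Matrix
open scoped Matrix.Norms.L2Operator

namespace StiefelAux

variable {n r m k : ℕ}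


lemma dot_shift (A : Matrix (Fin m) (Fin k) ℝ) (x : Fin m → ℝ) (y : Fin k → ℝ) :
    x ⬝ᵥ (A *ᵥ y) = (Aᵀ *ᵥ x) ⬝ᵥ y := by
  rw [dotProduct_mulVec, ← Matrix.vecMul_transpose, Matrix.transpose_transpose]

lemma dot_self_nonneg (x : Fin m → ℝ) : 0 ≤ x ⬝ᵥ x :=
  Finset.sum_nonneg fun i _ => mul_self_nonneg _

lemma dot_cs (x y : Fin m → ℝ) : (x ⬝ᵥ y) ^ 2 ≤ (x ⬝ᵥ x) * (y ⬝ᵥ y) := by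
  have := Finset.sum_mul_sq_le_sq_mul_sq Finset.univ x y
  simpa [dotProduct, sq] using this

lemma euclid_norm_sq (x : EuclideanSpace ℝ (Fin m)) :
    ‖x‖ ^ 2 = (x : Fin m → ℝ) ⬝ᵥ (x : Fin m → ℝ) := by
  rw [EuclideanSpace.norm_eq]
  rw [Real.sq_sqrt (Finset.sum_nonneg fun i _ => sq_nonneg _)]
  simp [dotProduct, sq]

lemma opnorm_le_of_quad (A : Matrix (Fin m) (Fin k) ℝ) (C : ℝ) (hC : 0 ≤ C)
    (h : ∀ x : Fin k → ℝ, (A *ᵥ x) ⬝ᵥ (A *ᵥ x) ≤ C ^ 2 * (x ⬝ᵥ x)) : ‖A‖ ≤ C := by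
  rw [Matrix.l2_opNorm_def]
  apply ContinuousLinearMap.opNorm_le_bound _ hC
  intro x
  have h2 : ‖(Matrix.toEuclideanLin.trans LinearMap.toContinuousLinearMap A) x‖ ^ 2 ≤
      (C * ‖x‖) ^ 2 := by
    have hx : ((Matrix.toEuclideanLin.trans LinearMap.toContinuousLinearMap A) x : Fin m → ℝ)
        = A *ᵥ (x : Fin k → ℝ) := rfl
    rw [euclid_norm_sq, hx, mul_pow, euclid_norm_sq]
    exact h _
  exact (pow_le_pow_iff_left₀ (norm_nonneg _) (by positivity) two_ne_zero).mp h2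

lemma quad_le_opnorm (A : Matrix (Fin m) (Fin k) ℝ) (x : Fin k → ℝ) :
    (A *ᵥ x) ⬝ᵥ (A *ᵥ x) ≤ ‖A‖ ^ 2 * (x ⬝ᵥ x) := by
  have := A.l2_opNorm_mulVec ((WithLp.equiv 2 (Fin k → ℝ)).symm x)
  have h2 : ‖(EuclideanSpace.equiv (Fin m) ℝ).symm (A *ᵥ ((WithLp.equiv 2 (Fin k → ℝ)).symm x : EuclideanSpace ℝ (Fin k)))‖ ^ 2
      ≤ (‖A‖ * ‖((WithLp.equiv 2 (Fin k → ℝ)).symm x : EuclideanSpace ℝ (Fin k))‖) ^ 2 :=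
    pow_le_pow_left₀ (norm_nonneg _) this 2
  rw [euclid_norm_sq, mul_pow, euclid_norm_sq] at h2
  exact h2

lemma iso_dot {U : Matrix (Fin m) (Fin k) ℝ} (hU : Uᵀ * U = 1) (x y : Fin k → ℝ) :
    (U *ᵥ x) ⬝ᵥ (U *ᵥ y) = x ⬝ᵥ y := by
  rw [dotProduct_comm, dot_shift, Matrix.mulVec_mulVec, hU, Matrix.one_mulVec,
    dotProduct_comm]

lemma coiso_dot {U : Matrix (Fin m) (Fin k) ℝ} (hU : Uᵀ * U = 1) (y : Fin m → ℝ) :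
    (Uᵀ *ᵥ y) ⬝ᵥ (Uᵀ *ᵥ y) ≤ y ⬝ᵥ y := by
  set w : Fin k → ℝ := Uᵀ *ᵥ y with hw
  have h1 : 0 ≤ (y - U *ᵥ w) ⬝ᵥ (y - U *ᵥ w) := dot_self_nonneg _
  have h2 : y ⬝ᵥ (U *ᵥ w) = w ⬝ᵥ w := by rw [dot_shift]
  have h3 : (U *ᵥ w) ⬝ᵥ (U *ᵥ w) = w ⬝ᵥ w := iso_dot hU w w
  have h4 : (U *ᵥ w) ⬝ᵥ y = w ⬝ᵥ w := by rw [dotProduct_comm]; exact h2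
  have h5 : (y - U *ᵥ w) ⬝ᵥ (y - U *ᵥ w)
      = y ⬝ᵥ y - y ⬝ᵥ (U *ᵥ w) - (U *ᵥ w) ⬝ᵥ y + (U *ᵥ w) ⬝ᵥ (U *ᵥ w) := by
    rw [sub_dotProduct, dotProduct_sub, dotProduct_sub]; ring
  rw [h5, h2, h3, h4] at h1
  linarith only [h1]

lemma alpha_pos (x t : ℝ) (hx : -1 < x) (ht0 : 0 ≤ t) (ht1 : t ≤ 1) :
    0 < t ^ 2 + (1 - t) ^ 2 + 2 * t * (1 - t) * x := by
  rcases eq_or_lt_of_le (mul_nonneg ht0 (by linarith : (0:ℝ) ≤ 1 - t)) with h | h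
  · rcases mul_eq_zero.mp h.symm with h' | h'
    · rw [h']; norm_num
    · have ht : t = 1 := by linarith
      rw [ht]; norm_num
  · have hk : 0 < 2 * (t * (1 - t)) * (1 + x) :=
      mul_pos (mul_pos (by norm_num) h) (by linarith)
    linarith only [sq_nonneg (2 * t - 1), hk]

lemma conj_mul {O : Matrix (Fin r) (Fin r) ℝ} (hO : Oᵀ * O = 1) (f g : Fin r → ℝ) :
    (O * diagonal f * Oᵀ) * (O * diagonal g * Oᵀ)
      = O * diagonal (fun i => f i * g i) * Oᵀ := by
  have h1 : (O * diagonal f * Oᵀ) * (O * diagonal g * Oᵀ)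
      = O * (diagonal f * ((Oᵀ * O) * (diagonal g * Oᵀ))) := by
    simp only [Matrix.mul_assoc]
  rw [h1, hO, Matrix.one_mul, ← Matrix.mul_assoc (diagonal f) (diagonal g) Oᵀ,
    Matrix.diagonal_mul_diagonal, ← Matrix.mul_assoc]

lemma quad_diag (O : Matrix (Fin r) (Fin r) ℝ) (f : Fin r → ℝ) (z : Fin r → ℝ) :
    z ⬝ᵥ ((O * diagonal f * Oᵀ) *ᵥ z) = ∑ i, f i * ((Oᵀ *ᵥ z) i) ^ 2 := by
  rw [← Matrix.mulVec_mulVec, ← Matrix.mulVec_mulVec, dot_shift]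
  unfold dotProduct
  apply Finset.sum_congr rfl
  intro i _
  rw [Matrix.mulVec_diagonal]
  ring

lemma norm_invariant {O : Matrix (Fin r) (Fin r) ℝ} (hO2 : O * Oᵀ = 1) (z : Fin r → ℝ) :
    z ⬝ᵥ z = ∑ i, ((Oᵀ *ᵥ z) i) ^ 2 := by
  have := quad_diag O (fun _ => 1) z
  simp only [Matrix.diagonal_one, Matrix.mul_one, hO2, Matrix.one_mulVec, one_mul] at this
  exact this


lemma sq_le_imp {a b : ℝ} (ha : 0 ≤ a) (hb : 0 ≤ b) (h : a ^ 2 ≤ b ^ 2) : a ≤ b := by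
  nlinarith


/-- **Lemma E** : the two-dimensional angle-addition inequality. -/
lemma lemmaE (s c ρ e A G B : ℝ) (hs1 : -1 ≤ s) (hs2 : s ≤ 1)
    (hc : c = Real.sqrt (1 - s ^ 2)) (hB : 0 < B)
    (hρ0 : 0 ≤ ρ) (he : 0 ≤ e) (hG : 0 ≤ G) (hsA : s ≤ A)
    (hρe : ρ ^ 2 + e ^ 2 = B) (hAG : A ^ 2 + G ^ 2 = B)
    (h3 : s * G ≤ c * A) (h4 : s * A + c * G ≤ ρ) :
    s * B ≤ ρ * A - e * G := by
  have hβ : (0:ℝ) < Real.sqrt B := Real.sqrt_pos.mpr hB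
  set β := Real.sqrt B with hβdef
  have hββ : β * β = B := Real.mul_self_sqrt hB.le
  have hβ2 : β ^ 2 = B := by rw [sq]; exact hββ
  set θ := Real.arccos s with hθ
  set v := Real.arccos (A / β) with hv
  set u := Real.arccos (ρ / β) with hu
  have hA2 : A ^ 2 ≤ B := by linarith [sq_nonneg G]
  have hρ2 : ρ ^ 2 ≤ B := by linarith [sq_nonneg e]
  have hAβ1 : -1 ≤ A / β := by
    rw [le_div_iff₀ hβ]; nlinarith [sq_nonneg (A + β)]
  have hAβ2 : A / β ≤ 1 := by
    rw [div_le_iff₀ hβ]; nlinarith [sq_nonneg (A - β)]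
  have hρβ0 : (0:ℝ) ≤ ρ / β := by positivity
  have hρβ1 : (-1:ℝ) ≤ ρ / β := by linarith
  have hρβ2 : ρ / β ≤ 1 := by
    rw [div_le_iff₀ hβ]; nlinarith [sq_nonneg (ρ - β)]
  have hcosθ : Real.cos θ = s := Real.cos_arccos hs1 hs2
  have hsinθ : Real.sin θ = c := by rw [hθ, Real.sin_arccos, hc]
  have hcosv : Real.cos v = A / β := Real.cos_arccos hAβ1 hAβ2
  have hGval : 1 - (A/β)^2 = (G/β)^2 := by
    rw [div_pow, div_pow, hβ2]; field_simp; linarith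
  have hsinv : Real.sin v = G / β := by
    rw [hv, Real.sin_arccos, hGval]
    exact Real.sqrt_sq (by positivity)
  have hcosu : Real.cos u = ρ / β := Real.cos_arccos hρβ1 hρβ2
  have heval : 1 - (ρ/β)^2 = (e/β)^2 := by
    rw [div_pow, div_pow, hβ2]; field_simp; linarith
  have hsinu : Real.sin u = e / β := by
    rw [hu, Real.sin_arccos, heval]
    exact Real.sqrt_sq (by positivity)
  have hθ0 : 0 ≤ θ := Real.arccos_nonneg _
  have hθπ : θ ≤ Real.pi := Real.arccos_le_pi _
  have hv0 : 0 ≤ v := Real.arccos_nonneg _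
  have hvπ : v ≤ Real.pi := Real.arccos_le_pi _
  have hu0 : 0 ≤ u := Real.arccos_nonneg _
  have huπ : u ≤ Real.pi := Real.arccos_le_pi _
  -- claim 1 : v ≤ θ
  have hsin_tv : 0 ≤ Real.sin (θ - v) := by
    rw [Real.sin_sub, hsinθ, hcosθ, hsinv, hcosv]
    rw [show c * (A/β) - s * (G/β) = (c*A - s*G)/β by ring]
    exact div_nonneg (by linarith) hβ.le
  have hvθ : v ≤ θ := by
    by_contra hcon
    push_neg at hcon
    have hne : θ - v ≠ -Real.pi := by
      intro heq
      have hθ0' : θ = 0 := by linarith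
      have hvπ' : v = Real.pi := by linarith
      have hs' : s = 1 := by rw [← hcosθ, hθ0', Real.cos_zero]
      have hA' : A / β = -1 := by rw [← hcosv, hvπ', Real.cos_pi]
      have hAneg : A = -β := by
        field_simp at hA'; linarith
      linarith
    have hlow : -Real.pi < θ - v := lt_of_le_of_ne (by linarith) (Ne.symm hne)
    have := Real.sin_neg_of_neg_of_neg_pi_lt (by linarith) hlow
    linarith
  -- claim 2 : u ≤ θ - v
  have hcos_tv : Real.cos (θ - v) = (s*A + c*G)/β := by
    rw [Real.cos_sub, hcosθ, hsinθ, hcosv, hsinv]; ring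
  have hutv : u ≤ θ - v := by
    by_contra hcon
    push_neg at hcon
    have hlt := Real.strictAntiOn_cos ⟨by linarith, by linarith⟩ ⟨hu0, huπ⟩ hcon
    rw [hcosu, hcos_tv] at hlt
    have hdd : (s*A + c*G)/β ≤ ρ/β := by gcongr
    linarith
  -- conclude
  have hfin : Real.cos θ ≤ Real.cos (u + v) :=
    Real.cos_le_cos_of_nonneg_of_le_pi (by linarith) hθπ (by linarith)
  rw [hcosθ, Real.cos_add, hcosu, hcosv, hsinu, hsinv] at hfin
  have hexp : ρ / β * (A / β) - e / β * (G / β) = (ρ*A - e*G)/B := by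
    rw [← hββ]; field_simp
  rw [hexp] at hfin
  exact (le_div_iff₀ hB).mp hfin


/-- the scalar core inequality -/
lemma core_scalar (s t σ ρ B P mm : ℝ)
    (hs1 : -1 < s) (hs2 : s ≤ 1)
    (ht0 : 0 ≤ t) (ht1 : t ≤ 1)
    (hσs : s ≤ σ)
    (hmm1 : mm ≤ 1) (hσmm : σ ^ 2 ≤ mm)
    (hB : B = t ^ 2 + (1 - t) ^ 2 + 2 * t * (1 - t) * σ)
    (hρB : ρ ^ 2 ≤ B)
    (hρrs : Real.sqrt (t ^ 2 + (1 - t) ^ 2 + 2 * t * (1 - t) * s) ≤ ρ)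
    (hP : P ^ 2 ≤ (B - ρ ^ 2) * (mm - σ ^ 2)) :
    s * B ≤ t * ρ + (1 - t) * (σ * ρ + P) := by
  have ht1' : (0:ℝ) ≤ 1 - t := by linarith
  have hσ1 : σ ^ 2 ≤ 1 := le_trans hσmm hmm1
  have hσa : -1 ≤ σ := by linarith only [hσ1, sq_nonneg (σ + 1)]
  have hσb : σ ≤ 1 := by linarith only [hσ1, sq_nonneg (σ - 1)]
  have hβnn : (0:ℝ) ≤ 2 * t * (1 - t) := by positivity
  have hs1sq : (0:ℝ) ≤ 1 - s ^ 2 := by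
    have := mul_nonneg (by linarith : (0:ℝ) ≤ 1 - s) (by linarith : (0:ℝ) ≤ 1 + s)
    linarith only [this]
  have hαs : 0 < t ^ 2 + (1 - t) ^ 2 + 2 * t * (1 - t) * s := by
    rcases eq_or_lt_of_le (mul_nonneg ht0 ht1') with h | h
    · rcases mul_eq_zero.mp h.symm with h' | h'
      · rw [h']; norm_num
      · have ht : t = 1 := by linarith
        rw [ht]; norm_num
    · have hk : 0 < 2 * (t * (1 - t)) * (1 + s) :=
        mul_pos (mul_pos (by norm_num) h) (by linarith)
      linarith only [sq_nonneg (2 * t - 1), hk]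
  have hρ0 : 0 ≤ ρ := le_trans (Real.sqrt_nonneg _) hρrs
  have hBσ : t ^ 2 + (1 - t) ^ 2 + 2 * t * (1 - t) * s ≤ B := by
    have := mul_le_mul_of_nonneg_left hσs hβnn
    rw [hB]; linarith only [this]
  have hBpos : 0 < B := lt_of_lt_of_le hαs hBσ
  obtain ⟨c, hc⟩ : ∃ x, x = Real.sqrt (1 - s ^ 2) := ⟨_, rfl⟩
  obtain ⟨τ, hτ⟩ : ∃ x, x = Real.sqrt (1 - σ ^ 2) := ⟨_, rfl⟩
  obtain ⟨e, he⟩ : ∃ x, x = Real.sqrt (B - ρ ^ 2) := ⟨_, rfl⟩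
  have hc0 : 0 ≤ c := hc ▸ Real.sqrt_nonneg _
  have hτ0 : 0 ≤ τ := hτ ▸ Real.sqrt_nonneg _
  have he0 : 0 ≤ e := he ▸ Real.sqrt_nonneg _
  have hc2 : c ^ 2 = 1 - s ^ 2 := by rw [hc]; exact Real.sq_sqrt hs1sq
  have hτ2 : τ ^ 2 = 1 - σ ^ 2 := by rw [hτ]; exact Real.sq_sqrt (by linarith)
  have he2 : e ^ 2 = B - ρ ^ 2 := by rw [he]; exact Real.sq_sqrt (by linarith)
  obtain ⟨A, hA⟩ : ∃ x, x = t + (1 - t) * σ := ⟨_, rfl⟩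
  obtain ⟨G, hG⟩ : ∃ x, x = (1 - t) * τ := ⟨_, rfl⟩
  have hG0 : 0 ≤ G := hG ▸ mul_nonneg ht1' hτ0
  have hAG : A ^ 2 + G ^ 2 = B := by
    rw [hB, hA, hG]
    linear_combination ((1 - t) ^ 2) * hτ2
  have hsA : s ≤ A := by
    have h1 := mul_nonneg ht0 (by linarith : (0:ℝ) ≤ 1 - s)
    have h2 := mul_nonneg ht1' (by linarith : (0:ℝ) ≤ σ - s)
    rw [hA]; linarith only [h1, h2]
  -- h3
  have hstep : 0 ≤ c * σ - s * τ := by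
    rcases le_or_gt s 0 with hsneg | hspos
    · rcases le_or_gt 0 σ with hσpos | hσneg
      · have h1 : 0 ≤ c * σ := mul_nonneg hc0 hσpos
        have h2 : s * τ ≤ 0 := mul_nonpos_of_nonpos_of_nonneg hsneg hτ0
        linarith only [h1, h2]
      · have hσs2 : σ ^ 2 ≤ s ^ 2 := by
          have := mul_le_mul_of_nonpos_right hσs (by linarith : σ ≤ 0)
          have h2 := mul_le_mul_of_nonpos_left hσs (by linarith : s ≤ 0)
          linarith only [this, h2]
        have e1 : (c * (-σ)) ^ 2 = σ ^ 2 - s ^ 2 * σ ^ 2 := by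
          linear_combination σ ^ 2 * hc2
        have e2 : ((-s) * τ) ^ 2 = s ^ 2 - s ^ 2 * σ ^ 2 := by
          linear_combination s ^ 2 * hτ2
        have hab : (c * (-σ)) ^ 2 ≤ ((-s) * τ) ^ 2 := by
          rw [e1, e2]; linarith only [hσs2]
        have := sq_le_imp (mul_nonneg hc0 (by linarith)) (mul_nonneg (by linarith) hτ0) hab
        linarith only [this]
    · have hs2' : s ^ 2 ≤ σ ^ 2 := by
        have := mul_le_mul_of_nonneg_right hσs hspos.le
        have h2 := mul_le_mul_of_nonneg_left hσs (by linarith : (0:ℝ) ≤ σ)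
        linarith only [this, h2]
      have e1 : (s * τ) ^ 2 = s ^ 2 - s ^ 2 * σ ^ 2 := by
        linear_combination s ^ 2 * hτ2
      have e2 : (c * σ) ^ 2 = σ ^ 2 - s ^ 2 * σ ^ 2 := by
        linear_combination σ ^ 2 * hc2
      have hab : (s * τ) ^ 2 ≤ (c * σ) ^ 2 := by
        rw [e1, e2]; linarith only [hs2']
      have := sq_le_imp (mul_nonneg hspos.le hτ0) (mul_nonneg hc0 (by linarith)) hab
      linarith only [this]
  have h3 : s * G ≤ c * A := by
    have h1 : 0 ≤ t * c := mul_nonneg ht0 hc0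
    have h2 : 0 ≤ (1 - t) * (c * σ - s * τ) := mul_nonneg ht1' hstep
    rw [hA, hG]; linarith only [h1, h2]
  -- h4
  have hid : (s * σ + c * τ) ^ 2 + (s * τ - c * σ) ^ 2 = 1 := by
    linear_combination (σ ^ 2 + τ ^ 2) * hc2 + hτ2
  have hX2 : (s * σ + c * τ) ^ 2 ≤ 1 := by
    linarith only [sq_nonneg (s * τ - c * σ), hid]
  have hcs1 : s * σ + c * τ ≤ 1 :=
    le_of_abs_le (sq_le_imp (abs_nonneg _) zero_le_one (by rw [sq_abs, one_pow]; exact hX2))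
  have h4b : s * A + c * G ≤ t * s + (1 - t) := by
    have hmul := mul_le_mul_of_nonneg_left hcs1 ht1'
    rw [hA, hG]; linarith only [hmul]
  have h4c : t * s + (1 - t) ≤ Real.sqrt (t ^ 2 + (1 - t) ^ 2 + 2 * t * (1 - t) * s) := by
    rcases le_or_gt (t * s + (1 - t)) 0 with hneg | hpos
    · exact le_trans hneg (Real.sqrt_nonneg _)
    · rw [Real.le_sqrt hpos.le hαs.le]
      have h0 : 0 ≤ t ^ 2 * (1 - s ^ 2) := mul_nonneg (sq_nonneg t) hs1sq
      linarith only [h0]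
  have h4 : s * A + c * G ≤ ρ := by linarith only [h4b, h4c, hρrs]
  have hkey := lemmaE s c ρ e A G B hs1.le hs2 hc hBpos hρ0 he0 hG0 hsA
    (by linarith only [he2]) hAG h3 h4
  -- the P bound
  have hPτ : -(e * τ) ≤ P := by
    have e1 : (e * τ) ^ 2 = (B - ρ ^ 2) * (1 - σ ^ 2) := by
      linear_combination τ ^ 2 * he2 + (B - ρ ^ 2) * hτ2
    have hmul := mul_le_mul_of_nonneg_left (by linarith only [hmm1] : mm - σ ^ 2 ≤ 1 - σ ^ 2)
      (by linarith only [hρB] : (0:ℝ) ≤ B - ρ ^ 2)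
    have h1 : P ^ 2 ≤ (e * τ) ^ 2 := by rw [e1]; exact le_trans hP hmul
    have h2 : 0 ≤ e * τ := mul_nonneg he0 hτ0
    rcases le_or_gt 0 P with hp | hp
    · linarith only [hp, h2]
    · have hsq : (-P) ^ 2 ≤ (e * τ) ^ 2 := by
        rw [show (-P) ^ 2 = P ^ 2 by ring]; exact h1
      have := sq_le_imp (by linarith only [hp] : (0:ℝ) ≤ -P) h2 hsq
      linarith only [this]
  have hfin : ρ * A - e * G = t * ρ + (1 - t) * (σ * ρ - e * τ) := by rw [hA, hG]; ring
  have hmono : (1 - t) * (σ * ρ - e * τ) ≤ (1 - t) * (σ * ρ + P) :=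
    mul_le_mul_of_nonneg_left (by linarith only [hPτ]) ht1'
  linarith only [hkey, hfin, hmono]


/-- The key joinedness lemma. -/
lemma joined (U V : Matrix (Fin n) (Fin r) ℝ) (hU : Uᵀ * U = 1) (hV : Vᵀ * V = 1)
    (δ : ℝ) (hδ2 : δ < 2) (hUV : ‖U - V‖ < δ) :
    JoinedIn {W : Matrix (Fin n) (Fin r) ℝ | Wᵀ * W = 1 ∧ ‖U - W‖ < δ} V U := by
  classical
  obtain ⟨δ', hδ'⟩ : ∃ x, x = ‖U - V‖ := ⟨_, rfl⟩
  have hδ'0 : 0 ≤ δ' := hδ' ▸ norm_nonneg _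
  have hδ'lt : δ' < δ := hδ' ▸ hUV
  have hδ'2 : δ' < 2 := lt_of_lt_of_le hδ'lt hδ2.le
  obtain ⟨s, hsdef⟩ : ∃ x, x = 1 - δ' ^ 2 / 2 := ⟨_, rfl⟩
  have hs1 : -1 < s := by rw [hsdef]; nlinarith only [hδ'0, hδ'2]
  have hs2 : s ≤ 1 := by rw [hsdef]; nlinarith only [hδ'0]
  set M := Uᵀ * V with hM
  set S := (2:ℝ)⁻¹ • (M + Mᵀ) with hS0
  have hMT : Mᵀ = Vᵀ * U := by rw [hM, Matrix.transpose_mul, Matrix.transpose_transpose]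
  have hS : S.IsHermitian := by
    show Sᴴ = S
    rw [Matrix.conjTranspose_eq_transpose_of_trivial, hS0, Matrix.transpose_smul,
      Matrix.transpose_add, Matrix.transpose_transpose, add_comm]
  set d := hS.eigenvalues with hd
  set Omat := (Matrix.IsHermitian.eigenvectorUnitary hS : Matrix (Fin r) (Fin r) ℝ) with hOdef
  have hO1 : Omatᵀ * Omat = 1 := by
    have := (Matrix.mem_unitaryGroup_iff').mp (Matrix.IsHermitian.eigenvectorUnitary hS).2
    rwa [Matrix.star_eq_conjTranspose, Matrix.conjTranspose_eq_transpose_of_trivial] at this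
  have hO2 : Omat * Omatᵀ = 1 := by
    have := (Matrix.mem_unitaryGroup_iff).mp (Matrix.IsHermitian.eigenvectorUnitary hS).2
    rwa [Matrix.star_eq_conjTranspose, Matrix.conjTranspose_eq_transpose_of_trivial] at this
  have hSpec : S = Omat * diagonal d * Omatᵀ := by
    have h := hS.spectral_theorem
    rwa [Unitary.conjStarAlgAut_apply, Matrix.star_eq_conjTranspose, Matrix.conjTranspose_eq_transpose_of_trivial,
      RCLike.ofReal_real_eq_id, Function.id_comp] at h
  -- quadratic form facts
  have hMC : ∀ z, (M *ᵥ z) ⬝ᵥ (M *ᵥ z) ≤ z ⬝ᵥ z := by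
    intro z
    have h1 : M *ᵥ z = Uᵀ *ᵥ (V *ᵥ z) := by rw [hM, Matrix.mulVec_mulVec]
    rw [h1]
    exact le_trans (coiso_dot hU _) (le_of_eq (iso_dot hV z z))
  have hSMq : ∀ z, z ⬝ᵥ (S *ᵥ z) = z ⬝ᵥ (M *ᵥ z) := by
    intro z
    rw [hS0, Matrix.smul_mulVec, dotProduct_smul, Matrix.add_mulVec,
      dotProduct_add]
    have h2 : z ⬝ᵥ (Mᵀ *ᵥ z) = z ⬝ᵥ (M *ᵥ z) := by
      rw [dot_shift, Matrix.transpose_transpose, dotProduct_comm]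
    rw [h2, smul_eq_mul]; ring
  have hMlow : ∀ z, s * (z ⬝ᵥ z) ≤ z ⬝ᵥ (M *ᵥ z) := by
    intro z
    have hq := quad_le_opnorm (U - V) z
    have e3 : z ⬝ᵥ (M *ᵥ z) = (U *ᵥ z) ⬝ᵥ (V *ᵥ z) := by
      rw [hM, ← Matrix.mulVec_mulVec, dot_shift, Matrix.transpose_transpose]
    have hUVz : ((U - V) *ᵥ z) ⬝ᵥ ((U - V) *ᵥ z)
        = 2 * (z ⬝ᵥ z) - 2 * (z ⬝ᵥ (M *ᵥ z)) := by
      rw [Matrix.sub_mulVec, sub_dotProduct, dotProduct_sub,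
        dotProduct_sub]
      have e1 : (U *ᵥ z) ⬝ᵥ (U *ᵥ z) = z ⬝ᵥ z := iso_dot hU z z
      have e2 : (V *ᵥ z) ⬝ᵥ (V *ᵥ z) = z ⬝ᵥ z := iso_dot hV z z
      have e4 : (V *ᵥ z) ⬝ᵥ (U *ᵥ z) = (U *ᵥ z) ⬝ᵥ (V *ᵥ z) := dotProduct_comm _ _
      rw [e1, e2, e4, ← e3]; ring
    have hn2 : ‖U - V‖ ^ 2 ≤ δ' ^ 2 := by
      rw [hδ']
    have hq2 : ((U - V) *ᵥ z) ⬝ᵥ ((U - V) *ᵥ z) ≤ δ' ^ 2 * (z ⬝ᵥ z) :=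
      le_trans hq (mul_le_mul_of_nonneg_right hn2 (dot_self_nonneg z))
    rw [hUVz] at hq2
    rw [hsdef]
    linarith only [hq2]
  have hd_lb : ∀ i, s ≤ d i := by
    intro i
    have hv1 : (⇑(hS.eigenvectorBasis i) : Fin r → ℝ) ⬝ᵥ ⇑(hS.eigenvectorBasis i) = 1 := by
      have hnorm := hS.eigenvectorBasis.orthonormal.1 i
      have h2 := euclid_norm_sq (hS.eigenvectorBasis i)
      rw [hnorm] at h2
      simpa using h2.symm
    have hmv : S *ᵥ ⇑(hS.eigenvectorBasis i) = d i • ⇑(hS.eigenvectorBasis i) :=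
      hS.mulVec_eigenvectorBasis i
    have h1 : (⇑(hS.eigenvectorBasis i) : Fin r → ℝ) ⬝ᵥ (S *ᵥ ⇑(hS.eigenvectorBasis i)) = d i := by
      rw [hmv, dotProduct_smul, hv1, smul_eq_mul, mul_one]
    have h2 := hMlow ⇑(hS.eigenvectorBasis i)
    rw [← hSMq, h1, hv1, mul_one] at h2
    exact h2
  -- the path pieces
  set q : ℝ → Fin r → ℝ := fun t i => t ^ 2 + (1 - t) ^ 2 + 2 * t * (1 - t) * (d i) with hqdef
  have hqpos : ∀ t, 0 ≤ t → t ≤ 1 → ∀ i, 0 < q t i := fun t ht0 ht1 i =>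
    alpha_pos (d i) t (lt_of_lt_of_le hs1 (hd_lb i)) ht0 ht1
  set Rm : ℝ → Matrix (Fin r) (Fin r) ℝ :=
    fun t => Omat * diagonal (fun i => Real.sqrt (q t i)) * Omatᵀ with hRdef
  set gm : ℝ → Matrix (Fin r) (Fin r) ℝ :=
    fun t => Omat * diagonal (fun i => (Real.sqrt (q t i))⁻¹) * Omatᵀ with hgdef
  set Wm : ℝ → Matrix (Fin n) (Fin r) ℝ := fun t => (1 - t) • V + t • U with hWdef
  set Xm : ℝ → Matrix (Fin n) (Fin r) ℝ := fun t => Wm t * gm t with hXdef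
  have hgR : ∀ t, 0 ≤ t → t ≤ 1 → Rm t * gm t = 1 := by
    intro t ht0 ht1
    rw [hRdef, hgdef, conj_mul hO1]
    have h1 : (fun i => Real.sqrt (q t i) * (Real.sqrt (q t i))⁻¹) = fun _ => (1:ℝ) :=
      funext fun i => mul_inv_cancel₀ (ne_of_gt (Real.sqrt_pos.mpr (hqpos t ht0 ht1 i)))
    rw [h1, Matrix.diagonal_one, Matrix.mul_one, hO2]
  have hgT : ∀ t, (gm t)ᵀ = gm t := by
    intro t
    rw [hgdef]
    simp only [Matrix.transpose_mul, Matrix.diagonal_transpose, Matrix.transpose_transpose,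
      Matrix.mul_assoc]
  have hRT : ∀ t, (Rm t)ᵀ = Rm t := by
    intro t
    rw [hRdef]
    simp only [Matrix.transpose_mul, Matrix.diagonal_transpose, Matrix.transpose_transpose,
      Matrix.mul_assoc]
  have hOdq : ∀ t, Omat * diagonal (q t) * Omatᵀ
      = (t ^ 2 + (1 - t) ^ 2) • (1 : Matrix (Fin r) (Fin r) ℝ) + (2 * t * (1 - t)) • S := by
    intro t
    have hdiag : diagonal (q t) = (t ^ 2 + (1 - t) ^ 2) • (1 : Matrix (Fin r) (Fin r) ℝ)
        + (2 * t * (1 - t)) • diagonal d := by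
      rw [← Matrix.diagonal_one, ← Matrix.diagonal_smul, ← Matrix.diagonal_smul,
        Matrix.diagonal_add]
      congr 1
      funext i
      simp only [Pi.smul_apply, smul_eq_mul, hqdef, mul_one]
    rw [hdiag, Matrix.mul_add, Matrix.add_mul, Matrix.mul_smul, Matrix.smul_mul,
      Matrix.mul_smul, Matrix.smul_mul, Matrix.mul_one, hO2, ← hSpec]
  have hWW : ∀ t, (Wm t)ᵀ * Wm t = Omat * diagonal (q t) * Omatᵀ := by
    intro t
    rw [hOdq]
    rw [hWdef]
    simp only [Matrix.transpose_add, Matrix.transpose_smul, Matrix.add_mul, Matrix.mul_add,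
      Matrix.smul_mul, Matrix.mul_smul, hU, hV, smul_smul]
    rw [← hMT, ← hM, hS0]
    module
  have hRR : ∀ t, 0 ≤ t → t ≤ 1 → Rm t * Rm t = Omat * diagonal (q t) * Omatᵀ := by
    intro t ht0 ht1
    rw [hRdef, conj_mul hO1]
    have hfun : (fun i => Real.sqrt (q t i) * Real.sqrt (q t i)) = q t :=
      funext fun i => Real.mul_self_sqrt (hqpos t ht0 ht1 i).le
    rw [hfun]
  have hXX : ∀ t, 0 ≤ t → t ≤ 1 → (Xm t)ᵀ * Xm t = 1 := by
    intro t ht0 ht1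
    rw [hXdef]
    show (Wm t * gm t)ᵀ * (Wm t * gm t) = 1
    rw [Matrix.transpose_mul, hgT]
    have h1 : gm t * (Wm t)ᵀ * (Wm t * gm t) = gm t * ((Wm t)ᵀ * Wm t) * gm t := by
      simp only [Matrix.mul_assoc]
    rw [h1, hWW, hgdef, conj_mul hO1, conj_mul hO1]
    have h2 : (fun i => (Real.sqrt (q t i))⁻¹ * q t i * ((Real.sqrt (q t i))⁻¹))
        = fun _ => (1:ℝ) := by
      funext i
      have hpos := hqpos t ht0 ht1 i
      have hsq : Real.sqrt (q t i) * Real.sqrt (q t i) = q t i := Real.mul_self_sqrt hpos.le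
      have hne : Real.sqrt (q t i) ≠ 0 := ne_of_gt (Real.sqrt_pos.mpr hpos)
      field_simp
      rw [sq, hsq]
    have h3 : (fun i => (Real.sqrt (q t i))⁻¹ * q t i * ((Real.sqrt (q t i))⁻¹))
        = (fun i => ((fun j => (Real.sqrt (q t j))⁻¹ * q t j) i * ((Real.sqrt (q t i))⁻¹))) := rfl
    rw [show (fun i => (fun j => (Real.sqrt (q t j))⁻¹ * q t j) i * (Real.sqrt (q t i))⁻¹)
        = fun _ => (1:ℝ) from h3 ▸ h2, Matrix.diagonal_one, Matrix.mul_one, hO2]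
  have hUX : ∀ t, Uᵀ * Xm t
      = (t • (1 : Matrix (Fin r) (Fin r) ℝ) + (1 - t) • M) * gm t := by
    intro t
    rw [hXdef]
    show Uᵀ * (Wm t * gm t) = _
    rw [← Matrix.mul_assoc, hWdef]
    show Uᵀ * ((1 - t) • V + t • U) * gm t = _
    rw [Matrix.mul_add, Matrix.mul_smul, Matrix.mul_smul, hU, ← hM, add_comm]
  -- KEY quadratic bound
  have hkey : ∀ t, 0 ≤ t → t ≤ 1 → ∀ x : Fin r → ℝ,
      s * (x ⬝ᵥ x) ≤ x ⬝ᵥ ((Uᵀ * Xm t) *ᵥ x) := by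
    intro t ht0 ht1 x
    rw [hUX t]
    by_cases hx0 : x = 0
    · simp [hx0]
    obtain ⟨z, hz⟩ : ∃ z, z = gm t *ᵥ x := ⟨_, rfl⟩
    have hxz : x = Rm t *ᵥ z := by
      rw [hz, Matrix.mulVec_mulVec, hgR t ht0 ht1, Matrix.one_mulVec]
    have hz0 : z ≠ 0 := by
      intro h; apply hx0; rw [hxz, h, Matrix.mulVec_zero]
    have hzz : 0 < z ⬝ᵥ z := lt_of_le_of_ne (dot_self_nonneg z)
      (fun h => hz0 (dotProduct_self_eq_zero.mp h.symm))
    obtain ⟨ζ, hζ⟩ : ∃ a, a = Real.sqrt (z ⬝ᵥ z) := ⟨_, rfl⟩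
    have hζ0 : 0 < ζ := hζ ▸ Real.sqrt_pos.mpr hzz
    have hζ2 : ζ * ζ = z ⬝ᵥ z := by rw [hζ]; exact Real.mul_self_sqrt hzz.le
    obtain ⟨u, hu⟩ : ∃ u, u = ζ⁻¹ • z := ⟨_, rfl⟩
    have hzu : z = ζ • u := by
      rw [hu, smul_smul, mul_inv_cancel₀ (ne_of_gt hζ0), one_smul]
    have hu1 : u ⬝ᵥ u = 1 := by
      rw [hu, smul_dotProduct, dotProduct_smul, smul_eq_mul, smul_eq_mul, ← hζ2]
      field_simp
    obtain ⟨y, hy⟩ : ∃ y, y = Rm t *ᵥ u := ⟨_, rfl⟩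
    obtain ⟨mv, hmvdef⟩ : ∃ w, w = M *ᵥ u := ⟨_, rfl⟩
    obtain ⟨σ, hσv⟩ : ∃ a, a = u ⬝ᵥ mv := ⟨_, rfl⟩
    obtain ⟨ρ, hρv⟩ : ∃ a, a = u ⬝ᵥ y := ⟨_, rfl⟩
    obtain ⟨Bq, hBqv⟩ : ∃ a, a = y ⬝ᵥ y := ⟨_, rfl⟩
    obtain ⟨mm, hmmv⟩ : ∃ a, a = mv ⬝ᵥ mv := ⟨_, rfl⟩
    obtain ⟨P, hPv⟩ : ∃ a, a = (y - ρ • u) ⬝ᵥ (mv - σ • u) := ⟨_, rfl⟩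
    have hyu : y ⬝ᵥ u = ρ := by rw [dotProduct_comm, ← hρv]
    -- the scalar facts
    have hσs : s ≤ σ := by
      have h := hMlow u
      rw [hu1, mul_one, ← hmvdef, ← hσv] at h
      exact h
    have hmm1 : mm ≤ 1 := by
      have h := hMC u
      rw [hu1, ← hmvdef, ← hmmv] at h
      exact h
    have hσmm : σ ^ 2 ≤ mm := by
      have h := dot_cs u mv
      rw [hu1, one_mul, ← hσv, ← hmmv] at h
      exact h
    have hρB : ρ ^ 2 ≤ Bq := by
      have h := dot_cs u y
      rw [hu1, one_mul, ← hρv, ← hBqv] at h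
      exact h
    have hBval : Bq = t ^ 2 + (1 - t) ^ 2 + 2 * t * (1 - t) * σ := by
      have h1 : u ⬝ᵥ ((Rm t * Rm t) *ᵥ u) = y ⬝ᵥ y := by
        rw [← Matrix.mulVec_mulVec, dot_shift, hRT, ← hy]
      have h2 : u ⬝ᵥ ((Rm t * Rm t) *ᵥ u)
          = (t ^ 2 + (1 - t) ^ 2) + (2 * t * (1 - t)) * σ := by
        rw [hRR t ht0 ht1, hOdq t, Matrix.add_mulVec, Matrix.smul_mulVec,
          Matrix.smul_mulVec, Matrix.one_mulVec, dotProduct_add,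
          dotProduct_smul, dotProduct_smul, hu1, hSMq u, ← hmvdef, ← hσv,
          smul_eq_mul, smul_eq_mul, mul_one]
      rw [hBqv, ← h1, h2]
    have hρrs : Real.sqrt (t ^ 2 + (1 - t) ^ 2 + 2 * t * (1 - t) * s) ≤ ρ := by
      have hsum : ρ = ∑ i, Real.sqrt (q t i) * ((Omatᵀ *ᵥ u) i) ^ 2 := by
        rw [hρv, hy, hRdef]
        exact quad_diag Omat (fun i => Real.sqrt (q t i)) u
      have hwsum : (1:ℝ) = ∑ i, ((Omatᵀ *ᵥ u) i) ^ 2 := by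
        rw [← hu1]; exact norm_invariant hO2 u
      have hβt : (0:ℝ) ≤ 2 * t * (1 - t) := by
        have := mul_nonneg ht0 (by linarith : (0:ℝ) ≤ 1 - t)
        linarith only [this]
      have hterm : ∀ i ∈ Finset.univ (α := Fin r),
          Real.sqrt (t ^ 2 + (1 - t) ^ 2 + 2 * t * (1 - t) * s) * ((Omatᵀ *ᵥ u) i) ^ 2
          ≤ Real.sqrt (q t i) * ((Omatᵀ *ᵥ u) i) ^ 2 := by
        intro i _
        apply mul_le_mul_of_nonneg_right _ (sq_nonneg _)
        apply Real.sqrt_le_sqrt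
        have h := mul_le_mul_of_nonneg_left (hd_lb i) hβt
        have hqv : q t i = t ^ 2 + (1 - t) ^ 2 + 2 * t * (1 - t) * d i := rfl
        rw [hqv]
        linarith only [h]
      calc Real.sqrt (t ^ 2 + (1 - t) ^ 2 + 2 * t * (1 - t) * s)
          = ∑ i, Real.sqrt (t ^ 2 + (1 - t) ^ 2 + 2 * t * (1 - t) * s) * ((Omatᵀ *ᵥ u) i) ^ 2 := by
            rw [← Finset.mul_sum, ← hwsum, mul_one]
        _ ≤ ∑ i, Real.sqrt (q t i) * ((Omatᵀ *ᵥ u) i) ^ 2 := Finset.sum_le_sum hterm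
        _ = ρ := hsum.symm
    have hPcs : P ^ 2 ≤ (Bq - ρ ^ 2) * (mm - σ ^ 2) := by
      have e1 : (y - ρ • u) ⬝ᵥ (y - ρ • u) = Bq - ρ ^ 2 := by
        simp only [sub_dotProduct, dotProduct_sub, smul_dotProduct,
          dotProduct_smul, smul_eq_mul]
        rw [hyu, ← hρv, hu1, ← hBqv]
        ring
      have e2 : (mv - σ • u) ⬝ᵥ (mv - σ • u) = mm - σ ^ 2 := by
        have hmvu : mv ⬝ᵥ u = σ := by rw [dotProduct_comm, ← hσv]
        simp only [sub_dotProduct, dotProduct_sub, smul_dotProduct,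
          dotProduct_smul, smul_eq_mul]
        rw [hmvu, ← hσv, hu1, ← hmmv]
        ring
      have h := dot_cs (y - ρ • u) (mv - σ • u)
      rw [e1, e2, ← hPv] at h
      exact h
    have hcore := core_scalar s t σ ρ Bq P mm hs1 hs2 ht0 ht1 hσs hmm1 hσmm hBval hρB hρrs hPcs
    -- assemble
    have hymv : y ⬝ᵥ mv = σ * ρ + P := by
      have hmvu : u ⬝ᵥ mv = σ := hσv.symm
      rw [hPv]
      simp only [sub_dotProduct, dotProduct_sub, smul_dotProduct,
        dotProduct_smul, smul_eq_mul]
      rw [hyu, hmvu, hu1]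
      ring
    have hstep1 : ((t • (1 : Matrix (Fin r) (Fin r) ℝ) + (1 - t) • M) * gm t) *ᵥ x
        = (t • (1 : Matrix (Fin r) (Fin r) ℝ) + (1 - t) • M) *ᵥ z := by
      rw [← Matrix.mulVec_mulVec, ← hz]
    have hAz : (t • (1 : Matrix (Fin r) (Fin r) ℝ) + (1 - t) • M) *ᵥ z
        = ζ • (t • u + (1 - t) • mv) := by
      rw [hzu, Matrix.mulVec_smul]
      congr 1
      rw [Matrix.add_mulVec, Matrix.smul_mulVec, Matrix.smul_mulVec,
        Matrix.one_mulVec, hmvdef]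
    have hRHS : x ⬝ᵥ (((t • (1 : Matrix (Fin r) (Fin r) ℝ) + (1 - t) • M) * gm t) *ᵥ x)
        = ζ * ζ * (t * ρ + (1 - t) * (y ⬝ᵥ mv)) := by
      rw [hstep1, hAz, hxz, hzu, Matrix.mulVec_smul, ← hy]
      simp only [smul_dotProduct, dotProduct_smul, dotProduct_add,
        smul_eq_mul]
      rw [hyu]
      ring
    have hLHS : x ⬝ᵥ x = ζ * ζ * Bq := by
      rw [hxz, hzu, Matrix.mulVec_smul, ← hy]
      simp only [smul_dotProduct, dotProduct_smul, smul_eq_mul]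
      rw [← hBqv]
      ring
    rw [hRHS, hLHS, hymv]
    have hζζ : (0:ℝ) ≤ ζ * ζ := by positivity
    calc s * (ζ * ζ * Bq) = (ζ * ζ) * (s * Bq) := by ring
      _ ≤ (ζ * ζ) * (t * ρ + (1 - t) * (σ * ρ + P)) := mul_le_mul_of_nonneg_left hcore hζζ
      _ = ζ * ζ * (t * ρ + (1 - t) * (σ * ρ + P)) := by ring
  -- membership
  have hmem : ∀ t, 0 ≤ t → t ≤ 1 →
      Xm t ∈ {W : Matrix (Fin n) (Fin r) ℝ | Wᵀ * W = 1 ∧ ‖U - W‖ < δ} := by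
    intro t ht0 ht1
    refine ⟨hXX t ht0 ht1, ?_⟩
    have hle : ‖U - Xm t‖ ≤ δ' := by
      apply opnorm_le_of_quad _ _ hδ'0
      intro x
      have e1 : (U *ᵥ x) ⬝ᵥ (U *ᵥ x) = x ⬝ᵥ x := iso_dot hU x x
      have e2 : (Xm t *ᵥ x) ⬝ᵥ (Xm t *ᵥ x) = x ⬝ᵥ x := iso_dot (hXX t ht0 ht1) x x
      have e3 : x ⬝ᵥ ((Uᵀ * Xm t) *ᵥ x) = (U *ᵥ x) ⬝ᵥ (Xm t *ᵥ x) := by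
        rw [← Matrix.mulVec_mulVec, dot_shift, Matrix.transpose_transpose]
      have e4 : (Xm t *ᵥ x) ⬝ᵥ (U *ᵥ x) = (U *ᵥ x) ⬝ᵥ (Xm t *ᵥ x) := dotProduct_comm _ _
      have hexp : ((U - Xm t) *ᵥ x) ⬝ᵥ ((U - Xm t) *ᵥ x)
          = 2 * (x ⬝ᵥ x) - 2 * (x ⬝ᵥ ((Uᵀ * Xm t) *ᵥ x)) := by
        rw [Matrix.sub_mulVec, sub_dotProduct, dotProduct_sub,
          dotProduct_sub, e1, e2, e4, ← e3]
        ring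
      rw [hexp]
      have hk := hkey t ht0 ht1 x
      have hss : δ' ^ 2 = 2 - 2 * s := by rw [hsdef]; ring
      rw [hss]
      linarith only [hk]
    exact lt_of_le_of_lt hle hδ'lt
  -- endpoints
  have hq0 : ∀ i, q 0 i = 1 := by intro i; rw [hqdef]; norm_num
  have hq1 : ∀ i, q 1 i = 1 := by intro i; rw [hqdef]; norm_num
  have hg0 : gm 0 = 1 := by
    rw [hgdef]
    show Omat * diagonal (fun i => (Real.sqrt (q 0 i))⁻¹) * Omatᵀ = 1
    have : (fun i => (Real.sqrt (q 0 i))⁻¹) = fun _ => (1:ℝ) := by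
      funext i; rw [hq0 i, Real.sqrt_one, inv_one]
    rw [this, Matrix.diagonal_one, Matrix.mul_one, hO2]
  have hg1 : gm 1 = 1 := by
    rw [hgdef]
    show Omat * diagonal (fun i => (Real.sqrt (q 1 i))⁻¹) * Omatᵀ = 1
    have : (fun i => (Real.sqrt (q 1 i))⁻¹) = fun _ => (1:ℝ) := by
      funext i; rw [hq1 i, Real.sqrt_one, inv_one]
    rw [this, Matrix.diagonal_one, Matrix.mul_one, hO2]
  have hX0 : Xm 0 = V := by
    rw [hXdef]
    show Wm 0 * gm 0 = V
    rw [hg0, Matrix.mul_one, hWdef]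
    show (1 - (0:ℝ)) • V + (0:ℝ) • U = V
    simp
  have hX1 : Xm 1 = U := by
    rw [hXdef]
    show Wm 1 * gm 1 = U
    rw [hg1, Matrix.mul_one, hWdef]
    show (1 - (1:ℝ)) • V + (1:ℝ) • U = U
    simp
  -- continuity
  have hcont : Continuous fun t : unitInterval => Xm (t : ℝ) := by
    have hWc : Continuous fun t : unitInterval => Wm (t : ℝ) := by
      rw [hWdef]
      exact ((continuous_const.sub continuous_subtype_val).smul continuous_const).add
        ((continuous_subtype_val).smul continuous_const)
    have hgc : Continuous fun t : unitInterval => gm (t : ℝ) := by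
      rw [hgdef]
      refine (Continuous.matrix_mul (Continuous.matrix_mul continuous_const ?_) continuous_const)
      apply Continuous.matrix_diagonal
      apply continuous_pi
      intro i
      have hbase : Continuous fun t : unitInterval => q (t : ℝ) i := by
        rw [hqdef]
        fun_prop
      exact (Real.continuous_sqrt.comp hbase).inv₀
        (fun t => ne_of_gt (Real.sqrt_pos.mpr (hqpos _ t.2.1 t.2.2 i)))
    exact hWc.matrix_mul hgc
  -- assemble the path
  refine ⟨⟨⟨fun t => Xm (t : ℝ), hcont⟩, ?_, ?_⟩, ?_⟩
  · simpa using hX0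
  · simpa using hX1
  · intro t
    exact hmem (t : ℝ) t.2.1 t.2.2


end StiefelAux

/-- For `U ∈ St(r,n)` and `0 < δ < 2`, the neighbourhood
`𝒩_δ(U) = {V ∈ St(r,n) : ‖U − V‖ < δ}` (ℓ²-operator norm) is path-connected. -/
theorem stiefel_neighborhood_path_connected
    (n r : ℕ) (hr : 1 ≤ r) (hrn : r ≤ n)
    (U : Matrix (Fin n) (Fin r) ℝ) (hU : Uᵀ * U = 1)
    (δ : ℝ) (hδ0 : 0 < δ) (hδ2 : δ < 2) :
    IsPathConnected {V : Matrix (Fin n) (Fin r) ℝ | Vᵀ * V = 1 ∧ ‖U - V‖ < δ} := by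
  refine ⟨U, ⟨hU, by simpa using hδ0⟩, ?_⟩
  intro V hV
  exact (StiefelAux.joined U V hU hV.1 δ hδ2 hV.2).symm
end

section
/- Let A ∈ ℝ^{n×n}, ε > 0, 1 ≤ r < n, 1 ≤ ℓ ≤ n − r. Let Ū ∈ St(r,n) satisfy the equilibrium condition (I_n − ŪŪᵀ)·A·Ū = 0, and let Ū_⊥ ∈ St(n−r,n) satisfy ŪᵀŪ_⊥ = 0 and Ū·Ūᵀ + Ū_⊥·Ū_⊥ᵀ = I_n. Suppose u : ℝ → ℝ^{(n−r)×ℓ} is differentiable and satisfies the reduced Oja flow ε·(d/dt)u(t) = (I_{n−r} − u(t)u(t)ᵀ)·(Ū_⊥ᵀ·A·Ū_⊥)·u(t) for all t. Then the block matrix U(t) := [Ū, Ū_⊥·u(t)] ∈ ℝ^{n×(r+ℓ)} satisfies the full Oja flow ε·(d/dt)U(t) = (I_n − U(t)U(t)ᵀ)·A·U(t) for all t. -/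
open Matrix

/-- (Subspace expansion.) If `Ub ∈ St(r,n)` is an equilibrium of the Oja
flow for `A`, `Up` is an orthonormal complement, and `u` solves the reduced Oja flow for
`UpᵀAUp`, then `U(t) := [Ub, Up·u(t)]` solves the full Oja flow for `A`. -/
theorem subspace_expansion_oja_flow
    (n r l : ℕ) (hr : 1 ≤ r) (hrn : r < n) (hl : 1 ≤ l) (hln : l ≤ n - r)
    (A : Matrix (Fin n) (Fin n) ℝ) (ε : ℝ) (hε : 0 < ε)
    (Ub : Matrix (Fin n) (Fin r) ℝ) (hUbst : Ubᵀ * Ub = 1)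
    (hUbeq : (1 - Ub * Ubᵀ) * A * Ub = 0)
    (Up : Matrix (Fin n) (Fin (n - r)) ℝ) (hUpst : Upᵀ * Up = 1)
    (horth : Ubᵀ * Up = 0)
    (hcompl : Ub * Ubᵀ + Up * Upᵀ = 1)
    (u u' : ℝ → Matrix (Fin (n - r)) (Fin l) ℝ)
    (hderiv : ∀ t, ∀ i j, HasDerivAt (fun s => u s i j) (u' t i j) t)
    (hode : ∀ t, ε • u' t = (1 - u t * (u t)ᵀ) * (Upᵀ * A * Up) * u t)
    (U : ℝ → Matrix (Fin n) (Fin r ⊕ Fin l) ℝ)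
    (hU : ∀ t, U t = Matrix.fromCols Ub (Up * u t)) :
    ∃ U' : ℝ → Matrix (Fin n) (Fin r ⊕ Fin l) ℝ,
      (∀ t, ∀ i j, HasDerivAt (fun s => U s i j) (U' t i j) t) ∧
      (∀ t, ε • U' t = (1 - U t * (U t)ᵀ) * A * U t) := by
  refine ⟨fun t => Matrix.fromCols 0 (Up * u' t), ?_, ?_⟩
  · intro t i j
    have hfun : ∀ j, (fun s => U s i j) =
        (fun s => Matrix.fromCols Ub (Up * u s) i j) := by
      intro j; funext s; rw [hU s]
    cases j with
    | inl j =>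
      rw [hfun]
      simpa using hasDerivAt_const t (Ub i j)
    | inr j =>
      rw [hfun]
      simp only [fromCols_apply_inr, fromCols_apply_inl, Matrix.mul_apply]
      exact HasDerivAt.fun_sum fun k _ => (hderiv t k j).const_mul (Up i k)
  · intro t
    have horth' : Upᵀ * Ub = 0 := by
      have := congrArg Matrix.transpose horth
      simpa [Matrix.transpose_mul] using this
    have hAUb : A * Ub = Ub * (Ubᵀ * (A * Ub)) := by
      have h : A * Ub - Ub * Ubᵀ * (A * Ub) = 0 := by
        have := hUbeq
        rw [Matrix.sub_mul, Matrix.sub_mul, Matrix.one_mul, Matrix.mul_assoc,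
          Matrix.mul_assoc] at this
        simpa [Matrix.mul_assoc] using this
      exact (sub_eq_zero.mp h).trans (Matrix.mul_assoc Ub Ubᵀ (A * Ub))
    have hUpAUb : Upᵀ * (A * Ub) = 0 := by
      rw [hAUb, ← Matrix.mul_assoc, horth', Matrix.zero_mul]
    have hUpUp : Up * Upᵀ = 1 - Ub * Ubᵀ := by
      rw [← hcompl]; exact (add_sub_cancel_left _ _).symm
    have hε' : ε • u' t = (1 - u t * (u t)ᵀ) * (Upᵀ * A * Up) * u t := hode t
    show ε • Matrix.fromCols (0 : Matrix (Fin n) (Fin r) ℝ) (Up * u' t) = _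
    rw [hU t, Matrix.transpose_fromCols, Matrix.fromCols_mul_fromRows,
      Matrix.mul_fromCols]
    have hsmul : ε • Matrix.fromCols (0 : Matrix (Fin n) (Fin r) ℝ) (Up * u' t) =
        Matrix.fromCols (0 : Matrix (Fin n) (Fin r) ℝ) (ε • (Up * u' t)) := by
      ext i (j | j) <;> simp [Matrix.fromCols]
    rw [hsmul]
    have hblock1 : (1 - (Ub * Ubᵀ + Up * u t * (Up * u t)ᵀ)) * A * Ub = 0 := by
      rw [Matrix.sub_mul, Matrix.sub_mul, Matrix.one_mul, Matrix.add_mul, Matrix.add_mul]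
      have h1 : Ub * Ubᵀ * A * Ub = A * Ub := by
        conv_rhs => rw [hAUb]
        rw [Matrix.mul_assoc, Matrix.mul_assoc]
      have h2 : Up * u t * (Up * u t)ᵀ * A * Ub = 0 := by
        rw [Matrix.transpose_mul]
        calc Up * u t * ((u t)ᵀ * Upᵀ) * A * Ub
            = Up * u t * ((u t)ᵀ * (Upᵀ * (A * Ub))) := by
              simp only [Matrix.mul_assoc]
          _ = 0 := by rw [hUpAUb]; simp
      rw [h2, h1]
      simp
    have hblock2 : ε • (Up * u' t)
        = (1 - (Ub * Ubᵀ + Up * u t * (Up * u t)ᵀ)) * A * (Up * u t) := by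
      have key : ε • (Up * u' t) = Up * (ε • u' t) := (Matrix.mul_smul _ _ _).symm
      rw [key, hε']
      rw [Matrix.sub_mul, Matrix.one_mul, Matrix.sub_mul, Matrix.mul_sub,
        Matrix.sub_mul, Matrix.one_mul, Matrix.sub_mul, Matrix.add_mul, Matrix.add_mul]
      have e1 : Up * (Upᵀ * A * Up * u t) = A * (Up * u t) - Ub * Ubᵀ * A * (Up * u t) := by
        calc Up * (Upᵀ * A * Up * u t)
            = (Up * Upᵀ) * (A * (Up * u t)) := by simp only [Matrix.mul_assoc]
          _ = (1 - Ub * Ubᵀ) * (A * (Up * u t)) := by rw [hUpUp]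
          _ = A * (Up * u t) - Ub * Ubᵀ * A * (Up * u t) := by
              rw [Matrix.sub_mul, Matrix.one_mul]
              simp only [Matrix.mul_assoc]
      have e2 : Up * (u t * (u t)ᵀ * (Upᵀ * A * Up) * u t)
          = Up * u t * (Up * u t)ᵀ * A * (Up * u t) := by
        rw [Matrix.transpose_mul]
        simp only [Matrix.mul_assoc]
      rw [e1, e2]
      simp only [Matrix.mul_assoc]
      abel
    rw [hblock1, ← hblock2]
end

section
/- Let A ∈ ℝ^{n×n}, let Ū ∈ St(r,n) satisfy the equilibrium condition (I_n − ŪŪᵀ)·A·Ū = 0, and let Ū_⊥ ∈ St(n−r,n) satisfy ŪᵀŪ_⊥ = 0 and Ū·Ūᵀ + Ū_⊥·Ū_⊥ᵀ = I_n. Then the characteristic polynomial of A factors as charpoly(A) = charpoly(ŪᵀAŪ) · charpoly(Ū_⊥ᵀAŪ_⊥). -/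
open Matrix Polynomial

lemma charpoly_conj_aux {n : Type*} [DecidableEq n] [Fintype n]
    (P Q A : Matrix n n ℝ) (hPQ : P * Q = 1) (hQP : Q * P = 1) :
    (Q * A * P).charpoly = A.charpoly := by
  have hmap : ∀ M N : Matrix n n ℝ,
      (M * N).map (C : ℝ →+* ℝ[X]) = M.map C * N.map C := fun M N => by
    simpa using (RingHom.mapMatrix (C : ℝ →+* ℝ[X]) (m := n)).map_mul M N
  have hcm : charmatrix (Q * A * P) = Q.map C * charmatrix A * P.map C := by
    unfold charmatrix
    simp only [RingHom.mapMatrix_apply, Matrix.mul_sub, Matrix.sub_mul, hmap]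
    congr 1
    rw [scalar_apply, ← Matrix.smul_one_eq_diagonal, Matrix.mul_smul, Matrix.smul_mul,
      Matrix.mul_one, ← hmap, hQP, Matrix.map_one _ (map_zero C) (map_one C)]
  have hdet : (Q.map (C : ℝ →+* ℝ[X])).det * (P.map C).det = 1 := by
    rw [← det_mul, ← hmap, hQP]; simp
  rw [charpoly, hcm, det_mul, det_mul, charpoly]
  ring_nf
  rw [mul_comm ((Q.map (C : ℝ →+* ℝ[X])).det), mul_assoc, hdet, mul_one]

/-- If `Ub ∈ St(r,n)` is an equilibrium of the Oja flow for `A` and `Up`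
is an orthonormal complement of `Ub`, then the characteristic polynomial of `A` factors as
`charpoly(A) = charpoly(UbᵀAUb) · charpoly(UpᵀAUp)`. -/
theorem charpoly_factorization_at_equilibrium
    (n r : ℕ) (hr : 1 ≤ r) (hrn : r ≤ n)
    (A : Matrix (Fin n) (Fin n) ℝ)
    (Ub : Matrix (Fin n) (Fin r) ℝ) (hUbst : Ubᵀ * Ub = 1)
    (hUbeq : (1 - Ub * Ubᵀ) * A * Ub = 0)
    (Up : Matrix (Fin n) (Fin (n - r)) ℝ) (hUpst : Upᵀ * Up = 1)
    (horth : Ubᵀ * Up = 0)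
    (hcompl : Ub * Ubᵀ + Up * Upᵀ = 1) :
    A.charpoly = (Ubᵀ * A * Ub).charpoly * (Upᵀ * A * Up).charpoly := by
  -- key: Upᵀ * A * Ub = 0
  have hAUb : A * Ub = Ub * Ubᵀ * A * Ub := by
    have := hUbeq
    rw [Matrix.sub_mul, Matrix.sub_mul, Matrix.one_mul, sub_eq_zero] at this
    exact this
  have hUporth : Upᵀ * Ub = 0 := by
    have := congrArg Matrix.transpose horth
    simpa using this
  have hzero : Upᵀ * A * Ub = 0 := by
    rw [Matrix.mul_assoc, hAUb]
    simp only [← Matrix.mul_assoc]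
    rw [hUporth]
    simp
  -- build orthogonal matrix Q over sum index
  set e : Fin r ⊕ Fin (n - r) ≃ Fin n :=
    finSumFinEquiv.trans (finCongr (by omega))
  set Q : Matrix (Fin n) (Fin n) ℝ :=
    (fromCols Ub Up).submatrix (Equiv.refl (Fin n)) e.symm with hQ
  set P : Matrix (Fin n) (Fin n) ℝ :=
    (fromRows Ubᵀ Upᵀ).submatrix e.symm (Equiv.refl (Fin n)) with hP
  have hQP : Q * P = 1 := by
    rw [hQ, hP, Matrix.submatrix_mul_equiv, fromCols_mul_fromRows, hcompl]
    simp
  have hPQ : P * Q = 1 := by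
    rw [hP, hQ, Matrix.submatrix_mul_equiv, fromRows_mul_fromCols, hUbst, hUpst, horth,
      hUporth]
    rw [show fromBlocks (1 : Matrix (Fin r) (Fin r) ℝ) 0 0 (1 : Matrix (Fin (n-r)) (Fin (n-r)) ℝ)
        = 1 from Matrix.fromBlocks_one]
    exact Matrix.submatrix_one_equiv e.symm
  have hconj : (P * A * Q).charpoly = A.charpoly := charpoly_conj_aux Q P A hQP hPQ
  have hblock : P * A * Q =
      ((fromBlocks (Ubᵀ * A * Ub) (Ubᵀ * A * Up) 0 (Upᵀ * A * Up)).submatrix e.symm e.symm) := by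
    rw [hP, hQ]
    have hA : A = A.submatrix (Equiv.refl (Fin n)) (Equiv.refl (Fin n)) := rfl
    rw [hA, Matrix.submatrix_mul_equiv, Matrix.submatrix_mul_equiv]
    congr 1
    simp only [Equiv.coe_refl, Matrix.submatrix_id_id]
    rw [Matrix.mul_assoc]
    simp only [fromRows_mul, mul_fromCols, ← Matrix.mul_assoc]
    rw [fromCols_fromRows_eq_fromBlocks, hzero]
  rw [← hconj, hblock]
  have : ((fromBlocks (Ubᵀ * A * Ub) (Ubᵀ * A * Up) 0 (Upᵀ * A * Up)).submatrix e.symm e.symm)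
      = reindex e e (fromBlocks (Ubᵀ * A * Ub) (Ubᵀ * A * Up) 0 (Upᵀ * A * Up)) := rfl
  rw [this, Matrix.charpoly_reindex, Matrix.charpoly_fromBlocks_zero₂₁]
end

section
/- Let A ∈ ℝ^{n×n}. Let Ū ∈ St(r,n) satisfy (I_n − ŪŪᵀ)·A·Ū = 0 and let V̄ ∈ St(r,n) satisfy (I_n − V̄V̄ᵀ)·Aᵀ·V̄ = 0. Then the intertwining identity (V̄ᵀŪ)·(ŪᵀAŪ) = (V̄ᵀAV̄)·(V̄ᵀŪ) holds; consequently, if the r×r matrix V̄ᵀŪ is invertible, then ŪᵀAŪ = (V̄ᵀŪ)⁻¹·(V̄ᵀAV̄)·(V̄ᵀŪ), i.e., A_Ū and A_V̄ are similar and have the same eigenvalues. -/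
open Matrix

/-- If `Ub` is an equilibrium of the Oja flow for `A` and `Vb` an
equilibrium of the Oja flow for `Aᵀ` (both in `St(r,n)`), then
`(VbᵀUb)(UbᵀAUb) = (VbᵀAVb)(VbᵀUb)`; consequently, if `VbᵀUb` is invertible then
`UbᵀAUb = (VbᵀUb)⁻¹(VbᵀAVb)(VbᵀUb)`, so the two reduced matrices are similar. -/
theorem intertwining_of_left_right_equilibria
    (n r : ℕ) (hr : 1 ≤ r) (hrn : r ≤ n)
    (A : Matrix (Fin n) (Fin n) ℝ)
    (Ub : Matrix (Fin n) (Fin r) ℝ) (hUbst : Ubᵀ * Ub = 1)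
    (hUbeq : (1 - Ub * Ubᵀ) * A * Ub = 0)
    (Vb : Matrix (Fin n) (Fin r) ℝ) (hVbst : Vbᵀ * Vb = 1)
    (hVbeq : (1 - Vb * Vbᵀ) * Aᵀ * Vb = 0) :
    (Vbᵀ * Ub) * (Ubᵀ * A * Ub) = (Vbᵀ * A * Vb) * (Vbᵀ * Ub) ∧
    (IsUnit (Vbᵀ * Ub) →
      Ubᵀ * A * Ub = (Vbᵀ * Ub)⁻¹ * (Vbᵀ * A * Vb) * (Vbᵀ * Ub)) := by
  have hU : A * Ub = Ub * (Ubᵀ * (A * Ub)) := by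
    have e : (1 - Ub * Ubᵀ) * A * Ub = A * Ub - Ub * (Ubᵀ * (A * Ub)) := by
      simp [sub_mul, Matrix.sub_mul, Matrix.mul_assoc]
    rw [e] at hUbeq
    exact (sub_eq_zero.mp hUbeq)
  have hV' : Aᵀ * Vb = Vb * (Vbᵀ * (Aᵀ * Vb)) := by
    have e : (1 - Vb * Vbᵀ) * Aᵀ * Vb = Aᵀ * Vb - Vb * (Vbᵀ * (Aᵀ * Vb)) := by
      simp [sub_mul, Matrix.sub_mul, Matrix.mul_assoc]
    rw [e] at hVbeq
    exact (sub_eq_zero.mp hVbeq)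
  have hV : Vbᵀ * A = (Vbᵀ * A * Vb) * Vbᵀ := by
    have := congrArg Matrix.transpose hV'
    simp only [transpose_mul, transpose_transpose] at this
    exact this
  have key : (Vbᵀ * Ub) * (Ubᵀ * A * Ub) = (Vbᵀ * A * Vb) * (Vbᵀ * Ub) := by
    calc (Vbᵀ * Ub) * (Ubᵀ * A * Ub)
        = Vbᵀ * (Ub * (Ubᵀ * (A * Ub))) := by simp [Matrix.mul_assoc]
      _ = Vbᵀ * (A * Ub) := by rw [← hU]
      _ = (Vbᵀ * A) * Ub := by rw [Matrix.mul_assoc]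
      _ = (Vbᵀ * A * Vb) * (Vbᵀ * Ub) := by
            rw [hV, Matrix.mul_assoc (Vbᵀ * A * Vb) Vbᵀ Ub, Matrix.mul_assoc (Vbᵀ * A * Vb) Vbᵀ Vb, hVbst, mul_one]
  refine ⟨key, fun hunit => ?_⟩
  have h2 := congrArg (fun M => (Vbᵀ * Ub)⁻¹ * M) key
  rw [← Matrix.mul_assoc, Matrix.nonsing_inv_mul _ ((Matrix.isUnit_iff_isUnit_det _).mp hunit), one_mul] at h2
  rw [h2]; simp [Matrix.mul_assoc]
end
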